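/- arXiv:1905.12318 — 5 statements merged into one kernel-verified Lean document; each statement's English description precedes it below -/
import Mathlib

section
/- If $G$ is a graph that has exactly two odd cycles, and these two cycles share no edge, then the two cycles intersect either in a single vertex or not at all. -/
open SimpleGraph

/-- The chromatic edge-stability number `esχ(G)`: the minimum number of edges whose
removal from `G` results in a spanning subgraph `G'` with `χ(G') = χ(G) - 1`. -/
noncomputable def esChi {V : Type} (G : SimpleGraph V) : ℕ :=
  sInf {n : ℕ | ∃ F : Finset (Sym2 V), ↑F ⊆ G.edgeSet ∧ F.card = n ∧
    (G.deleteEdges ↑F).chromaticNumber + 1 = G.chromaticNumber}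

/-- A graph is edge-stability critical if deleting any edge decreases `esχ`. -/
def EdgeStabilityCritical {V : Type} (G : SimpleGraph V) : Prop :=
  ∀ e ∈ G.edgeSet, esChi (G.deleteEdges {e}) < esChi G

/-- `G` is `(k, ℓ)`-critical: edge-stability critical with `χ(G) = k` and `esχ(G) = ℓ`. -/
def IsKLCritical {V : Type} (G : SimpleGraph V) (k ℓ : ℕ) : Prop :=
  EdgeStabilityCritical G ∧ G.chromaticNumber = (k : ℕ∞) ∧ esChi G = ℓ

/-- `H` is an odd cycle subgraph of `G`: the subgraph of some odd-length cycle of `G`. -/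
def IsOddCycleSubgraph {V : Type} (G : SimpleGraph V) (H : G.Subgraph) : Prop :=
  ∃ (u : V) (w : G.Walk u u), w.IsCycle ∧ Odd w.length ∧ w.toSubgraph = H

/-- `H` is a path subgraph of `G`: the subgraph of some path of `G`. -/
def IsPathSubgraph {V : Type} (G : SimpleGraph V) (H : G.Subgraph) : Prop :=
  ∃ (u v : V) (w : G.Walk u v), w.IsPath ∧ w.toSubgraph = H


open SimpleGraph

namespace TwoOddCyclesAux

variable {V : Type} {G : SimpleGraph V}

/-- In a path `t : Walk y u` of length at least 2, the edge `s(u, y)` joining the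
two endpoints does not occur. -/
lemma not_end_edge_mem {y u : V} (t : G.Walk y u) (ht : t.IsPath) (hlen : 2 ≤ t.length) :
    s(u, y) ∉ t.edges := by
  induction t with
  | nil => simp at hlen
  | @cons y z u h' t' ih =>
    rw [SimpleGraph.Walk.cons_isPath_iff] at ht
    intro hmem
    rw [SimpleGraph.Walk.edges_cons, List.mem_cons] at hmem
    rcases hmem with hmem | hmem
    · rw [Sym2.eq_iff] at hmem
      rcases hmem with ⟨h1, h2⟩ | ⟨h1, h2⟩
      · exact h'.ne h2
      · subst h1
        -- t' : Walk u u is a path, hence nil, so length = 1 < 2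
        have : t'.length = 0 := by
          by_contra h0
          have hnil : ¬ t'.Nil := by
            rw [SimpleGraph.Walk.nil_iff_length_eq]; exact h0
          obtain ⟨w, hw, q, rfl⟩ := SimpleGraph.Walk.not_nil_iff.mp hnil
          exact ((SimpleGraph.Walk.cons_isPath_iff hw q).mp ht.1).2 q.end_mem_support
        simp [SimpleGraph.Walk.length_cons, this] at hlen
    · exact ht.2 (t'.fst_mem_support_of_mem_edges (by rwa [Sym2.eq_swap] at hmem))

/-- An odd closed walk contains an odd cycle using only its edges. -/
lemma exists_odd_cycle : ∀ (n : ℕ) {u : V} (w : G.Walk u u), w.length = n → Odd w.length →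
    ∃ (x : V) (c : G.Walk x x), c.IsCycle ∧ Odd c.length ∧ ∀ e ∈ c.edges, e ∈ w.edges := by
  intro n
  induction n using Nat.strong_induction_on with
  | _ n ih =>
  intro u w hn hodd
  have hpos : 0 < w.length := by
    rcases hodd with ⟨k, hk⟩; omega
  have hne : ¬ w.Nil := SimpleGraph.Walk.not_nil_iff_lt_length.mpr hpos
  obtain ⟨y, h, t, rfl⟩ := SimpleGraph.Walk.not_nil_iff.mp hne
  by_cases hnd : (SimpleGraph.Walk.cons h t).support.tail.Nodup
  · -- the walk is already a cycle
    have ht : t.IsPath := by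
      rw [SimpleGraph.Walk.isPath_def]
      simpa using hnd
    have hlen2 : 2 ≤ t.length := by
      have hto : Odd (t.length + 1) := by simpa using hodd
      have ht0 : t.length ≠ 0 := by
        intro h0
        exact h.ne (SimpleGraph.Walk.eq_of_length_eq_zero h0).symm
      rcases hto with ⟨k, hk⟩; omega
    have hcyc : (SimpleGraph.Walk.cons h t).IsCycle :=
      (SimpleGraph.Walk.cons_isCycle_iff t h).mpr ⟨ht, not_end_edge_mem t ht hlen2⟩
    exact ⟨u, _, hcyc, hodd, fun e he => he⟩
  · -- there is a repeated vertex; split off a shorter odd closed walk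
    classical
    obtain ⟨x, hxdup⟩ := List.exists_duplicate_iff_not_nodup.mpr hnd
    have hxdup' : List.Duplicate x t.support := by simpa using hxdup
    have hcount2 : 2 ≤ t.support.count x := List.duplicate_iff_two_le_count.mp hxdup'
    have hx : x ∈ t.support := hxdup'.mem
    have hspec := SimpleGraph.Walk.take_spec t hx
    set tU := t.takeUntil x hx with htU
    set dU := t.dropUntil x hx with hdU
    have hcount1 : tU.support.count x = 1 := t.count_support_takeUntil_eq_one hx
    have hsupp : t.support = tU.support ++ dU.support.tail := by
      rw [← hspec, SimpleGraph.Walk.support_append]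
    have hxind : x ∈ dU.support.tail := by
      have : t.support.count x = tU.support.count x + (dU.support.tail).count x := by
        rw [hsupp, List.count_append]
      by_contra hxn
      rw [List.count_eq_zero_of_not_mem hxn] at this
      omega
    have hdune : ¬ dU.Nil := by
      intro hnil
      rw [SimpleGraph.Walk.nil_iff_length_eq] at hnil
      have h1 : dU.support.tail.length = 0 := by
        have h2 := SimpleGraph.Walk.length_support dU
        simp [List.length_tail, h2, hnil]
      rw [List.length_eq_zero_iff] at h1
      rw [h1] at hxind; simp at hxind
    obtain ⟨z, h₂, r, hr⟩ := SimpleGraph.Walk.not_nil_iff.mp hdune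
    have hxr : x ∈ r.support := by
      rw [hr] at hxind; simpa using hxind
    have hrspec := SimpleGraph.Walk.take_spec r hxr
    set rU := r.takeUntil x hxr with hrU
    set rD := r.dropUntil x hxr with hrD
    -- the two closed walks
    have hzx : z ≠ x := h₂.ne'
    have hrUpos : 0 < rU.length := by
      rcases Nat.eq_zero_or_pos rU.length with h0 | h0
      · exact absurd (SimpleGraph.Walk.eq_of_length_eq_zero (p := rU) h0) hzx
      · exact h0
    set c : G.Walk x x := SimpleGraph.Walk.cons h₂ rU with hc
    set d : G.Walk u u := SimpleGraph.Walk.cons h (tU.append rD) with hd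
    have hlen : c.length + d.length = n := by
      have h1 : t.length = tU.length + dU.length := by
        rw [← hspec, SimpleGraph.Walk.length_append]
      have h2 : dU.length = 1 + r.length := by rw [hr]; simp [SimpleGraph.Walk.length_cons]; omega
      have h3 : r.length = rU.length + rD.length := by
        rw [← hrspec, SimpleGraph.Walk.length_append]
      have h4 : (SimpleGraph.Walk.cons h t).length = t.length + 1 := by simp
      simp only [hc, hd, SimpleGraph.Walk.length_cons, SimpleGraph.Walk.length_append]
      omega
    have hclen2 : 2 ≤ c.length := by simp only [hc, SimpleGraph.Walk.length_cons]; omega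
    have hdlen1 : 1 ≤ d.length := by simp only [hd, SimpleGraph.Walk.length_cons]; omega
    -- edge inclusions
    have hce : ∀ e ∈ c.edges, e ∈ (SimpleGraph.Walk.cons h t).edges := by
      intro e he
      rw [hc, SimpleGraph.Walk.edges_cons, List.mem_cons] at he
      rw [SimpleGraph.Walk.edges_cons, List.mem_cons]
      right
      rw [← hspec, SimpleGraph.Walk.edges_append, List.mem_append]
      right
      rw [hr, SimpleGraph.Walk.edges_cons, List.mem_cons]
      rcases he with he | he
      · left; exact he
      · right
        rw [← hrspec, SimpleGraph.Walk.edges_append, List.mem_append]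
        left; exact he
    have hde : ∀ e ∈ d.edges, e ∈ (SimpleGraph.Walk.cons h t).edges := by
      intro e he
      rw [hd, SimpleGraph.Walk.edges_cons, List.mem_cons] at he
      rw [SimpleGraph.Walk.edges_cons, List.mem_cons]
      rcases he with he | he
      · left; exact he
      · right
        rw [SimpleGraph.Walk.edges_append, List.mem_append] at he
        rw [← hspec, SimpleGraph.Walk.edges_append, List.mem_append]
        rcases he with he | he
        · left; exact he
        · right
          rw [hr, SimpleGraph.Walk.edges_cons, List.mem_cons]
          right
          rw [← hrspec, SimpleGraph.Walk.edges_append, List.mem_append]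
          right; exact he
    -- one of the two is odd
    have hodd' : Odd (c.length + d.length) := by rw [hlen, ← hn]; exact hodd
    rcases Nat.even_or_odd c.length with hce' | hco
    · -- d is odd
      have hdo : Odd d.length := by
        rcases hce' with ⟨k, hk⟩; rcases hodd' with ⟨m, hm⟩
        exact ⟨m - k, by omega⟩
      obtain ⟨x', c', hc', ho', hsub'⟩ := ih d.length (by omega) d rfl hdo
      exact ⟨x', c', hc', ho', fun e he => hde e (hsub' e he)⟩
    · obtain ⟨x', c', hc', ho', hsub'⟩ := ih c.length (by omega) c rfl hco
      exact ⟨x', c', hc', ho', fun e he => hce e (hsub' e he)⟩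

end TwoOddCyclesAux

namespace TwoOddCyclesAux

/-- Key combinatorial lemma: given two edge-disjoint odd cycles through `u` that also
share a vertex `v ≠ u`, there is an odd cycle missing an edge of each. -/
lemma key {V : Type} {G : SimpleGraph V} {u v : V} (c₁ c₂ : G.Walk u u)
    (hc₁ : c₁.IsCycle) (hc₂ : c₂.IsCycle)
    (ho₁ : Odd c₁.length) (ho₂ : Odd c₂.length)
    (hv₁ : v ∈ c₁.support) (hv₂ : v ∈ c₂.support) (hvu : v ≠ u)
    (hdisj : ∀ e, e ∈ c₁.edges → e ∈ c₂.edges → False) :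
    ∃ (x : V) (c : G.Walk x x), c.IsCycle ∧ Odd c.length ∧
      (∃ e₁ ∈ c₁.edges, e₁ ∉ c.edges) ∧ (∃ e₂ ∈ c₂.edges, e₂ ∉ c.edges) := by
  classical
  set P := c₁.takeUntil v hv₁ with hP
  set P' := c₁.dropUntil v hv₁ with hP'
  set Q := c₂.takeUntil v hv₂ with hQ
  set Q' := c₂.dropUntil v hv₂ with hQ'
  have hspec1 : P.append P' = c₁ := c₁.take_spec hv₁
  have hspec2 : Q.append Q' = c₂ := c₂.take_spec hv₂
  have hedges1 : c₁.edges = P.edges ++ P'.edges := by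
    rw [← hspec1, SimpleGraph.Walk.edges_append]
  have hedges2 : c₂.edges = Q.edges ++ Q'.edges := by
    rw [← hspec2, SimpleGraph.Walk.edges_append]
  have hnd1 : c₁.edges.Nodup := hc₁.isCircuit.isTrail.edges_nodup
  have hnd2 : c₂.edges.Nodup := hc₂.isCircuit.isTrail.edges_nodup
  rw [hedges1, List.nodup_append] at hnd1
  rw [hedges2, List.nodup_append] at hnd2
  have hdisj1 : ∀ e ∈ P.edges, e ∉ P'.edges := fun e he hm => hnd1.2.2 e he e hm rfl
  have hdisj2 : ∀ e ∈ Q.edges, e ∉ Q'.edges := fun e he hm => hnd2.2.2 e he e hm rfl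
  have hl1 : P.length + P'.length = c₁.length := by
    rw [← hspec1, SimpleGraph.Walk.length_append]
  have hl2 : Q.length + Q'.length = c₂.length := by
    rw [← hspec2, SimpleGraph.Walk.length_append]
  -- each arc is non-trivial, pick representative edges
  have hPne : P'.edges ≠ [] := by
    intro h0
    have : P'.length = 0 := by rw [← SimpleGraph.Walk.length_edges, h0]; rfl
    exact hvu (SimpleGraph.Walk.eq_of_length_eq_zero this)
  have hQne : Q.edges ≠ [] := by
    intro h0
    have : Q.length = 0 := by rw [← SimpleGraph.Walk.length_edges, h0]; rfl
    exact hvu (SimpleGraph.Walk.eq_of_length_eq_zero this).symm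
  have hQ'ne : Q'.edges ≠ [] := by
    intro h0
    have : Q'.length = 0 := by rw [← SimpleGraph.Walk.length_edges, h0]; rfl
    exact hvu (SimpleGraph.Walk.eq_of_length_eq_zero this)
  obtain ⟨e₁, he₁⟩ := List.exists_mem_of_ne_nil _ hPne
  obtain ⟨eQ, heQ⟩ := List.exists_mem_of_ne_nil _ hQne
  obtain ⟨eQ', heQ'⟩ := List.exists_mem_of_ne_nil _ hQ'ne
  have he₁c : e₁ ∈ c₁.edges := by rw [hedges1]; exact List.mem_append_right _ he₁
  have heQc : eQ ∈ c₂.edges := by rw [hedges2]; exact List.mem_append_left _ heQ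
  have heQ'c : eQ' ∈ c₂.edges := by rw [hedges2]; exact List.mem_append_right _ heQ'
  by_cases hpar : Odd (P.length + Q'.length)
  · -- use the walk P ++ Q'
    set W : G.Walk u u := P.append Q' with hW
    have hWodd : Odd W.length := by
      rw [hW, SimpleGraph.Walk.length_append]; exact hpar
    obtain ⟨x, c, hcyc, hco, hsub⟩ := exists_odd_cycle W.length W rfl hWodd
    have hsub' : ∀ e ∈ c.edges, e ∈ P.edges ∨ e ∈ Q'.edges := by
      intro e he
      have := hsub e he
      rw [hW, SimpleGraph.Walk.edges_append, List.mem_append] at this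
      exact this
    refine ⟨x, c, hcyc, hco, ⟨e₁, he₁c, ?_⟩, ⟨eQ, heQc, ?_⟩⟩
    · intro hmem
      rcases hsub' _ hmem with h | h
      · exact hdisj1 _ h he₁
      · exact hdisj e₁ he₁c (by rw [hedges2]; exact List.mem_append_right _ h)
    · intro hmem
      rcases hsub' _ hmem with h | h
      · exact hdisj eQ (by rw [hedges1]; exact List.mem_append_left _ h) heQc
      · exact hdisj2 _ heQ h
  · -- use the walk P ++ Q.reverse
    set W : G.Walk u u := P.append Q.reverse with hW
    have hWodd : Odd W.length := by
      rw [hW, SimpleGraph.Walk.length_append, SimpleGraph.Walk.length_reverse]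
      rw [Nat.odd_iff] at ho₁ ho₂ ⊢
      rw [Nat.not_odd_iff_even, Nat.even_iff] at hpar
      omega
    obtain ⟨x, c, hcyc, hco, hsub⟩ := exists_odd_cycle W.length W rfl hWodd
    have hsub' : ∀ e ∈ c.edges, e ∈ P.edges ∨ e ∈ Q.edges := by
      intro e he
      have := hsub e he
      rw [hW, SimpleGraph.Walk.edges_append, List.mem_append,
        SimpleGraph.Walk.edges_reverse, List.mem_reverse] at this
      exact this
    refine ⟨x, c, hcyc, hco, ⟨e₁, he₁c, ?_⟩, ⟨eQ', heQ'c, ?_⟩⟩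
    · intro hmem
      rcases hsub' _ hmem with h | h
      · exact hdisj1 _ h he₁
      · exact hdisj e₁ he₁c (by rw [hedges2]; exact List.mem_append_left _ h)
    · intro hmem
      rcases hsub' _ hmem with h | h
      · exact hdisj eQ' (by rw [hedges1]; exact List.mem_append_left _ h) heQ'c
      · exact hdisj2 _ h heQ'

end TwoOddCyclesAux


/-- Lemma 2.1: if `G` has exactly two odd cycles `H₁ ≠ H₂`, and they share no edge, then
they intersect either in a single vertex or not at all. -/
theorem two_odd_cycles_meet_in_at_most_one_vertex {V : Type} [Fintype V]
    (G : SimpleGraph V) (H₁ H₂ : G.Subgraph)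
    (h₁ : IsOddCycleSubgraph G H₁) (h₂ : IsOddCycleSubgraph G H₂) (hne : H₁ ≠ H₂)
    (hall : ∀ H : G.Subgraph, IsOddCycleSubgraph G H → H = H₁ ∨ H = H₂)
    (hedge : H₁.edgeSet ∩ H₂.edgeSet = ∅) :
    H₁.verts ∩ H₂.verts = ∅ ∨ ∃ v : V, H₁.verts ∩ H₂.verts = {v} := by
  classical
  by_contra hcon
  push_neg at hcon
  obtain ⟨hne0, hnots⟩ := hcon
  obtain ⟨u, hu⟩ := hne0
  obtain ⟨v, hv, hvu⟩ : ∃ v ∈ H₁.verts ∩ H₂.verts, v ≠ u := by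
    by_contra h'
    push_neg at h'
    exact hnots u (Set.eq_singleton_iff_unique_mem.mpr ⟨hu, h'⟩)
  obtain ⟨a, w₁, hw₁c, hw₁o, hw₁s⟩ := h₁
  obtain ⟨b, w₂, hw₂c, hw₂o, hw₂s⟩ := h₂
  have hu₁ : u ∈ w₁.support := by
    rw [← SimpleGraph.Walk.mem_verts_toSubgraph, hw₁s]; exact hu.1
  have hu₂ : u ∈ w₂.support := by
    rw [← SimpleGraph.Walk.mem_verts_toSubgraph, hw₂s]; exact hu.2
  set c₁ := w₁.rotate u hu₁ with hc₁def
  set c₂ := w₂.rotate u hu₂ with hc₂def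
  have hts₁ : c₁.toSubgraph = H₁ := by
    rw [hc₁def, SimpleGraph.Walk.toSubgraph_rotate]; exact hw₁s
  have hts₂ : c₂.toSubgraph = H₂ := by
    rw [hc₂def, SimpleGraph.Walk.toSubgraph_rotate]; exact hw₂s
  have hcyc₁ : c₁.IsCycle := hw₁c.rotate hu₁
  have hcyc₂ : c₂.IsCycle := hw₂c.rotate hu₂
  have hlen₁ : c₁.length = w₁.length := by
    rw [← SimpleGraph.Walk.length_edges, ← SimpleGraph.Walk.length_edges]
    exact (w₁.rotate_edges u hu₁).perm.length_eq
  have hlen₂ : c₂.length = w₂.length := by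
    rw [← SimpleGraph.Walk.length_edges, ← SimpleGraph.Walk.length_edges]
    exact (w₂.rotate_edges u hu₂).perm.length_eq
  have ho₁ : Odd c₁.length := by rw [hlen₁]; exact hw₁o
  have ho₂ : Odd c₂.length := by rw [hlen₂]; exact hw₂o
  have hv₁ : v ∈ c₁.support := by
    rw [← SimpleGraph.Walk.mem_verts_toSubgraph, hts₁]; exact hv.1
  have hv₂ : v ∈ c₂.support := by
    rw [← SimpleGraph.Walk.mem_verts_toSubgraph, hts₂]; exact hv.2
  have hE₁ : ∀ e, e ∈ c₁.edges ↔ e ∈ H₁.edgeSet := by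
    intro e
    rw [← hts₁, SimpleGraph.Walk.edgeSet_toSubgraph]; rfl
  have hE₂ : ∀ e, e ∈ c₂.edges ↔ e ∈ H₂.edgeSet := by
    intro e
    rw [← hts₂, SimpleGraph.Walk.edgeSet_toSubgraph]; rfl
  have hdisj : ∀ e, e ∈ c₁.edges → e ∈ c₂.edges → False := by
    intro e he1 he2
    have : e ∈ H₁.edgeSet ∩ H₂.edgeSet := ⟨(hE₁ e).mp he1, (hE₂ e).mp he2⟩
    rw [hedge] at this
    exact this
  obtain ⟨x, c, hcyc, hco, ⟨e₁, he₁, he₁n⟩, ⟨e₂, he₂, he₂n⟩⟩ :=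
    TwoOddCyclesAux.key c₁ c₂ hcyc₁ hcyc₂ ho₁ ho₂ hv₁ hv₂ hvu hdisj
  rcases hall c.toSubgraph ⟨x, c, hcyc, hco, rfl⟩ with h | h
  · apply he₁n
    have : e₁ ∈ c.toSubgraph.edgeSet := by rw [h, ← hE₁]; exact he₁
    rwa [SimpleGraph.Walk.edgeSet_toSubgraph] at this
  · apply he₂n
    have : e₂ ∈ c.toSubgraph.edgeSet := by rw [h, ← hE₂]; exact he₂
    rwa [SimpleGraph.Walk.edgeSet_toSubgraph] at this
end

section
/- If $G$ is a graph that has exactly three odd cycles, then the intersection (as subgraphs) of every two of its odd cycles is either empty or a path. -/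
open SimpleGraph

section Helpers

open SimpleGraph Walk

variable {V : Type} {G : SimpleGraph V}



/-- Walk whose edges lie in a subgraph has its `toSubgraph` below it (non-nil case). -/
lemma toSubgraph_le_of_edges {K : G.Subgraph} {s t : V} (p : G.Walk s t) (hnil : ¬ p.Nil)
    (he : ∀ e ∈ p.edges, e ∈ K.edgeSet) : p.toSubgraph ≤ K := by
  induction p with
  | nil => simp at hnil
  | @cons s x t h p ih =>
    have hK : K.Adj s x := he s(s, x) (by simp)
    refine sup_le (SimpleGraph.subgraphOfAdj_le_of_adj K hK) ?_
    by_cases hp : p.Nil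
    · cases p with
      | nil => simpa [SimpleGraph.singletonSubgraph_le_iff] using K.edge_vert hK.symm
      | cons h' p' => simp at hp
    · exact ih hp fun e hep => he e (by simp [hep])

/-- In a path, an edge incident to the start vertex must be the first edge. -/
lemma exists_cons_of_start_edge {u v w : V} {p : G.Walk u v} (hp : p.IsPath)
    (hw : s(u, w) ∈ p.edges) : ∃ (h : G.Adj u w) (q : G.Walk w v), p = Walk.cons h q := by
  induction p with
  | nil => simp at hw
  | @cons u x v h q ih =>
    rw [Walk.edges_cons, List.mem_cons] at hw
    rcases hw with hw | hw
    · obtain ⟨-, h2⟩ | ⟨h1, -⟩ := Sym2.eq_iff.mp hw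
      · subst h2; exact ⟨h, q, rfl⟩
      · exact absurd h1 h.ne
    · exact absurd (q.fst_mem_support_of_mem_edges hw) ((Walk.cons_isPath_iff _ _).mp hp).2

/-- The start of a path has a unique neighbor along the path. -/
lemma path_start_edge_unique {s t z z' : V} {q : G.Walk s t} (hq : q.IsPath)
    (h1 : s(s, z) ∈ q.edges) (h2 : s(s, z') ∈ q.edges) : z = z' := by
  obtain ⟨h, r, rfl⟩ := exists_cons_of_start_edge hq h1
  rw [Walk.edges_cons, List.mem_cons] at h2
  rcases h2 with h2 | h2
  · obtain ⟨-, h3⟩ | ⟨h3, h4⟩ := Sym2.eq_iff.mp h2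
    · exact h3.symm
    · exact absurd h3 h.ne
  · exact absurd (r.fst_mem_support_of_mem_edges h2) ((Walk.cons_isPath_iff _ _).mp hq).2

/-- An interior vertex of a path has two distinct neighbors along the path. -/
lemma path_interior_two_edges {s t v : V} {q : G.Walk s t} (hq : q.IsPath)
    (hv : v ∈ q.support) (hvs : v ≠ s) (hvt : v ≠ t) :
    ∃ z₁ z₂, z₁ ≠ z₂ ∧ s(v, z₁) ∈ q.edges ∧ s(v, z₂) ∈ q.edges := by
  classical
  have hspec := Walk.take_spec q hv
  set A := q.takeUntil v hv with hA
  set B := q.dropUntil v hv with hB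
  have hAnil : ¬ A.Nil := fun hn =>
    hvs (Walk.eq_of_length_eq_zero (Walk.nil_iff_length_eq.mp hn)).symm
  have hBnil : ¬ B.Nil := fun hn =>
    hvt (Walk.eq_of_length_eq_zero (Walk.nil_iff_length_eq.mp hn))
  have hArn : ¬ A.reverse.Nil := by
    rw [Walk.nil_iff_length_eq, Walk.length_reverse, ← Walk.nil_iff_length_eq]; exact hAnil
  cases hAr : A.reverse with
  | nil => rw [hAr] at hArn; simp at hArn
  | @cons _ z₁ _ h1 r1 =>
    cases hBr : B with
    | nil => rw [hBr] at hBnil; simp at hBnil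
    | @cons _ z₂ _ h2 r2 =>
      refine ⟨z₁, z₂, ?_, ?_, ?_⟩
      · -- z₁ ∈ A.support, z₂ ∈ B.support.tail, disjoint by nodup
        have hz1 : z₁ ∈ A.support := by
          have : z₁ ∈ A.reverse.support := by rw [hAr]; simp
          rwa [Walk.support_reverse, List.mem_reverse] at this
        have hz2 : z₂ ∈ B.support.tail := by rw [hBr]; simp
        have hnd := hq.support_nodup
        rw [← hspec, Walk.support_append] at hnd
        have hdisj := (List.nodup_append.mp hnd).2.2
        exact fun hzz => hdisj _ hz1 _ hz2 hzz
      · have : s(v, z₁) ∈ A.reverse.edges := by rw [hAr]; simp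
        rw [Walk.edges_reverse, List.mem_reverse] at this
        exact Walk.edges_takeUntil_subset q hv this
      · have : s(v, z₂) ∈ B.edges := by rw [hBr]; simp
        exact Walk.edges_dropUntil_subset q hv this

/-- A walk with support and edges inside a subgraph has `toSubgraph` below it. -/
lemma toSubgraph_le_of_mem {K : G.Subgraph} {s t : V} (p : G.Walk s t)
    (hs : ∀ v ∈ p.support, v ∈ K.verts) (he : ∀ e ∈ p.edges, e ∈ K.edgeSet) :
    p.toSubgraph ≤ K := by
  induction p with
  | nil => simpa [SimpleGraph.singletonSubgraph_le_iff] using hs _ (by simp)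
  | @cons s x t h p ih =>
    have hK : K.Adj s x := he s(s, x) (by simp)
    exact sup_le (SimpleGraph.subgraphOfAdj_le_of_adj K hK)
      (ih (fun v hv => hs v (by simp [hv])) (fun e hep => he e (by simp [hep])))

/-- A connected subgraph of (the subgraph of) a path is itself a path subgraph. -/
lemma connected_le_path_isPathSubgraph : ∀ {a b : V} (p : G.Walk a b), p.IsPath →
    ∀ (K : G.Subgraph), K ≤ p.toSubgraph → K.Connected →
    ∃ (s t : V) (q : G.Walk s t), q.IsPath ∧ q.toSubgraph = K := by
  intro a b p
  induction p with
  | @nil a =>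
    intro _ K hle hconn
    have hv : K.verts = {a} := by
      apply Set.eq_singleton_iff_nonempty_unique_mem.mpr
      refine ⟨hconn.nonempty, fun x hx => ?_⟩
      have := hle.1 hx
      simpa using this
    refine ⟨a, a, Walk.nil, Walk.IsPath.nil, ?_⟩
    apply le_antisymm
    · simp [SimpleGraph.singletonSubgraph_le_iff, hv]
    · constructor
      · intro x hx; rw [hv] at hx; simpa using hx
      · intro x y hxy
        have hx := K.edge_vert hxy
        have hy := K.edge_vert hxy.symm
        rw [hv] at hx hy
        simp only [Set.mem_singleton_iff] at hx hy
        subst hx; subst hy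
        exact absurd (K.adj_sub hxy) (G.loopless.irrefl _)
  | @cons a c b h p ih =>
    intro hp K hle hconn
    classical
    have hpc : p.IsPath := hp.of_cons
    have hanp : a ∉ p.support := ((Walk.cons_isPath_iff _ _).mp hp).2
    have vertsK : ∀ x ∈ K.verts, x = a ∨ x ∈ p.support := by
      intro x hx
      have := hle.1 hx
      simp only [Walk.toSubgraph, Subgraph.verts_sup, SimpleGraph.subgraphOfAdj_verts,
        Walk.verts_toSubgraph, Set.mem_union, Set.mem_insert_iff, Set.mem_singleton_iff,
        Set.mem_setOf_eq] at this
      rcases this with (rfl | rfl) | hs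
      · exact Or.inl rfl
      · exact Or.inr p.start_mem_support
      · exact Or.inr hs
    have adjK : ∀ x y, K.Adj x y → s(x, y) = s(a, c) ∨ p.toSubgraph.Adj x y := by
      intro x y hxy
      have := hle.2 hxy
      simp only [Walk.toSubgraph, Subgraph.sup_adj, SimpleGraph.subgraphOfAdj_adj] at this
      rcases this with h' | h'
      · exact Or.inl h'.symm
      · exact Or.inr h'
    have uniq : ∀ z, K.Adj a z → z = c := by
      intro z hz
      rcases adjK _ _ hz with h' | h'
      · obtain ⟨-, h2⟩ | ⟨h1, h2⟩ := Sym2.eq_iff.mp h'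
        · exact h2
        · exact h2.trans h1
      · exact absurd ((p.mem_verts_toSubgraph).mp (h'.fst_mem)) hanp
    by_cases haK : a ∈ K.verts
    case neg =>
      refine ih hpc K ?_ hconn
      constructor
      · intro x hx
        rcases vertsK x hx with rfl | hs
        · exact absurd hx haK
        · rwa [Walk.mem_verts_toSubgraph]
      · intro x y hxy
        rcases adjK _ _ hxy with h' | h'
        · exfalso
          obtain ⟨h1, -⟩ | ⟨-, h2⟩ := Sym2.eq_iff.mp h'
          · exact haK (h1 ▸ K.edge_vert hxy)
          · exact haK (h2 ▸ K.edge_vert hxy.symm)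
        · exact h'
    case pos =>
      by_cases hsing : ∀ x ∈ K.verts, x = a
      · refine ⟨a, a, Walk.nil, Walk.IsPath.nil, ?_⟩
        apply le_antisymm
        · simpa [SimpleGraph.singletonSubgraph_le_iff] using haK
        · constructor
          · intro x hx
            rw [hsing x hx]; simp
          · intro x y hxy
            have hx := hsing x (K.edge_vert hxy)
            have hy := hsing y (K.edge_vert hxy.symm)
            subst hx; subst hy
            exact absurd (K.adj_sub hxy) (G.loopless.irrefl _)
      · push_neg at hsing
        obtain ⟨d, hdK, hda⟩ := hsing
        rw [Subgraph.connected_iff_forall_exists_walk_subgraph] at hconn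
        -- K.Adj a c
        have hKac : K.Adj a c := by
          obtain ⟨W, hW⟩ := hconn.2 haK hdK
          cases hWc : W with
          | nil => exact absurd rfl hda
          | @cons _ z _ h1 r =>
            have hez : s(a, z) ∈ W.edges := by rw [hWc]; simp
            have hadjW : W.toSubgraph.Adj a z :=
              Subgraph.mem_edgeSet.mp ((Walk.mem_edges_toSubgraph W).mpr hez)
            have hzK : K.Adj a z := hW.2 hadjW
            have hzc : z = c := uniq z hzK
            rw [← hzc]; exact hzK
        have hcK : c ∈ K.verts := K.edge_vert hKac.symm
        set K' := K ⊓ p.toSubgraph with hK'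
        have hK'v : ∀ x, x ∈ K'.verts ↔ x ∈ K.verts ∧ x ≠ a := by
          intro x
          rw [hK', Subgraph.verts_inf]
          constructor
          · rintro ⟨h1, h2⟩
            refine ⟨h1, fun hxa => ?_⟩
            rw [Walk.mem_verts_toSubgraph] at h2
            exact hanp (hxa ▸ h2)
          · rintro ⟨h1, h2⟩
            refine ⟨h1, ?_⟩
            rw [Walk.mem_verts_toSubgraph]
            rcases vertsK x h1 with rfl | hs
            · exact absurd rfl h2
            · exact hs
        have hK'adj : ∀ x y, K.Adj x y → x ≠ a → y ≠ a → K'.Adj x y := by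
          intro x y hxy hxa hya
          refine ⟨hxy, ?_⟩
          rcases adjK _ _ hxy with h' | h'
          · exfalso
            obtain ⟨h1, -⟩ | ⟨-, h2⟩ := Sym2.eq_iff.mp h'
            · exact hxa h1
            · exact hya h2
          · exact h'
        have hK'conn : K'.Connected := by
          rw [Subgraph.connected_iff_forall_exists_walk_subgraph]
          constructor
          · exact ⟨c, (hK'v c).mpr ⟨hcK, h.ne'⟩⟩
          · intro x y hx hy
            obtain ⟨hxK, hxa⟩ := (hK'v x).mp hx
            obtain ⟨hyK, hya⟩ := (hK'v y).mp hy
            obtain ⟨W, hW⟩ := hconn.2 hxK hyK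
            set WP : G.Walk x y := ↑W.toPath with hWP
            have hWPs : ∀ v ∈ WP.support, v ∈ K.verts := by
              intro v hv
              rw [hWP] at hv
              exact hW.1 ((Walk.mem_verts_toSubgraph W).mpr (W.support_toPath_subset hv))
            have hWPe : ∀ e ∈ WP.edges, e ∈ K.edgeSet := by
              intro e he
              rw [hWP] at he
              exact Subgraph.edgeSet_mono hW
                ((Walk.mem_edges_toSubgraph W).mpr (W.edges_toPath_subset he))
            have haWP : a ∉ WP.support := by
              intro haW
              obtain ⟨z₁, z₂, hzz, hz1, hz2⟩ :=
                path_interior_two_edges (q := WP) (hWP ▸ W.toPath.isPath) haW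
                  (Ne.symm hxa) (Ne.symm hya)
              have e1 : K.Adj a z₁ := Subgraph.mem_edgeSet.mp (hWPe _ hz1)
              have e2 : K.Adj a z₂ := Subgraph.mem_edgeSet.mp (hWPe _ hz2)
              exact hzz ((uniq _ e1).trans (uniq _ e2).symm)
            refine ⟨WP, ?_⟩
            apply toSubgraph_le_of_mem
            · intro v hv
              exact (hK'v v).mpr ⟨hWPs v hv, fun hva => haWP (hva ▸ hv)⟩
            · intro e he
              have heK : e ∈ K.edgeSet := hWPe e he
              rw [hK', Subgraph.edgeSet_inf]
              refine ⟨heK, ?_⟩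
              induction e using Sym2.ind with
              | _ x' y' =>
                have hadj : K.Adj x' y' := heK
                have hx' : x' ∈ WP.support := WP.fst_mem_support_of_mem_edges he
                have hy' : y' ∈ WP.support := WP.snd_mem_support_of_mem_edges he
                rw [Subgraph.mem_edgeSet]
                exact (hK'adj x' y' hadj (fun h' => haWP (h' ▸ hx'))
                  (fun h' => haWP (h' ▸ hy'))).2
        obtain ⟨s, t, q, hq, hqK⟩ := ih hpc K' inf_le_right hK'conn
        -- c must be an endpoint of q
        have hcq : c ∈ q.support := by
          rw [← Walk.mem_verts_toSubgraph, hqK]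
          exact (hK'v c).mpr ⟨hcK, h.ne'⟩
        have hcend : c = s ∨ c = t := by
          by_contra hcon
          push_neg at hcon
          obtain ⟨z₁, z₂, hzz, hz1, hz2⟩ :=
            path_interior_two_edges hq hcq hcon.1 hcon.2
          have f : ∀ z, s(c, z) ∈ q.edges → s(c, z) ∈ p.edges := by
            intro z hz
            have : s(c, z) ∈ K'.edgeSet := by
              rw [← hqK]; exact (Walk.mem_edges_toSubgraph q).mpr hz
            rw [hK', Subgraph.edgeSet_inf] at this
            exact (Walk.mem_edges_toSubgraph p).mp this.2
          exact hzz (path_start_edge_unique hpc (f _ hz1) (f _ hz2))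
        -- reduce to the case c = s
        obtain ⟨s', t', q', hq', hqK', hcs'⟩ :
            ∃ (s' t' : V) (q' : G.Walk s' t'), q'.IsPath ∧ q'.toSubgraph = K' ∧ c = s' := by
          rcases hcend with rfl | rfl
          · exact ⟨c, t, q, hq, hqK, rfl⟩
          · exact ⟨c, s, q.reverse, hq.reverse, by rwa [Walk.toSubgraph_reverse], rfl⟩
        subst hcs'
        have haq' : a ∉ q'.support := by
          intro ha'
          have : a ∈ K'.verts := by rw [← hqK', Walk.mem_verts_toSubgraph]; exact ha'
          exact ((hK'v a).mp this).2 rfl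
        refine ⟨a, t', Walk.cons h q', hq'.cons haq', ?_⟩
        have : (Walk.cons h q').toSubgraph = G.subgraphOfAdj h ⊔ K' := by
          rw [← hqK']; rfl
        rw [this]
        apply le_antisymm
        · exact sup_le (SimpleGraph.subgraphOfAdj_le_of_adj K hKac) inf_le_left
        · constructor
          · intro x hx
            by_cases hxa : x = a
            · subst hxa; simp
            · right; exact (hK'v x).mpr ⟨hx, hxa⟩
          · intro x y hxy
            by_cases hxya : x = a ∨ y = a
            · left
              rw [SimpleGraph.subgraphOfAdj_adj]
              rcases hxya with rfl | rfl
              · rw [uniq y hxy]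
              · rw [uniq x hxy.symm]
                exact Sym2.eq_swap
            · push_neg at hxya
              exact Or.inr (hK'adj x y hxy hxya.1 hxya.2)



/-- A closed walk of odd length whose interior support has no duplicates is a cycle. -/
lemma isCycle_of_odd_tail_nodup {x : V} {w : G.Walk x x} (hodd : Odd w.length)
    (hnd : w.support.tail.Nodup) : w.IsCycle := by
  cases w with
  | nil => simp at hodd
  | @cons x y _ h q =>
    rw [Walk.support_cons, List.tail_cons] at hnd
    have hq : q.IsPath := Walk.IsPath.mk' hnd
    rw [Walk.cons_isCycle_iff]
    refine ⟨hq, fun he => ?_⟩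
    have he' : s(x, y) ∈ q.reverse.edges := by simpa using he
    obtain ⟨h', r, hr⟩ := exists_cons_of_start_edge hq.reverse he'
    have hy : r.IsPath := by
      have := hq.reverse; rw [hr] at this; exact this.of_cons
    have : r = Walk.nil := Walk.isPath_iff_eq_nil.mp hy
    subst this
    have : q.length = 1 := by
      have := congrArg Walk.length hr
      simpa using this
    rw [Walk.length_cons, this] at hodd
    simp [Nat.odd_iff] at hodd

/-- Every odd closed walk contains an odd cycle with edges among the walk's edges. -/
lemma exists_odd_cycle_of_odd_closed_aux : ∀ (n : ℕ) {x : V} (w : G.Walk x x),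
    w.length = n → Odd n →
    ∃ (y : V) (c : G.Walk y y), c.IsCycle ∧ Odd c.length ∧ ∀ e ∈ c.edges, e ∈ w.edges := by
  intro n
  induction n using Nat.strong_induction_on with
  | _ n ih =>
    intro x w hlen hodd
    classical
    by_cases hnd : w.support.tail.Nodup
    · exact ⟨x, w, isCycle_of_odd_tail_nodup (hlen ▸ hodd) hnd, hlen ▸ hodd, fun e he => he⟩
    · obtain ⟨v, hv⟩ := List.exists_duplicate_iff_not_nodup.mpr hnd
      have hv2 : 2 ≤ w.support.tail.count v := List.duplicate_iff_two_le_count.mp hv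
      have hvs : v ∈ w.support := by
        rw [Walk.support_eq_cons]
        exact List.mem_cons_of_mem _ hv.mem
      have hrot : (w.rotate v hvs).support.tail ~r w.support.tail := Walk.support_rotate w v hvs
      have hlen' : (w.rotate v hvs).length = n := by
        rw [Walk.rotate, Walk.length_append, ← hlen]
        conv_rhs => rw [← Walk.take_spec w hvs, Walk.length_append]
        omega
      have hv2' : 2 ≤ (w.rotate v hvs).support.tail.count v := by
        rwa [hrot.perm.count_eq]
      have hesub : ∀ e ∈ (w.rotate v hvs).edges, e ∈ w.edges := fun e he =>
        (Walk.rotate_edges w v hvs).mem_iff.mp he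
      cases hw2 : w.rotate v hvs with
      | nil => rw [hw2] at hlen'; rw [← hlen'] at hodd; simp [Nat.odd_iff] at hodd
      | @cons v z _ h q =>
        rw [hw2] at hv2' hesub hlen'
        rw [Walk.support_cons, List.tail_cons] at hv2'
        have hvq : v ∈ q.support := List.count_pos_iff.mp (by omega)
        set P := q.takeUntil v hvq with hP
        set D := q.dropUntil v hvq with hD
        have hspec : P.append D = q := Walk.take_spec q hvq
        have hcnt : P.support.count v = 1 := Walk.count_support_takeUntil_eq_one q hvq
        have hqsupp : q.support = P.support ++ D.support.tail := by
          rw [← hspec, Walk.support_append]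
        have hDn : 1 ≤ D.support.tail.count v := by
          rw [hqsupp, List.count_append, hcnt] at hv2'; omega
        have hDlen : 1 ≤ D.length := by
          have h1 := List.count_le_length (a := v) (l := D.support.tail)
          have h2 : D.support.length = D.length + 1 := D.length_support
          have h3 : D.support.tail.length = D.length := by
            rw [List.length_tail, h2]; omega
          omega
        have hql : P.length + D.length = q.length := by
          rw [← hspec, Walk.length_append]
        have hlensum : (Walk.cons h P).length + D.length = n := by
          rw [Walk.length_cons, ← hlen']; rw [Walk.length_cons]; omega
        have hPe : ∀ e ∈ (Walk.cons h P).edges, e ∈ w.edges := by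
          intro e he
          rw [Walk.edges_cons, List.mem_cons] at he
          refine hesub e ?_
          rw [Walk.edges_cons, List.mem_cons]
          rcases he with he | he
          · exact Or.inl he
          · exact Or.inr (Walk.edges_takeUntil_subset q hvq he)
        have hDe : ∀ e ∈ D.edges, e ∈ w.edges := fun e he =>
          hesub e (by rw [Walk.edges_cons, List.mem_cons];
                      exact Or.inr (Walk.edges_dropUntil_subset q hvq he))
        have hcons1 : 1 ≤ (Walk.cons h P).length := by rw [Walk.length_cons]; omega
        have hmod : ((Walk.cons h P).length + D.length) % 2 = 1 := by
          rw [hlensum]; exact Nat.odd_iff.mp hodd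
        rcases Nat.even_or_odd (Walk.cons h P).length with hpar | hpar
        · have hparD : Odd D.length := by
            rw [Nat.even_iff] at hpar; rw [Nat.odd_iff]; omega
          obtain ⟨y, c, hc1, hc2, hc3⟩ := ih D.length (by omega) D rfl hparD
          exact ⟨y, c, hc1, hc2, fun e he => hDe e (hc3 e he)⟩
        · obtain ⟨y, c, hc1, hc2, hc3⟩ := ih (Walk.cons h P).length (by omega) (Walk.cons h P) rfl hpar
          exact ⟨y, c, hc1, hc2, fun e he => hPe e (hc3 e he)⟩

/-- Decompose a cycle at an edge: rotate so that the given edge comes first. -/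
lemma cycle_edge_decomp {x : V} (w : G.Walk x x) (hw : w.IsCycle) {e : Sym2 V}
    (he : e ∈ w.edges) :
    ∃ (u z : V) (h : G.Adj u z) (q : G.Walk z u), (Walk.cons h q).IsCycle ∧
      (Walk.cons h q).toSubgraph = w.toSubgraph ∧ s(u, z) = e := by
  classical
  obtain ⟨d, hd, rfl⟩ := List.mem_map.mp he
  have hfst : d.fst ∈ w.support := w.dart_fst_mem_support_of_mem_darts hd
  have hcyc : (w.rotate d.fst hfst).IsCycle := hw.rotate hfst
  have hsub : (w.rotate d.fst hfst).toSubgraph = w.toSubgraph := w.toSubgraph_rotate hfst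
  have hd' : d ∈ (w.rotate d.fst hfst).darts := (w.rotate_darts _ hfst).mem_iff.mpr hd
  cases hw2 : w.rotate d.fst hfst with
  | nil => rw [hw2] at hcyc; exact absurd hcyc (Walk.IsCycle.not_of_nil)
  | @cons _ z _ h q =>
    rw [hw2] at hcyc hsub hd'
    rw [Walk.darts_cons, List.mem_cons] at hd'
    rcases hd' with hd' | hd'
    · exact ⟨d.fst, z, h, q, hcyc, hsub, by rw [hd']; rfl⟩
    · exfalso
      have h1 : d.fst ∈ q.darts.map (·.fst) := List.mem_map_of_mem hd'
      rw [Walk.map_fst_darts] at h1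
      have h2 : q.support.getLast (q.support_ne_nil) = d.fst := q.getLast_support
      have h3 : q.support.Nodup := by
        have := hcyc.2
        rwa [Walk.support_cons, List.tail_cons] at this
      have h4 := List.dropLast_append_getLast (q.support_ne_nil)
      rw [← h4] at h3
      rw [List.nodup_append] at h3
      exact h3.2.2 _ h1 _ (by rw [h2]; exact List.mem_singleton_self _) rfl

/-- If `K` sits inside a cycle's subgraph and misses an edge of the cycle, then `K` sits
inside the subgraph of a path. -/
lemma le_path_of_missing_edge {x : V} {w : G.Walk x x} (hw : w.IsCycle) {K : G.Subgraph}
    (hK : K ≤ w.toSubgraph) {e : Sym2 V} (he : e ∈ w.edges) (heK : e ∉ K.edgeSet) :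
    ∃ (s t : V) (q : G.Walk s t), q.IsPath ∧ K ≤ q.toSubgraph := by
  obtain ⟨u, z, h, q, hcyc, hsub, hedge⟩ := cycle_edge_decomp w hw he
  have hq : q.IsPath := ((Walk.cons_isCycle_iff _ _).mp hcyc).1
  refine ⟨z, u, q, hq, ?_⟩
  rw [← hsub] at hK
  constructor
  · intro v hv
    have := hK.1 hv
    simp only [Walk.toSubgraph, Subgraph.verts_sup, SimpleGraph.subgraphOfAdj_verts,
      Walk.verts_toSubgraph, Set.mem_union, Set.mem_insert_iff, Set.mem_singleton_iff,
      Set.mem_setOf_eq] at this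
    rw [Walk.verts_toSubgraph]
    rcases this with (rfl | rfl) | hs
    · exact q.end_mem_support
    · exact q.start_mem_support
    · exact hs
  · intro v v' hvv
    have := hK.2 hvv
    simp only [Walk.toSubgraph, Subgraph.sup_adj, SimpleGraph.subgraphOfAdj_adj] at this
    rcases this with h' | h'
    · exfalso
      apply heK
      rw [← hedge, h']
      exact Subgraph.mem_edgeSet.mpr hvv
    · exact h'

/-- If `K ≤ w.toSubgraph` and `K` contains all edges of `w`, then `K = w.toSubgraph`. -/
lemma eq_toSubgraph_of_edges_subset {x : V} {w : G.Walk x x} (hnil : ¬ w.Nil) {K : G.Subgraph}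
    (hK : K ≤ w.toSubgraph) (he : ∀ e ∈ w.edges, e ∈ K.edgeSet) : K = w.toSubgraph :=
  le_antisymm hK (toSubgraph_le_of_edges w hnil he)

lemma path_toSubgraph_ncard {s t : V} {p : G.Walk s t} (hp : p.IsPath) :
    p.toSubgraph.verts.ncard = p.length + 1 ∧ p.toSubgraph.edgeSet.ncard = p.length := by
  classical
  constructor
  · have h1 : p.toSubgraph.verts = ↑p.support.toFinset := by
      rw [Walk.verts_toSubgraph]; ext v; simp
    rw [h1, Set.ncard_coe_finset, List.toFinset_card_of_nodup hp.support_nodup,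
      Walk.length_support]
  · have h1 : p.toSubgraph.edgeSet = ↑p.edges.toFinset := by
      rw [Walk.edgeSet_toSubgraph]; ext v; simp
    rw [h1, Set.ncard_coe_finset, List.toFinset_card_of_nodup hp.isTrail.edges_nodup,
      Walk.length_edges]

lemma cycle_toSubgraph_ncard {x : V} {w : G.Walk x x} (hw : w.IsCycle) :
    w.toSubgraph.verts.ncard = w.length ∧ w.toSubgraph.edgeSet.ncard = w.length := by
  classical
  constructor
  · have h1 : w.toSubgraph.verts = ↑w.support.tail.toFinset := by
      rw [Walk.verts_toSubgraph]; ext v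
      simp only [Set.mem_setOf_eq, Finset.coe_sort_coe, List.coe_toFinset, List.mem_toFinset]
      rw [Walk.support_eq_cons, List.mem_cons]
      constructor
      · rintro (rfl | hv)
        · cases w with
          | nil => exact absurd hw Walk.IsCycle.not_of_nil
          | cons h q => rw [Walk.support_cons, List.tail_cons]; exact q.end_mem_support
        · exact hv
      · exact Or.inr
    rw [h1, Set.ncard_coe_finset, List.toFinset_card_of_nodup hw.2]
    have := w.length_support
    rw [Walk.support_eq_cons] at this
    simp only [List.length_cons] at this
    omega
  · have h1 : w.toSubgraph.edgeSet = ↑w.edges.toFinset := by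
      rw [Walk.edgeSet_toSubgraph]; ext v; simp
    rw [h1, Set.ncard_coe_finset, List.toFinset_card_of_nodup hw.isTrail.edges_nodup,
      Walk.length_edges]

/-- A cycle's subgraph is never a path's subgraph. -/
lemma cycle_toSubgraph_ne_path {x s t : V} {w : G.Walk x x} (hw : w.IsCycle)
    {q : G.Walk s t} (hq : q.IsPath) : w.toSubgraph ≠ q.toSubgraph := by
  intro heq
  obtain ⟨hv1, he1⟩ := cycle_toSubgraph_ncard hw
  obtain ⟨hv2, he2⟩ := path_toSubgraph_ncard hq
  rw [heq] at hv1 he1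
  omega

lemma cycleSubgraph_le_eq {x y : V} {w : G.Walk x x} (hw : w.IsCycle) {z : G.Walk y y}
    (hz : z.IsCycle) (hle : z.toSubgraph ≤ w.toSubgraph) : z.toSubgraph = w.toSubgraph := by
  by_contra hne
  have hmiss : ¬ ∀ e ∈ w.edges, e ∈ z.toSubgraph.edgeSet := fun hall =>
    hne (eq_toSubgraph_of_edges_subset hw.not_nil hle hall)
  push_neg at hmiss
  obtain ⟨e, he, heK⟩ := hmiss
  obtain ⟨s, t, q, hq, hle'⟩ := le_path_of_missing_edge hw hle he heK
  obtain ⟨s', t', q', hq', heq⟩ :=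
    connected_le_path_isPathSubgraph q hq _ hle' z.toSubgraph_connected
  exact cycle_toSubgraph_ne_path hz hq' heq.symm

lemma length_rotate' {u v : V} [DecidableEq V] (c : G.Walk v v) (h : u ∈ c.support) :
    (c.rotate u h).length = c.length := by
  rw [Walk.rotate, Walk.length_append]
  conv_rhs => rw [← Walk.take_spec c h, Walk.length_append]
  omega

/-- Core construction: two new odd cycles from amalgamating halves of two odd cycles. -/
lemma four_odd_cycles_core {a b : V} (hab : a ≠ b) {H₁ H₂ : G.Subgraph}
    (h₁ : IsOddCycleSubgraph G H₁)
    (hK : ∀ p : G.Walk a b, ¬ p.toSubgraph ≤ H₁ ⊓ H₂)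
    (P₁ : G.Walk a b) (P₂ : G.Walk b a) (Q₁ : G.Walk a b) (Q₂ : G.Walk b a)
    (hPd : ∀ e ∈ P₁.edges, e ∉ P₂.edges)
    (hQd : ∀ e ∈ Q₁.edges, e ∉ Q₂.edges)
    (hP1 : ∀ e ∈ P₁.edges, e ∈ H₁.edgeSet) (hP2 : ∀ e ∈ P₂.edges, e ∈ H₁.edgeSet)
    (hQ1 : ∀ e ∈ Q₁.edges, e ∈ H₂.edgeSet) (hQ2 : ∀ e ∈ Q₂.edges, e ∈ H₂.edgeSet)
    (hodd1 : Odd (P₁.length + Q₁.length)) (hodd2 : Odd (P₂.length + Q₂.length)) :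
    ∃ T₁ T₂ : G.Subgraph, IsOddCycleSubgraph G T₁ ∧ IsOddCycleSubgraph G T₂ ∧
      T₁ ≠ T₂ ∧ T₁ ≠ H₁ ∧ T₁ ≠ H₂ ∧ T₂ ≠ H₁ ∧ T₂ ≠ H₂ := by
  have hinf : ∀ e, e ∈ H₁.edgeSet → e ∈ H₂.edgeSet → e ∈ (H₁ ⊓ H₂).edgeSet := by
    intro e he1 he2; rw [Subgraph.edgeSet_inf]; exact ⟨he1, he2⟩
  have hwalkab : ∀ (R : G.Walk a b), (∀ e ∈ R.edges, e ∈ (H₁ ⊓ H₂).edgeSet) → False := by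
    intro R hR
    have hn : ¬ R.Nil := fun h => hab (Walk.eq_of_length_eq_zero (Walk.nil_iff_length_eq.mp h))
    exact hK R (toSubgraph_le_of_edges R hn hR)
  have hwalkba : ∀ (R : G.Walk b a), (∀ e ∈ R.edges, e ∈ (H₁ ⊓ H₂).edgeSet) → False := by
    intro R hR
    refine hwalkab R.reverse (fun e he => hR e ?_)
    rwa [Walk.edges_reverse, List.mem_reverse] at he
  -- the two amalgamated odd closed walks
  have hW1odd : Odd (P₁.append Q₁.reverse).length := by
    rwa [Walk.length_append, Walk.length_reverse]
  have hW2odd : Odd (P₂.append Q₂.reverse).length := by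
    rw [Walk.length_append, Walk.length_reverse, Nat.add_comm]
    rwa [Nat.add_comm] at hodd2
  obtain ⟨y₁, c₁, hc₁cyc, hc₁odd, hc₁e⟩ :=
    exists_odd_cycle_of_odd_closed_aux _ (P₁.append Q₁.reverse) rfl hW1odd
  obtain ⟨y₂, c₂, hc₂cyc, hc₂odd, hc₂e⟩ :=
    exists_odd_cycle_of_odd_closed_aux _ (P₂.append Q₂.reverse) rfl hW2odd
  have hc₁e' : ∀ e ∈ c₁.edges, e ∈ P₁.edges ∨ e ∈ Q₁.edges := by
    intro e he
    have := hc₁e e he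
    rw [Walk.edges_append, List.mem_append, Walk.edges_reverse, List.mem_reverse] at this
    exact this
  have hc₂e' : ∀ e ∈ c₂.edges, e ∈ P₂.edges ∨ e ∈ Q₂.edges := by
    intro e he
    have := hc₂e e he
    rw [Walk.edges_append, List.mem_append, Walk.edges_reverse, List.mem_reverse] at this
    exact this
  have hT₁mem : ∀ e ∈ c₁.toSubgraph.edgeSet, e ∈ P₁.edges ∨ e ∈ Q₁.edges := by
    intro e he; exact hc₁e' e ((Walk.mem_edges_toSubgraph c₁).mp he)
  have hT₂mem : ∀ e ∈ c₂.toSubgraph.edgeSet, e ∈ P₂.edges ∨ e ∈ Q₂.edges := by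
    intro e he; exact hc₂e' e ((Walk.mem_edges_toSubgraph c₂).mp he)
  refine ⟨c₁.toSubgraph, c₂.toSubgraph, ⟨y₁, c₁, hc₁cyc, hc₁odd, rfl⟩,
    ⟨y₂, c₂, hc₂cyc, hc₂odd, rfl⟩, ?_, ?_, ?_, ?_, ?_⟩
  · -- T₁ ≠ T₂
    intro heq
    have hcK : ∀ e ∈ c₁.edges, e ∈ (H₁ ⊓ H₂).edgeSet := by
      intro e he
      have h1 := hc₁e' e he
      have h2 : e ∈ c₂.toSubgraph.edgeSet := by
        rw [← heq]; exact (Walk.mem_edges_toSubgraph c₁).mpr he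
      have h2' := hT₂mem e h2
      rcases h1 with h1 | h1 <;> rcases h2' with h2' | h2'
      · exact absurd h2' (hPd e h1)
      · exact hinf e (hP1 e h1) (hQ2 e h2')
      · exact hinf e (hP2 e h2') (hQ1 e h1)
      · exact absurd h2' (hQd e h1)
    -- all edges of c₁ lie in H₁; so c₁.toSubgraph = H₁, hence all H₁ edges common
    obtain ⟨u₁, w₁, hw₁c, hw₁o, hw₁s⟩ := h₁
    have hc₁H₁ : c₁.toSubgraph ≤ w₁.toSubgraph := by
      apply toSubgraph_le_of_edges c₁ hc₁cyc.not_nil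
      intro e he
      have := hcK e he
      rw [Subgraph.edgeSet_inf] at this
      rw [hw₁s]
      exact this.1
    have := cycleSubgraph_le_eq hw₁c hc₁cyc hc₁H₁
    -- H₁'s edges are all in H₁ ⊓ H₂; then P₁ gives a forbidden walk
    apply hwalkab P₁
    intro e he
    have heH₁ : e ∈ H₁.edgeSet := hP1 e he
    have : e ∈ c₁.toSubgraph.edgeSet := by rw [this, hw₁s]; exact heH₁
    exact hcK e ((Walk.mem_edges_toSubgraph c₁).mp this)
  · -- T₁ ≠ H₁
    intro heq
    apply hwalkba P₂
    intro e he
    have h1 : e ∈ c₁.toSubgraph.edgeSet := by rw [heq]; exact hP2 e he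
    rcases hT₁mem e h1 with h2 | h2
    · exact absurd he (hPd e h2)
    · exact hinf e (hP2 e he) (hQ1 e h2)
  · -- T₁ ≠ H₂
    intro heq
    apply hwalkba Q₂
    intro e he
    have h1 : e ∈ c₁.toSubgraph.edgeSet := by rw [heq]; exact hQ2 e he
    rcases hT₁mem e h1 with h2 | h2
    · exact hinf e (hP1 e h2) (hQ2 e he)
    · exact absurd he (hQd e h2)
  · -- T₂ ≠ H₁
    intro heq
    apply hwalkab P₁
    intro e he
    have h1 : e ∈ c₂.toSubgraph.edgeSet := by rw [heq]; exact hP1 e he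
    rcases hT₂mem e h1 with h2 | h2
    · exact absurd h2 (hPd e he)
    · exact hinf e (hP1 e he) (hQ2 e h2)
  · -- T₂ ≠ H₂
    intro heq
    apply hwalkab Q₁
    intro e he
    have h1 : e ∈ c₂.toSubgraph.edgeSet := by rw [heq]; exact hQ1 e he
    rcases hT₂mem e h1 with h2 | h2
    · exact hinf e (hP2 e h2) (hQ1 e he)
    · exact absurd h2 (hQd e he)

lemma subgraph_finite [Finite V] : Finite (G.Subgraph) := by
  have hinj : Function.Injective (fun H : G.Subgraph => (H.verts, H.Adj)) := by
    intro H1 H2 h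
    rw [Prod.mk.injEq] at h
    exact Subgraph.ext h.1 h.2
  exact Finite.of_injective _ hinj


end Helpers

open SimpleGraph Walk in
/-- Lemma 2.3: if `G` has exactly three odd cycles, then the intersection of every two of
its odd cycles is either empty or a path. -/
theorem three_odd_cycles_intersections {V : Type} [Fintype V] (G : SimpleGraph V)
    (hcyc : {H : G.Subgraph | IsOddCycleSubgraph G H}.ncard = 3)
    (H₁ H₂ : G.Subgraph) (h₁ : IsOddCycleSubgraph G H₁) (h₂ : IsOddCycleSubgraph G H₂)
    (hne : H₁ ≠ H₂) :
    H₁ ⊓ H₂ = ⊥ ∨ IsPathSubgraph G (H₁ ⊓ H₂) := by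
  classical
  obtain ⟨u₁, w₁, hw₁c, hw₁o, hw₁s⟩ := h₁
  obtain ⟨u₂, w₂, hw₂c, hw₂o, hw₂s⟩ := h₂
  by_cases hconn : (H₁ ⊓ H₂).Connected
  · right
    have hKle : H₁ ⊓ H₂ ≤ w₁.toSubgraph := hw₁s ▸ inf_le_left
    have hKne : H₁ ⊓ H₂ ≠ w₁.toSubgraph := by
      intro heq
      have hle : H₁ ≤ H₂ := inf_eq_left.mp (heq.trans hw₁s)
      rw [← hw₁s, ← hw₂s] at hle
      have := cycleSubgraph_le_eq hw₂c hw₁c hle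
      rw [hw₁s, hw₂s] at this
      exact hne this
    have hmiss : ¬ ∀ e ∈ w₁.edges, e ∈ (H₁ ⊓ H₂).edgeSet := fun hall =>
      hKne (eq_toSubgraph_of_edges_subset hw₁c.not_nil hKle hall)
    push_neg at hmiss
    obtain ⟨e, he, heK⟩ := hmiss
    obtain ⟨s, t, q, hq, hle'⟩ := le_path_of_missing_edge hw₁c hKle he heK
    obtain ⟨s', t', q', hq', heq⟩ := connected_le_path_isPathSubgraph q hq _ hle' hconn
    exact ⟨s', t', q', hq', heq⟩
  · by_cases hv : (H₁ ⊓ H₂).verts = ∅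
    · left
      apply Subgraph.ext
      · rw [hv, Subgraph.verts_bot]
      · funext x y
        apply propext
        constructor
        · intro h
          have := (H₁ ⊓ H₂).edge_vert h
          rw [hv] at this
          exact absurd this (Set.notMem_empty x)
        · intro h
          exact absurd h (by simp)
    · exfalso
      have hnonempty : (H₁ ⊓ H₂).verts.Nonempty := Set.nonempty_iff_ne_empty.mpr hv
      have hnc : ¬ ∀ (u v : V), u ∈ (H₁ ⊓ H₂).verts → v ∈ (H₁ ⊓ H₂).verts →
          ∃ p : G.Walk u v, p.toSubgraph ≤ H₁ ⊓ H₂ := by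
        intro hf
        rw [Subgraph.connected_iff_forall_exists_walk_subgraph] at hconn
        exact hconn ⟨hnonempty, fun {u v} hu hv => hf u v hu hv⟩
      push_neg at hnc
      obtain ⟨a, b, ha, hb, hKw⟩ := hnc
      have hab : a ≠ b := by
        rintro rfl
        exact hKw Walk.nil (by simpa [SimpleGraph.singletonSubgraph_le_iff] using ha)
      have haH₁ : a ∈ H₁.verts := ((Subgraph.verts_inf H₁ H₂) ▸ ha).1
      have haH₂ : a ∈ H₂.verts := ((Subgraph.verts_inf H₁ H₂) ▸ ha).2
      have hbH₁ : b ∈ H₁.verts := ((Subgraph.verts_inf H₁ H₂) ▸ hb).1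
      have hbH₂ : b ∈ H₂.verts := ((Subgraph.verts_inf H₁ H₂) ▸ hb).2
      -- split w₁ at a and b
      have ha₁ : a ∈ w₁.support := by
        rw [← Walk.mem_verts_toSubgraph, hw₁s]; exact haH₁
      have hb₁ : b ∈ (w₁.rotate a ha₁).support := by
        rw [← Walk.mem_verts_toSubgraph, w₁.toSubgraph_rotate ha₁, hw₁s]; exact hbH₁
      have ha₂ : a ∈ w₂.support := by
        rw [← Walk.mem_verts_toSubgraph, hw₂s]; exact haH₂
      have hb₂ : b ∈ (w₂.rotate a ha₂).support := by
        rw [← Walk.mem_verts_toSubgraph, w₂.toSubgraph_rotate ha₂, hw₂s]; exact hbH₂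
      set c₁ := w₁.rotate a ha₁ with hc₁
      set c₂ := w₂.rotate a ha₂ with hc₂
      set P₁ := c₁.takeUntil b hb₁ with hP₁
      set P₂ := c₁.dropUntil b hb₁ with hP₂
      set Q₁ := c₂.takeUntil b hb₂ with hQ₁
      set Q₂ := c₂.dropUntil b hb₂ with hQ₂
      have hspec₁ : P₁.append P₂ = c₁ := c₁.take_spec hb₁
      have hspec₂ : Q₁.append Q₂ = c₂ := c₂.take_spec hb₂
      have hc₁s : c₁.toSubgraph = H₁ := by rw [hc₁, w₁.toSubgraph_rotate ha₁, hw₁s]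
      have hc₂s : c₂.toSubgraph = H₂ := by rw [hc₂, w₂.toSubgraph_rotate ha₂, hw₂s]
      have hPd : ∀ e ∈ P₁.edges, e ∉ P₂.edges := by
        have hnd : c₁.edges.Nodup := (hw₁c.rotate ha₁).isTrail.edges_nodup
        rw [← hspec₁, Walk.edges_append, List.nodup_append] at hnd
        exact fun e he1 he2 => hnd.2.2 _ he1 _ he2 rfl
      have hQd : ∀ e ∈ Q₁.edges, e ∉ Q₂.edges := by
        have hnd : c₂.edges.Nodup := (hw₂c.rotate ha₂).isTrail.edges_nodup
        rw [← hspec₂, Walk.edges_append, List.nodup_append] at hnd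
        exact fun e he1 he2 => hnd.2.2 _ he1 _ he2 rfl
      have hP1 : ∀ e ∈ P₁.edges, e ∈ H₁.edgeSet := fun e he => by
        rw [← hc₁s]
        exact (Walk.mem_edges_toSubgraph c₁).mpr (c₁.edges_takeUntil_subset hb₁ he)
      have hP2 : ∀ e ∈ P₂.edges, e ∈ H₁.edgeSet := fun e he => by
        rw [← hc₁s]
        exact (Walk.mem_edges_toSubgraph c₁).mpr (c₁.edges_dropUntil_subset hb₁ he)
      have hQ1 : ∀ e ∈ Q₁.edges, e ∈ H₂.edgeSet := fun e he => by
        rw [← hc₂s]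
        exact (Walk.mem_edges_toSubgraph c₂).mpr (c₂.edges_takeUntil_subset hb₂ he)
      have hQ2 : ∀ e ∈ Q₂.edges, e ∈ H₂.edgeSet := fun e he => by
        rw [← hc₂s]
        exact (Walk.mem_edges_toSubgraph c₂).mpr (c₂.edges_dropUntil_subset hb₂ he)
      have hlen₁ : P₁.length + P₂.length = w₁.length := by
        have := congrArg Walk.length hspec₁
        rw [Walk.length_append] at this
        rw [this, hc₁, length_rotate']
      have hlen₂ : Q₁.length + Q₂.length = w₂.length := by
        have := congrArg Walk.length hspec₂
        rw [Walk.length_append] at this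
        rw [this, hc₂, length_rotate']
      have hm₁ : (P₁.length + P₂.length) % 2 = 1 := by rw [hlen₁]; exact Nat.odd_iff.mp hw₁o
      have hm₂ : (Q₁.length + Q₂.length) % 2 = 1 := by rw [hlen₂]; exact Nat.odd_iff.mp hw₂o
      have hKw' : ∀ p : G.Walk a b, ¬ p.toSubgraph ≤ H₁ ⊓ H₂ := hKw
      -- two parity cases
      obtain ⟨T₁, T₂, hT₁, hT₂, h12, h1a, h1b, h2a, h2b⟩ :
          ∃ T₁ T₂ : G.Subgraph, IsOddCycleSubgraph G T₁ ∧ IsOddCycleSubgraph G T₂ ∧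
            T₁ ≠ T₂ ∧ T₁ ≠ H₁ ∧ T₁ ≠ H₂ ∧ T₂ ≠ H₁ ∧ T₂ ≠ H₂ := by
        by_cases hpar : Odd (P₁.length + Q₁.length)
        · have hpar2 : Odd (P₂.length + Q₂.length) := by
            rw [Nat.odd_iff] at hpar ⊢; omega
          exact four_odd_cycles_core hab ⟨u₁, w₁, hw₁c, hw₁o, hw₁s⟩ hKw'
            P₁ P₂ Q₁ Q₂ hPd hQd hP1 hP2 hQ1 hQ2 hpar hpar2
        · have hpar1 : Odd (P₁.length + Q₂.reverse.length) := by
            rw [Nat.odd_iff] at hpar ⊢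
            rw [Walk.length_reverse]
            omega
          have hpar2 : Odd (P₂.length + Q₁.reverse.length) := by
            rw [Nat.odd_iff] at hpar ⊢
            rw [Walk.length_reverse]
            omega
          refine four_odd_cycles_core hab ⟨u₁, w₁, hw₁c, hw₁o, hw₁s⟩ hKw'
            P₁ P₂ Q₂.reverse Q₁.reverse hPd ?_ hP1 hP2 ?_ ?_ hpar1 hpar2
          · intro e he1 he2
            rw [Walk.edges_reverse, List.mem_reverse] at he1 he2
            exact hQd e he2 he1
          · intro e he
            rw [Walk.edges_reverse, List.mem_reverse] at he
            exact hQ2 e he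
          · intro e he
            rw [Walk.edges_reverse, List.mem_reverse] at he
            exact hQ1 e he
      -- now we have four distinct odd cycle subgraphs, contradicting ncard = 3
      haveI hfin : Finite (G.Subgraph) := subgraph_finite
      have hsub : {H₁, H₂, T₁, T₂} ⊆ {H : G.Subgraph | IsOddCycleSubgraph G H} := by
        intro X hX
        rcases hX with rfl | rfl | rfl | rfl
        · exact ⟨u₁, w₁, hw₁c, hw₁o, hw₁s⟩
        · exact ⟨u₂, w₂, hw₂c, hw₂o, hw₂s⟩
        · exact hT₁
        · exact hT₂
      have hm1 : H₁ ∉ ({H₂, T₁, T₂} : Set G.Subgraph) := by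
        simp only [Set.mem_insert_iff, Set.mem_singleton_iff]
        push_neg
        exact ⟨hne, fun h => h1a h.symm, fun h => h2a h.symm⟩
      have hm2 : H₂ ∉ ({T₁, T₂} : Set G.Subgraph) := by
        simp only [Set.mem_insert_iff, Set.mem_singleton_iff]
        push_neg
        exact ⟨fun h => h1b h.symm, fun h => h2b h.symm⟩
      have hm3 : T₁ ∉ ({T₂} : Set G.Subgraph) := by
        simpa using h12
      have hcard4 : ({H₁, H₂, T₁, T₂} : Set G.Subgraph).ncard = 4 := by
        rw [Set.ncard_insert_of_notMem hm1 (Set.toFinite _),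
          Set.ncard_insert_of_notMem hm2 (Set.toFinite _),
          Set.ncard_insert_of_notMem hm3 (Set.toFinite _), Set.ncard_singleton]
      have hle4 := Set.ncard_le_ncard hsub (Set.toFinite _)
      rw [hcard4, hcyc] at hle4
      omega
end

section
/- There are no $(3,2)$-critical graphs that contain exactly three odd cycles. -/
open SimpleGraph

namespace ThreeOddAux

variable {V : Type}



private lemma list_exists_ne {α : Type*} {l : List α} (hl : l.Nodup) (hlen : 2 ≤ l.length)
    (h : α) : ∃ e ∈ l, e ≠ h := by
  match l, hl, hlen with
  | a :: b :: t, hl, _ =>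
    rcases List.nodup_cons.mp hl with ⟨hab, _⟩
    by_cases hah : a = h
    · exact ⟨b, by simp, fun hbh => hab (by simp [hah, hbh])⟩
    · exact ⟨a, by simp, hah⟩

private lemma list_all_eq_length_le_one {α : Type*} {l : List α} {e0 : α} (hl : l.Nodup)
    (hall : ∀ x ∈ l, x = e0) : l.length ≤ 1 := by
  match l, hl, hall with
  | [], _, _ => simp
  | [a], _, _ => simp
  | a :: b :: t, hl, hall =>
    exfalso
    rcases List.nodup_cons.mp hl with ⟨hab, _⟩
    exact hab (by simp [hall a (by simp), hall b (by simp)])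

private lemma mem_support_of_mem_edges' {G : SimpleGraph V} {u v x : V} (p : G.Walk u v)
    {e : Sym2 V} (he : e ∈ p.edges) (hx : x ∈ e) : x ∈ p.support := by
  induction e with
  | _ a b =>
    rcases Sym2.mem_iff.mp hx with rfl | rfl
    · exact p.fst_mem_support_of_mem_edges he
    · exact p.snd_mem_support_of_mem_edges he

private lemma mem_edge_of_mem_support_aux {G : SimpleGraph V} {u v x : V}
    (p : G.Walk u v) (hx : x ∈ p.support) :
    (∃ e ∈ p.edges, x ∈ e) ∨ x = v := by
  induction p with
  | nil => right; simpa using hx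
  | @cons a b c h q ih =>
    rw [SimpleGraph.Walk.support_cons] at hx
    rcases List.mem_cons.mp hx with rfl | hx'
    · exact Or.inl ⟨s(x, b), by simp, by simp⟩
    · rcases ih hx' with ⟨e, he, hxe⟩ | rfl
      · exact Or.inl ⟨e, by simp [he], hxe⟩
      · right; rfl

private lemma mem_edge_of_mem_support {G : SimpleGraph V} {x v : V}
    (p : G.Walk x x) (hnn : ¬p.Nil) (hv : v ∈ p.support) :
    ∃ e ∈ p.edges, v ∈ e := by
  rcases mem_edge_of_mem_support_aux p hv with h | rfl
  · exact h
  · rcases SimpleGraph.Walk.not_nil_iff.mp hnn with ⟨u, h, q, rfl⟩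
    exact ⟨s(v, u), by simp, by simp⟩

private lemma toSubgraph_eq_of_edges_eq {G : SimpleGraph V} {x y : V}
    {w : G.Walk x x} {w' : G.Walk y y} (hw : ¬w.Nil) (hw' : ¬w'.Nil)
    (h : {e | e ∈ w.edges} = {e | e ∈ w'.edges}) : w.toSubgraph = w'.toSubgraph := by
  have hset : ∀ e : Sym2 V, e ∈ w.edges ↔ e ∈ w'.edges := fun e => Set.ext_iff.mp h e
  apply SimpleGraph.Subgraph.ext
  · ext v
    rw [SimpleGraph.Walk.mem_verts_toSubgraph, SimpleGraph.Walk.mem_verts_toSubgraph]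
    constructor
    · intro hv
      obtain ⟨e, he, hve⟩ := mem_edge_of_mem_support w hw hv
      exact mem_support_of_mem_edges' w' ((hset e).mp he) hve
    · intro hv
      obtain ⟨e, he, hve⟩ := mem_edge_of_mem_support w' hw' hv
      exact mem_support_of_mem_edges' w ((hset e).mpr he) hve
  · funext a b
    apply propext
    have h1 := SimpleGraph.Walk.mem_edges_toSubgraph w (e := s(a, b))
    have h2 := SimpleGraph.Walk.mem_edges_toSubgraph w' (e := s(a, b))
    rw [SimpleGraph.Subgraph.mem_edgeSet] at h1 h2
    rw [h1, h2]
    exact hset _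



private lemma isCycle_of_tail_nodup {G : SimpleGraph V} {x : V} {w : G.Walk x x}
    (hodd : Odd w.length) (hnd : w.support.tail.Nodup) : w.IsCycle := by
  have hnn : ¬w.Nil := by
    rw [SimpleGraph.Walk.nil_iff_length_eq]
    intro h0
    rw [h0] at hodd
    simp at hodd
  rcases SimpleGraph.Walk.not_nil_iff.mp hnn with ⟨y, h, q, rfl⟩
  rw [SimpleGraph.Walk.support_cons] at hnd
  simp only [List.tail_cons] at hnd
  rw [SimpleGraph.Walk.cons_isCycle_iff]
  refine ⟨SimpleGraph.Walk.IsPath.mk' hnd, ?_⟩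
  intro hmem
  have hqnn : ¬q.Nil := by
    intro hqn
    have : q.edges = [] := List.eq_nil_of_length_eq_zero
      (by rw [SimpleGraph.Walk.length_edges]; exact SimpleGraph.Walk.nil_iff_length_eq.mp hqn)
    rw [this] at hmem
    simp at hmem
  rcases SimpleGraph.Walk.not_nil_iff.mp hqnn with ⟨z, h2, q2, rfl⟩
  rw [SimpleGraph.Walk.edges_cons] at hmem
  rw [SimpleGraph.Walk.support_cons] at hnd
  rcases List.nodup_cons.mp hnd with ⟨hy2, hnd2⟩
  rcases List.mem_cons.mp hmem with heq | hmem'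
  · rw [Sym2.eq_iff] at heq
    rcases heq with ⟨hxy, -⟩ | ⟨hxz, -⟩
    · exact h.ne hxy
    · -- x = z ; q2 : Walk z x is a closed path, so nil; total length 2
      subst hxz
      have hq2 : q2.IsPath := SimpleGraph.Walk.IsPath.mk' hnd2
      have := SimpleGraph.Walk.isPath_iff_eq_nil.mp hq2
      subst this
      simp [Nat.odd_iff] at hodd
  · exact hy2 (q2.snd_mem_support_of_mem_edges hmem')

private lemma exists_oddCycle {G : SimpleGraph V} :
    ∀ (n : ℕ) {x : V} (w : G.Walk x x), w.length = n → Odd w.length →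
      ∃ (y : V) (c : G.Walk y y), c.IsCycle ∧ Odd c.length ∧ ∀ e ∈ c.edges, e ∈ w.edges := by
  intro n
  induction n using Nat.strong_induction_on with
  | _ n ih =>
    intro x w hlen hodd
    classical
    by_cases hnd : w.support.tail.Nodup
    · exact ⟨x, w, isCycle_of_tail_nodup hodd hnd, hodd, fun e he => he⟩
    · obtain ⟨v, hdup⟩ := List.exists_duplicate_iff_not_nodup.mpr hnd
      have hv : v ∈ w.support := List.mem_of_mem_tail hdup.mem
      set w' := w.rotate v hv with hw'
      have hperm : List.Perm w'.edges w.edges := (SimpleGraph.Walk.rotate_edges w v hv).perm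
      have hlen' : w'.length = w.length := by
        have h1 := hperm.length_eq
        rwa [SimpleGraph.Walk.length_edges, SimpleGraph.Walk.length_edges] at h1
      have hcount : 2 ≤ w'.support.tail.count v := by
        have hp2 : List.Perm w'.support.tail w.support.tail := (SimpleGraph.Walk.support_rotate w v hv).perm
        rw [hp2.count_eq]
        exact List.duplicate_iff_two_le_count.mp hdup
      have hnn' : ¬w'.Nil := by
        intro hnil
        rcases SimpleGraph.Walk.nil_iff_eq_nil.mp hnil with h
        rw [h] at hcount
        simp at hcount
      rcases SimpleGraph.Walk.not_nil_iff.mp hnn' with ⟨y, hadj, q, hq⟩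
      have hsupp : w'.support.tail = q.support := by rw [hq, SimpleGraph.Walk.support_cons]; simp
      rw [hsupp] at hcount
      have hvq : v ∈ q.support := List.count_pos_iff.mp (by omega)
      set qt := q.takeUntil v hvq with hqt
      set qd := q.dropUntil v hvq with hqd
      have hspec : qt.append qd = q := q.take_spec hvq
      have hcd : 1 ≤ qd.length := by
        have h1 : qt.support.count v = 1 := q.count_support_takeUntil_eq_one hvq
        have h2 : q.support = qt.support ++ qd.support.tail := by
          rw [← hspec, SimpleGraph.Walk.support_append]
        rw [h2, List.count_append] at hcount
        have h3 : qd.support.tail.count v ≤ qd.support.tail.length := List.count_le_length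
        have h4 : qd.support.tail.length = qd.length := by
          have := SimpleGraph.Walk.length_support qd
          simp [List.length_tail, this]
        omega
      have hql : qt.length + qd.length = q.length := by
        rw [← hspec, SimpleGraph.Walk.length_append]
      have hwq : w'.length = q.length + 1 := by rw [hq, SimpleGraph.Walk.length_cons]
      -- two candidate closed walks
      have hoddsum : Odd ((qt.length + 1) + qd.length) := by
        rw [hlen'] at hwq
        rw [hlen] at hwq
        have : (qt.length + 1) + qd.length = n := by omega
        rw [this, ← hlen]
        exact hodd
      have hqtw : ∀ e ∈ qt.edges, e ∈ w.edges := by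
        intro e he
        apply hperm.mem_iff.mp
        rw [hq, SimpleGraph.Walk.edges_cons]
        right
        rw [← hspec, SimpleGraph.Walk.edges_append]
        exact List.mem_append_left _ he
      have hqdw : ∀ e ∈ qd.edges, e ∈ w.edges := by
        intro e he
        apply hperm.mem_iff.mp
        rw [hq, SimpleGraph.Walk.edges_cons]
        right
        rw [← hspec, SimpleGraph.Walk.edges_append]
        exact List.mem_append_right _ he
      rcases Nat.odd_add.mp hoddsum with hiff
      by_cases hoq : Odd (qt.length + 1)
      · -- recurse on cons hadj qt
        set w1 : G.Walk v v := SimpleGraph.Walk.cons hadj qt with hw1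
        have hlen1 : w1.length = qt.length + 1 := by rw [hw1, SimpleGraph.Walk.length_cons]
        have hlt : w1.length < n := by
          rw [hlen1]
          rw [hlen'] at hwq; rw [hlen] at hwq
          omega
        obtain ⟨z, c, hc, hco, hce⟩ := ih w1.length hlt w1 rfl (by rw [hlen1]; exact hoq)
        refine ⟨z, c, hc, hco, fun e he => ?_⟩
        have := hce e he
        rw [hw1, SimpleGraph.Walk.edges_cons] at this
        rcases List.mem_cons.mp this with rfl | h'
        · apply hperm.mem_iff.mp
          rw [hq, SimpleGraph.Walk.edges_cons]
          exact List.mem_cons_self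
        · exact hqtw _ h'
      · have hoqd : Odd qd.length := by
          rcases Nat.even_or_odd qd.length with h' | h'
          · exact absurd (hiff.mpr h') hoq
          · exact h'
        have hlt : qd.length < n := by
          rw [hlen'] at hwq; rw [hlen] at hwq
          omega
        obtain ⟨z, c, hc, hco, hce⟩ := ih qd.length hlt qd rfl hoqd
        exact ⟨z, c, hc, hco, fun e he => hqdw _ (hce e he)⟩



private lemma colorable_two_of_no_odd_closed_walk {G : SimpleGraph V}
    (h : ∀ (x : V) (w : G.Walk x x), ¬Odd w.length) : G.Colorable 2 := by
  classical
  let f : V → Bool := fun v => decide (Odd (G.dist (G.connectedComponentMk v).out v))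
  have hvalid : ∀ {a b : V}, G.Adj a b → f a ≠ f b := by
    intro a b hadj hfab
    have hcc : G.connectedComponentMk a = G.connectedComponentMk b :=
      SimpleGraph.ConnectedComponent.connectedComponentMk_eq_of_adj hadj
    set r := (G.connectedComponentMk a).out with hr
    have hra : G.Reachable r a := by
      apply SimpleGraph.ConnectedComponent.exact
      exact Quot.out_eq _
    have hrb : G.Reachable r b := by
      apply SimpleGraph.ConnectedComponent.exact
      rw [hr, hcc]
      exact Quot.out_eq _
    obtain ⟨p1, hp1⟩ := hra.exists_walk_length_eq_dist
    obtain ⟨p2, hp2⟩ := hrb.exists_walk_length_eq_dist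
    have hparity : (Odd (G.dist r a) ↔ Odd (G.dist r b)) := by
      simp only [f] at hfab
      rw [← hcc] at hfab
      simp only [decide_eq_decide] at hfab
      exact hfab
    set wloop : G.Walk a a :=
      (p1.reverse.append p2).append (SimpleGraph.Walk.cons hadj.symm SimpleGraph.Walk.nil)
        with hwl
    have hlen : wloop.length = G.dist r a + G.dist r b + 1 := by
      rw [hwl]
      rw [SimpleGraph.Walk.length_append, SimpleGraph.Walk.length_append,
        SimpleGraph.Walk.length_reverse, SimpleGraph.Walk.length_cons,
        SimpleGraph.Walk.length_nil, hp1, hp2]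
    apply h a wloop
    rw [hlen]
    rcases Nat.even_or_odd (G.dist r a) with he | ho
    · have : ¬ Odd (G.dist r b) := by
        intro hob
        rw [← hparity] at hob
        exact (Nat.not_odd_iff_even.mpr he) hob
      have heb : Even (G.dist r b) := Nat.not_odd_iff_even.mp this
      exact (he.add heb).add_one
    · have hob : Odd (G.dist r b) := hparity.mp ho
      have : Even (G.dist r a + G.dist r b) := by
        rw [Nat.even_add]
        simp [Nat.not_even_iff_odd.mpr ho, Nat.not_even_iff_odd.mpr hob]
      exact this.add_one
  have hcol : G.Coloring Bool := SimpleGraph.Coloring.mk f (fun hab => hvalid hab)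
  have := hcol.colorable
  simpa using this



private lemma path_last_edge {G : SimpleGraph V} {u v : V} (p : G.Walk u v)
    (hp : p.IsPath) (hnn : ¬p.Nil) :
    ∃ el ∈ p.edges, v ∈ el ∧ ∀ e ∈ p.edges, v ∈ e → e = el := by
  induction p with
  | nil => simp at hnn
  | @cons a b c h q ih =>
    by_cases hq : q.Nil
    · have hbc : b = c := by
        rw [SimpleGraph.Walk.nil_iff_length_eq] at hq
        exact SimpleGraph.Walk.eq_of_length_eq_zero hq
      subst hbc
      have hq0 : q.length = 0 := SimpleGraph.Walk.nil_iff_length_eq.mp hq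
      have hqe : q.edges = [] := List.eq_nil_of_length_eq_zero
        (by rw [SimpleGraph.Walk.length_edges, hq0])
      refine ⟨s(a, b), by simp [SimpleGraph.Walk.edges_cons], by simp, ?_⟩
      intro e he _
      rw [SimpleGraph.Walk.edges_cons, hqe] at he
      simpa using he
    · obtain ⟨el, hel, hvel, huniq⟩ := ih hp.of_cons hq
      refine ⟨el, by rw [SimpleGraph.Walk.edges_cons]; exact List.mem_cons_of_mem _ hel,
        hvel, ?_⟩
      intro e he hve
      rw [SimpleGraph.Walk.edges_cons] at he
      rcases List.mem_cons.mp he with rfl | he'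
      · exfalso
        rcases Sym2.mem_iff.mp hve with hca | hcb
        · subst hca
          have := SimpleGraph.Walk.isPath_iff_eq_nil.mp hp
          simp at this
        · subst hcb
          have := SimpleGraph.Walk.isPath_iff_eq_nil.mp hp.of_cons
          rw [this] at hq
          simp at hq
      · exact huniq e he' hve

private lemma cycle_start_incidence {G : SimpleGraph V} [DecidableEq V] {v : V}
    (w : G.Walk v v) (hw : w.IsCycle) :
    (w.edges.toFinset.filter (fun e => v ∈ e)).card = 2 := by
  rcases SimpleGraph.Walk.not_nil_iff.mp hw.not_nil with ⟨y, hadj, q, rfl⟩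
  rw [SimpleGraph.Walk.cons_isCycle_iff] at hw
  obtain ⟨hqp, hne⟩ := hw
  have hqnn : ¬q.Nil := by
    intro hqn
    have hyv : y = v := by
      rw [SimpleGraph.Walk.nil_iff_length_eq] at hqn
      exact SimpleGraph.Walk.eq_of_length_eq_zero hqn
    exact hadj.ne hyv.symm
  obtain ⟨el, hel, hvel, huniq⟩ := path_last_edge q hqp hqnn
  have hflt : (SimpleGraph.Walk.cons hadj q).edges.toFinset.filter (fun e => v ∈ e)
      = {s(v, y), el} := by
    ext e
    simp only [Finset.mem_filter, List.mem_toFinset, SimpleGraph.Walk.edges_cons,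
      List.mem_cons, Finset.mem_insert, Finset.mem_singleton]
    constructor
    · rintro ⟨he | he, hve⟩
      · exact Or.inl he
      · exact Or.inr (huniq e he hve)
    · rintro (rfl | rfl)
      · exact ⟨Or.inl rfl, by simp⟩
      · exact ⟨Or.inr hel, hvel⟩
  rw [hflt]
  rw [Finset.card_insert_of_notMem (by
    simp only [Finset.mem_singleton]
    intro hcontr
    rw [hcontr] at hne
    exact hne hel)]
  simp

private lemma cycle_incidence_even {G : SimpleGraph V} [DecidableEq V] {x : V} {w : G.Walk x x}
    (hw : w.IsCycle) (v : V) :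
    Even ((w.edges.toFinset.filter (fun e => v ∈ e)).card) := by
  by_cases hv : v ∈ w.support
  · have hperm : (w.rotate v hv).edges.toFinset = w.edges.toFinset :=
      List.toFinset_eq_of_perm _ _ (SimpleGraph.Walk.rotate_edges w v hv).perm
    rw [← hperm]
    rw [cycle_start_incidence (w.rotate v hv) (hw.rotate hv)]
    exact even_two
  · have hflt : w.edges.toFinset.filter (fun e => v ∈ e) = ∅ := by
      ext e
      simp only [Finset.mem_filter, List.mem_toFinset, Finset.notMem_empty, iff_false,
        not_and]
      intro he hve
      exact hv (by
        induction e with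
        | _ a b =>
          rcases Sym2.mem_iff.mp hve with rfl | rfl
          · exact w.fst_mem_support_of_mem_edges he
          · exact w.snd_mem_support_of_mem_edges he)
    rw [hflt]
    simp

private lemma parity_lemma {α : Type*} [DecidableEq α] (F1 F2 F3 S : Finset α)
    (hno3 : ∀ e, ¬(e ∈ F1 ∧ e ∈ F2 ∧ e ∈ F3))
    (hS : ∀ e, e ∈ S ↔ e ∈ F1 ∪ F2 ∪ F3 ∧
      ((if e ∈ F1 then 1 else 0) + (if e ∈ F2 then 1 else 0) + (if e ∈ F3 then 1 else 0) = 1)) :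
    ∃ k, F1.card + F2.card + F3.card = S.card + 2 * k := by
  classical
  set U := F1 ∪ F2 ∪ F3 with hU
  set cnt : α → ℕ := fun e =>
    (if e ∈ F1 then 1 else 0) + (if e ∈ F2 then 1 else 0) + (if e ∈ F3 then 1 else 0) with hcnt
  have hsum : ∑ e ∈ U, cnt e = F1.card + F2.card + F3.card := by
    rw [hcnt]
    simp only []
    rw [Finset.sum_add_distrib, Finset.sum_add_distrib]
    congr 1
    · congr 1
      · rw [← Finset.card_filter]
        congr 1
        ext e
        simp only [Finset.mem_filter, hU, Finset.mem_union]
        tauto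
      · rw [← Finset.card_filter]
        congr 1
        ext e
        simp only [Finset.mem_filter, hU, Finset.mem_union]
        tauto
    · rw [← Finset.card_filter]
      congr 1
      ext e
      simp only [Finset.mem_filter, hU, Finset.mem_union]
      tauto
  have hSeq : S = U.filter (fun e => cnt e = 1) := by
    ext e
    rw [hS e]
    simp [hU, hcnt]
  have hsplit : ∑ e ∈ U, cnt e
      = ∑ e ∈ U.filter (fun e => cnt e = 1), cnt e
        + ∑ e ∈ U.filter (fun e => ¬cnt e = 1), cnt e :=
    (Finset.sum_filter_add_sum_filter_not U _ _).symm
  have h1 : ∑ e ∈ U.filter (fun e => cnt e = 1), cnt e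
      = (U.filter (fun e => cnt e = 1)).card := by
    rw [Finset.card_eq_sum_ones]
    apply Finset.sum_congr rfl
    intro e he
    exact (Finset.mem_filter.mp he).2
  have h2 : ∑ e ∈ U.filter (fun e => ¬cnt e = 1), cnt e
      = 2 * (U.filter (fun e => ¬cnt e = 1)).card := by
    rw [Finset.card_eq_sum_ones, Finset.mul_sum]
    apply Finset.sum_congr rfl
    intro e he
    rcases Finset.mem_filter.mp he with ⟨heU, hne1⟩
    have hor : e ∈ F1 ∨ e ∈ F2 ∨ e ∈ F3 := by
      rw [hU] at heU
      simpa [Finset.mem_union, or_assoc] using heU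
    have hcnt2 : cnt e = 2 := by
      have h3 : ¬(e ∈ F1 ∧ e ∈ F2 ∧ e ∈ F3) := hno3 e
      have hne1' : ¬((if e ∈ F1 then (1:ℕ) else 0) + (if e ∈ F2 then 1 else 0)
          + (if e ∈ F3 then 1 else 0) = 1) := hne1
      show (if e ∈ F1 then (1:ℕ) else 0) + (if e ∈ F2 then 1 else 0)
          + (if e ∈ F3 then 1 else 0) = 2
      split_ifs at hne1' ⊢ <;>
        first
          | omega
          | (exact absurd ⟨‹e ∈ F1›, ‹e ∈ F2›, ‹e ∈ F3›⟩ h3)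
          | (rcases hor with h' | h' | h' <;> contradiction)
    rw [hcnt2]
    omega
  rw [hsplit, h1, h2, ← hSeq] at hsum
  exact ⟨(U.filter (fun e => ¬cnt e = 1)).card, by omega⟩



private lemma colorable_two_of_no_odd_cycle {G : SimpleGraph V}
    (h : ∀ (y : V) (c : G.Walk y y), c.IsCycle → ¬Odd c.length) : G.Colorable 2 := by
  apply colorable_two_of_no_odd_closed_walk
  intro x w hodd
  obtain ⟨y, c, hc, hco, -⟩ := exists_oddCycle w.length w rfl hodd
  exact h y c hc hco

private lemma chromaticNumber_eq_two {H : SimpleGraph V} (hcol : H.Colorable 2)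
    {e : Sym2 V} (he : e ∈ H.edgeSet) : H.chromaticNumber = 2 := by
  refine le_antisymm ?_ ?_
  · have := hcol.chromaticNumber_le
    simpa using this
  · by_contra hlt
    push_neg at hlt
    have h1 : H.chromaticNumber ≤ 1 := by
      have h2 : H.chromaticNumber < 1 + 1 := by
        rw [one_add_one_eq_two]; exact hlt
      exact Order.le_of_lt_add_one h2
    have hcol1 : H.Colorable 1 := by
      rw [← SimpleGraph.chromaticNumber_le_iff_colorable]
      exact_mod_cast h1
    obtain ⟨c⟩ := hcol1
    induction e with
    | _ a b =>
      have hadj : H.Adj a b := (SimpleGraph.mem_edgeSet H).mp he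
      exact c.valid hadj (Subsingleton.elim _ _)

private lemma chromaticNumber_eq_three_of_le {G H : SimpleGraph V} (hle : H ≤ G)
    (hG3 : G.chromaticNumber = 3) {y : V} (c : H.Walk y y) (hodd : Odd c.length) :
    H.chromaticNumber = 3 := by
  refine le_antisymm ?_ (SimpleGraph.Walk.three_le_chromaticNumber_of_odd_loop c hodd)
  rw [← hG3]
  exact SimpleGraph.chromaticNumber_mono _ hle

private lemma colorable_two_of_single_edge {K : SimpleGraph V} {e0 : Sym2 V}
    (hsub : ∀ e ∈ K.edgeSet, e = e0) : K.Colorable 2 := by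
  apply colorable_two_of_no_odd_cycle
  intro y c hc hodd
  have h3 : 3 ≤ c.length := hc.three_le_length
  have hnd : c.edges.Nodup := hc.edges_nodup
  have hall : ∀ x ∈ c.edges, x = e0 := fun x hx => hsub x (c.edges_subset_edgeSet hx)
  have := list_all_eq_length_le_one hnd hall
  rw [SimpleGraph.Walk.length_edges] at this
  omega

private lemma esChi_attained [Fintype V] {H : SimpleGraph V} (hH3 : H.chromaticNumber = 3)
    {e0 : Sym2 V} (he0 : e0 ∈ H.edgeSet) :
    ∃ F : Finset (Sym2 V), ↑F ⊆ H.edgeSet ∧ F.card = esChi H ∧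
      (H.deleteEdges ↑F).chromaticNumber + 1 = H.chromaticNumber := by
  classical
  haveI : Fintype H.edgeSet := H.edgeSet.toFinite.fintype
  set F0 : Finset (Sym2 V) := H.edgeSet.toFinset.erase e0 with hF0
  have hsub : ↑F0 ⊆ H.edgeSet := by
    intro e he
    rw [hF0] at he
    simp only [Finset.coe_erase, Set.mem_diff] at he
    have := he.1
    simpa using this
  have hEdel : (H.deleteEdges ↑F0).edgeSet = {e0} := by
    rw [SimpleGraph.edgeSet_deleteEdges]
    ext e
    simp only [Set.mem_diff, Set.mem_singleton_iff, hF0, Finset.coe_erase, Set.mem_toFinset]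
    constructor
    · rintro ⟨heH, hne⟩
      by_contra hne0
      exact hne ⟨by simpa using heH, hne0⟩
    · rintro rfl
      exact ⟨he0, by simp⟩
  have hcol2 : (H.deleteEdges ↑F0).Colorable 2 :=
    colorable_two_of_single_edge (fun e he => by rwa [hEdel] at he)
  have hchrom : (H.deleteEdges ↑F0).chromaticNumber = 2 :=
    chromaticNumber_eq_two hcol2 (by rw [hEdel]; rfl)
  have hmem : esChi H ∈ {n : ℕ | ∃ F : Finset (Sym2 V), ↑F ⊆ H.edgeSet ∧ F.card = n ∧
      (H.deleteEdges ↑F).chromaticNumber + 1 = H.chromaticNumber} := by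
    apply Nat.sInf_mem
    refine ⟨F0.card, F0, hsub, rfl, ?_⟩
    rw [hchrom, hH3]
    norm_num
  exact hmem

private lemma crit_single_edge [Fintype V] {G : SimpleGraph V}
    (hcrit : EdgeStabilityCritical G) (hes : esChi G = 2)
    {g : Sym2 V} (hg : g ∈ G.edgeSet)
    (hH3 : (G.deleteEdges {g}).chromaticNumber = 3)
    {e0 : Sym2 V} (he0 : e0 ∈ (G.deleteEdges {g}).edgeSet) :
    ∃ h : Sym2 V, h ∈ (G.deleteEdges {g}).edgeSet ∧
      ((G.deleteEdges {g}).deleteEdges {h}).chromaticNumber = 2 := by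
  have hlt : esChi (G.deleteEdges {g}) < 2 := by
    have := hcrit g hg
    rwa [hes] at this
  obtain ⟨F, hFsub, hFcard, hFeq⟩ := esChi_attained hH3 he0
  have hc2 : F.card < 2 := by rw [hFcard]; exact hlt
  rcases (by omega : F.card = 0 ∨ F.card = 1) with h0 | h1
  · exfalso
    have hF0 : F = ∅ := Finset.card_eq_zero.mp h0
    rw [hF0] at hFeq
    simp only [Finset.coe_empty, SimpleGraph.deleteEdges_empty] at hFeq
    rw [hH3] at hFeq
    norm_num at hFeq
  · obtain ⟨h, rfl⟩ := Finset.card_eq_one.mp h1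
    refine ⟨h, ?_, ?_⟩
    · apply hFsub
      simp
    · have : ((G.deleteEdges {g}).deleteEdges ↑({h} : Finset (Sym2 V))).chromaticNumber + 1
        = 3 := by rw [hFeq, hH3]
      rw [Finset.coe_singleton] at this
      have h22 : ((G.deleteEdges {g}).deleteEdges {h}).chromaticNumber + 1 = 2 + 1 := by
        rw [this]; norm_num
      exact WithTop.add_right_cancel (by exact WithTop.one_ne_top) h22



private lemma no_triple [Fintype V] {G : SimpleGraph V} (hG3 : G.chromaticNumber = 3)
    (hes : esChi G = 2)
    {x1 x2 x3 : V} {w1 : G.Walk x1 x1} {w2 : G.Walk x2 x2} {w3 : G.Walk x3 x3}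
    (hc1 : w1.IsCycle)
    (hall : ∀ ⦃y : V⦄ (c : G.Walk y y), c.IsCycle → Odd c.length →
      {e : Sym2 V | e ∈ c.edges} = {e | e ∈ w1.edges} ∨
      {e : Sym2 V | e ∈ c.edges} = {e | e ∈ w2.edges} ∨
      {e : Sym2 V | e ∈ c.edges} = {e | e ∈ w3.edges})
    {h : Sym2 V} (h1 : h ∈ w1.edges) (h2 : h ∈ w2.edges) (h3 : h ∈ w3.edges) : False := by
  have hhG : h ∈ G.edgeSet := w1.edges_subset_edgeSet h1
  have hcol : (G.deleteEdges {h}).Colorable 2 := by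
    apply colorable_two_of_no_odd_cycle
    intro y c hc hoo
    have htrans : ∀ e ∈ c.edges, e ∈ G.edgeSet := fun e he =>
      SimpleGraph.edgeSet_mono (SimpleGraph.deleteEdges_le _) (c.edges_subset_edgeSet he)
    set c' := c.transfer G htrans with hc'def
    have hc' : c'.IsCycle := hc.transfer _
    have ho' : Odd c'.length := by rw [hc'def, SimpleGraph.Walk.length_transfer]; exact hoo
    have hmem : h ∈ c'.edges := by
      rcases hall c' hc' ho' with he | he | he
      · have : h ∈ {e : Sym2 V | e ∈ w1.edges} := h1
        rw [← he] at this; exact this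
      · have : h ∈ {e : Sym2 V | e ∈ w2.edges} := h2
        rw [← he] at this; exact this
      · have : h ∈ {e : Sym2 V | e ∈ w3.edges} := h3
        rw [← he] at this; exact this
    rw [hc'def, SimpleGraph.Walk.edges_transfer] at hmem
    have := c.edges_subset_edgeSet hmem
    rw [SimpleGraph.edgeSet_deleteEdges] at this
    simp at this
  have hne2 : 2 ≤ w1.edges.length := by
    rw [SimpleGraph.Walk.length_edges]
    have := hc1.three_le_length
    omega
  obtain ⟨e0, he0l, he0ne⟩ := list_exists_ne hc1.edges_nodup hne2 h
  have he0 : e0 ∈ (G.deleteEdges {h}).edgeSet := by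
    rw [SimpleGraph.edgeSet_deleteEdges]
    exact ⟨w1.edges_subset_edgeSet he0l, by simpa using he0ne⟩
  have hchrom := chromaticNumber_eq_two hcol he0
  have hle : esChi G ≤ 1 := by
    apply Nat.sInf_le
    refine ⟨{h}, by simpa using hhG, by simp, ?_⟩
    rw [Finset.coe_singleton, hchrom, hG3]
    norm_num
  omega

private lemma final [Fintype V] {G : SimpleGraph V}
    (hcrit : EdgeStabilityCritical G) (hG3 : G.chromaticNumber = 3) (hes : esChi G = 2)
    {x1 x2 x3 : V} {w1 : G.Walk x1 x1} {w2 : G.Walk x2 x2} {w3 : G.Walk x3 x3}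
    (hc2 : w2.IsCycle) (ho2 : Odd w2.length)
    (hc3 : w3.IsCycle) (ho3 : Odd w3.length)
    (hd31 : ∀ e ∈ w3.edges, e ∉ w1.edges) (hd32 : ∀ e ∈ w3.edges, e ∉ w2.edges)
    {g : Sym2 V} (hg1 : g ∈ w1.edges) (hg2 : g ∉ w2.edges) : False := by
  have hgG : g ∈ G.edgeSet := w1.edges_subset_edgeSet hg1
  have hg3 : g ∉ w3.edges := fun hmem => hd31 g hmem hg1
  have hw2mem : ∀ e ∈ w2.edges, e ∈ (G.deleteEdges {g}).edgeSet := by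
    intro e he
    rw [SimpleGraph.edgeSet_deleteEdges]
    refine ⟨w2.edges_subset_edgeSet he, ?_⟩
    simp only [Set.mem_singleton_iff]
    rintro rfl
    exact hg2 he
  have hH3 : (G.deleteEdges {g}).chromaticNumber = 3 :=
    chromaticNumber_eq_three_of_le (SimpleGraph.deleteEdges_le _) hG3
      (w2.transfer (G.deleteEdges {g}) hw2mem)
      (by rw [SimpleGraph.Walk.length_transfer]; exact ho2)
  have hw2ne : w2.edges ≠ [] := by
    intro hnil
    have h3 := hc2.three_le_length
    rw [← SimpleGraph.Walk.length_edges, hnil] at h3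
    simp at h3
  obtain ⟨e0, he0l⟩ := List.exists_mem_of_ne_nil _ hw2ne
  obtain ⟨h, hhH, hchrom2⟩ := crit_single_edge hcrit hes hgG hH3 (hw2mem e0 he0l)
  have hcov : ∀ {y : V} (w : G.Walk y y), w.IsCycle → Odd w.length → g ∉ w.edges →
      h ∈ w.edges := by
    intro y w hc ho hgw
    by_contra hh
    have hmem : ∀ e ∈ w.edges, e ∈ ((G.deleteEdges {g}).deleteEdges {h}).edgeSet := by
      intro e he
      rw [SimpleGraph.edgeSet_deleteEdges, SimpleGraph.edgeSet_deleteEdges]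
      refine ⟨⟨w.edges_subset_edgeSet he, ?_⟩, ?_⟩ <;> simp only [Set.mem_singleton_iff]
      · rintro rfl; exact hgw he
      · rintro rfl; exact hh he
    have h3le : 3 ≤ ((G.deleteEdges {g}).deleteEdges {h}).chromaticNumber :=
      SimpleGraph.Walk.three_le_chromaticNumber_of_odd_loop (w.transfer _ hmem)
        (by rw [SimpleGraph.Walk.length_transfer]; exact ho)
    rw [hchrom2] at h3le
    norm_num at h3le
  exact hd32 h (hcov w3 hc3 ho3 hg3) (hcov w2 hc2 ho2 hg2)

private lemma exists_disjoint [Fintype V] {G : SimpleGraph V} (hG3 : G.chromaticNumber = 3)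
    (hes : esChi G = 2)
    {x1 x2 x3 : V} {w1 : G.Walk x1 x1} {w2 : G.Walk x2 x2} {w3 : G.Walk x3 x3}
    (hc1 : w1.IsCycle) (ho1 : Odd w1.length)
    (hc2 : w2.IsCycle) (ho2 : Odd w2.length)
    (hc3 : w3.IsCycle) (ho3 : Odd w3.length)
    (hall : ∀ ⦃y : V⦄ (c : G.Walk y y), c.IsCycle → Odd c.length →
      {e : Sym2 V | e ∈ c.edges} = {e | e ∈ w1.edges} ∨
      {e : Sym2 V | e ∈ c.edges} = {e | e ∈ w2.edges} ∨
      {e : Sym2 V | e ∈ c.edges} = {e | e ∈ w3.edges}) :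
    (∀ e ∈ w1.edges, e ∉ w2.edges ∧ e ∉ w3.edges) ∨
    (∀ e ∈ w2.edges, e ∉ w1.edges ∧ e ∉ w3.edges) ∨
    (∀ e ∈ w3.edges, e ∉ w1.edges ∧ e ∉ w2.edges) := by
  classical
  set F1 := w1.edges.toFinset with hF1
  set F2 := w2.edges.toFinset with hF2
  set F3 := w3.edges.toFinset with hF3
  have hno3 : ∀ e : Sym2 V, ¬(e ∈ F1 ∧ e ∈ F2 ∧ e ∈ F3) := by
    rintro e ⟨a1, a2, a3⟩
    exact no_triple hG3 hes hc1 hall (List.mem_toFinset.mp a1) (List.mem_toFinset.mp a2)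
      (List.mem_toFinset.mp a3)
  set cnt : Sym2 V → ℕ := fun e =>
    (if e ∈ F1 then 1 else 0) + (if e ∈ F2 then 1 else 0) + (if e ∈ F3 then 1 else 0) with hcnt
  set Tf := (F1 ∪ F2 ∪ F3).filter (fun e => cnt e = 1) with hTf
  have hTfG : ∀ e ∈ Tf, e ∈ G.edgeSet := by
    intro e he
    rw [hTf, Finset.mem_filter] at he
    rcases Finset.mem_union.mp he.1 with h' | h'
    · rcases Finset.mem_union.mp h' with h'' | h''
      · exact w1.edges_subset_edgeSet (List.mem_toFinset.mp h'')
      · exact w2.edges_subset_edgeSet (List.mem_toFinset.mp h'')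
    · exact w3.edges_subset_edgeSet (List.mem_toFinset.mp h')
  set K := SimpleGraph.fromEdgeSet (↑Tf : Set (Sym2 V)) with hK
  have hKedge : K.edgeSet = ↑Tf := by
    rw [hK, SimpleGraph.edgeSet_fromEdgeSet]
    ext e
    constructor
    · rintro ⟨he, -⟩; exact he
    · intro he
      exact ⟨he, fun hdiag =>
        G.not_isDiag_of_mem_edgeSet (hTfG e (Finset.mem_coe.mp he)) hdiag⟩
  -- cardinalities
  have hF1card : F1.card = w1.length := by
    rw [hF1, List.toFinset_card_of_nodup hc1.edges_nodup, SimpleGraph.Walk.length_edges]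
  have hF2card : F2.card = w2.length := by
    rw [hF2, List.toFinset_card_of_nodup hc2.edges_nodup, SimpleGraph.Walk.length_edges]
  have hF3card : F3.card = w3.length := by
    rw [hF3, List.toFinset_card_of_nodup hc3.edges_nodup, SimpleGraph.Walk.length_edges]
  have hglobal := parity_lemma F1 F2 F3 Tf hno3 (fun e => by
    rw [hTf, Finset.mem_filter, hcnt])
  have hTodd : ¬ Even Tf.card := by
    intro hev
    obtain ⟨k, hk⟩ := hglobal
    obtain ⟨t, ht⟩ := hev
    obtain ⟨m1, hm1⟩ := ho1
    obtain ⟨m2, hm2⟩ := ho2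
    obtain ⟨m3, hm3⟩ := ho3
    omega
  -- K is not 2-colorable
  have hKnc : ¬ K.Colorable 2 := by
    intro hcol
    obtain ⟨c0⟩ := hcol
    set cb : K.Coloring Bool := (SimpleGraph.recolorOfEquiv K finTwoEquiv) c0 with hcb
    set A := Finset.univ.filter (fun v : V => cb v = true) with hA
    have hloc : ∀ v : V, Even ((Tf.filter (fun e => v ∈ e)).card) := by
      intro v
      have hno3' : ∀ e : Sym2 V, ¬(e ∈ F1.filter (fun e => v ∈ e) ∧
          e ∈ F2.filter (fun e => v ∈ e) ∧ e ∈ F3.filter (fun e => v ∈ e)) := by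
        rintro e ⟨a1, a2, a3⟩
        exact hno3 e ⟨(Finset.mem_filter.mp a1).1, (Finset.mem_filter.mp a2).1,
          (Finset.mem_filter.mp a3).1⟩
      have hS' : ∀ e : Sym2 V, e ∈ Tf.filter (fun e => v ∈ e) ↔
          e ∈ F1.filter (fun e => v ∈ e) ∪ F2.filter (fun e => v ∈ e)
            ∪ F3.filter (fun e => v ∈ e) ∧
          ((if e ∈ F1.filter (fun e => v ∈ e) then 1 else 0)
            + (if e ∈ F2.filter (fun e => v ∈ e) then 1 else 0)
            + (if e ∈ F3.filter (fun e => v ∈ e) then 1 else 0) = 1) := by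
        intro e
        by_cases hve : v ∈ e
        · simp only [Finset.mem_filter, Finset.mem_union, hTf, hcnt, hve, and_true]
        · simp only [Finset.mem_filter, Finset.mem_union, hve, and_false]
          simp
      obtain ⟨k, hk⟩ := parity_lemma _ _ _ _ hno3' hS'
      have he1 : Even ((F1.filter (fun e => v ∈ e)).card) := cycle_incidence_even hc1 v
      have he2 : Even ((F2.filter (fun e => v ∈ e)).card) := cycle_incidence_even hc2 v
      have he3 : Even ((F3.filter (fun e => v ∈ e)).card) := cycle_incidence_even hc3 v
      obtain ⟨a1, ha1⟩ := he1
      obtain ⟨a2, ha2⟩ := he2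
      obtain ⟨a3, ha3⟩ := he3
      refine ⟨(a1 + a2 + a3) - k, ?_⟩
      omega
    have hglob : Tf.card = ∑ v ∈ A, (Tf.filter (fun e => v ∈ e)).card := by
      have hstep : ∑ v ∈ A, (Tf.filter (fun e => v ∈ e)).card
          = ∑ v ∈ A, ∑ e ∈ Tf, (if v ∈ e then 1 else 0) := by
        apply Finset.sum_congr rfl
        intro v _
        rw [Finset.card_filter]
      rw [hstep, Finset.sum_comm]
      have hone : ∀ e ∈ Tf, (∑ v ∈ A, if v ∈ e then 1 else 0) = 1 := by
        intro e he
        have heK : e ∈ K.edgeSet := by rw [hKedge]; exact Finset.mem_coe.mpr he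
        induction e with
        | _ a b =>
          have hadj : K.Adj a b := (SimpleGraph.mem_edgeSet K).mp heK
          have hne : a ≠ b := hadj.ne
          have hcbne : cb a ≠ cb b := cb.valid hadj
          rw [← Finset.card_filter]
          cases hca : cb a
          · have hcbb : cb b = true := by
              cases hcb' : cb b
              · exact absurd (hca.trans hcb'.symm) hcbne
              · rfl
            have hfilt : A.filter (fun v => v ∈ s(a, b)) = {b} := by
              ext v
              simp only [hA, Finset.mem_filter, Finset.mem_univ, true_and,
                Sym2.mem_iff, Finset.mem_singleton]
              constructor
              · rintro ⟨hv, rfl | rfl⟩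
                · rw [hca] at hv; exact absurd hv (by simp)
                · rfl
              · rintro rfl
                exact ⟨hcbb, Or.inr rfl⟩
            rw [hfilt]
            simp
          · have hcbb : cb b = false := by
              cases hcb' : cb b
              · rfl
              · exact absurd (hca.trans hcb'.symm) hcbne
            have hfilt : A.filter (fun v => v ∈ s(a, b)) = {a} := by
              ext v
              simp only [hA, Finset.mem_filter, Finset.mem_univ, true_and,
                Sym2.mem_iff, Finset.mem_singleton]
              constructor
              · rintro ⟨hv, rfl | rfl⟩
                · rfl
                · rw [hcbb] at hv; exact absurd hv (by simp)
              · rintro rfl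
                exact ⟨hca, Or.inl rfl⟩
            rw [hfilt]
            simp
      rw [Finset.sum_congr rfl hone]
      simp
    apply hTodd
    rw [hglob]
    apply Finset.even_sum
    intro v _
    exact hloc v
  -- extract an odd cycle of K
  have hocw : ∃ (y : V) (c : K.Walk y y), c.IsCycle ∧ Odd c.length := by
    by_contra hno
    push_neg at hno
    exact hKnc (colorable_two_of_no_odd_cycle (fun y c hc ho => hno y c hc ho))
  obtain ⟨y, c, hcK, hoK⟩ := hocw
  have htransK : ∀ e ∈ c.edges, e ∈ G.edgeSet := by
    intro e he
    apply hTfG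
    have := c.edges_subset_edgeSet he
    rw [hKedge] at this
    exact Finset.mem_coe.mp this
  set cG := c.transfer G htransK with hcGdef
  have hcG : cG.IsCycle := hcK.transfer _
  have hoG : Odd cG.length := by rw [hcGdef, SimpleGraph.Walk.length_transfer]; exact hoK
  have hedgesT : ∀ e ∈ cG.edges, e ∈ Tf := by
    intro e he
    rw [hcGdef, SimpleGraph.Walk.edges_transfer] at he
    have := c.edges_subset_edgeSet he
    rw [hKedge] at this
    exact Finset.mem_coe.mp this
  have hkey : ∀ {xi : V} {wi : G.Walk xi xi},
      {e : Sym2 V | e ∈ cG.edges} = {e | e ∈ wi.edges} →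
      (∀ e ∈ wi.edges, e ∈ Tf) := by
    intro xi wi hE e he
    apply hedgesT
    have : e ∈ {e : Sym2 V | e ∈ wi.edges} := he
    rw [← hE] at this
    exact this
  have hfromT : ∀ e ∈ Tf, (e ∈ F1 → e ∉ F2 ∧ e ∉ F3) ∧ (e ∈ F2 → e ∉ F1 ∧ e ∉ F3)
      ∧ (e ∈ F3 → e ∉ F1 ∧ e ∉ F2) := by
    intro e he
    rw [hTf, Finset.mem_filter] at he
    have hcnt1 := he.2
    simp only [hcnt] at hcnt1
    constructor
    · intro hh1
      constructor <;> intro hh' <;> simp [hh1, hh'] at hcnt1 <;> split_ifs at hcnt1 <;> omega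
    constructor
    · intro hh2
      constructor <;> intro hh' <;> simp [hh2, hh'] at hcnt1 <;> split_ifs at hcnt1 <;> omega
    · intro hh3
      constructor <;> intro hh' <;> simp [hh3, hh'] at hcnt1 <;> split_ifs at hcnt1 <;> omega
  rcases hall cG hcG hoG with hE | hE | hE
  · left
    intro e he
    have heT := hkey hE e he
    have h1 : e ∈ F1 := List.mem_toFinset.mpr he
    have := ((hfromT e heT).1 h1)
    exact ⟨fun hc' => this.1 (List.mem_toFinset.mpr hc'),
      fun hc' => this.2 (List.mem_toFinset.mpr hc')⟩
  · right; left
    intro e he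
    have heT := hkey hE e he
    have h2 : e ∈ F2 := List.mem_toFinset.mpr he
    have := ((hfromT e heT).2.1 h2)
    exact ⟨fun hc' => this.1 (List.mem_toFinset.mpr hc'),
      fun hc' => this.2 (List.mem_toFinset.mpr hc')⟩
  · right; right
    intro e he
    have heT := hkey hE e he
    have h3 : e ∈ F3 := List.mem_toFinset.mpr he
    have := ((hfromT e heT).2.2 h3)
    exact ⟨fun hc' => this.1 (List.mem_toFinset.mpr hc'),
      fun hc' => this.2 (List.mem_toFinset.mpr hc')⟩


end ThreeOddAux

/-- Theorem 2.4: there are no `(3,2)`-critical graphs containing exactly three odd cycles. -/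
theorem no_three_odd_cycles {V : Type} [Fintype V] (G : SimpleGraph V)
    (hcyc : {H : G.Subgraph | IsOddCycleSubgraph G H}.ncard = 3) :
    ¬ IsKLCritical G 3 2 := by
  rintro ⟨hcrit, hG3', hes⟩
  have hG3 : G.chromaticNumber = 3 := by exact_mod_cast hG3'
  rw [Set.ncard_eq_three] at hcyc
  obtain ⟨A, B, C, hAB, hAC, hBC, hset⟩ := hcyc
  have hmA : IsOddCycleSubgraph G A := by
    have : A ∈ {H : G.Subgraph | IsOddCycleSubgraph G H} := by rw [hset]; simp
    exact this
  have hmB : IsOddCycleSubgraph G B := by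
    have : B ∈ {H : G.Subgraph | IsOddCycleSubgraph G H} := by rw [hset]; simp
    exact this
  have hmC : IsOddCycleSubgraph G C := by
    have : C ∈ {H : G.Subgraph | IsOddCycleSubgraph G H} := by rw [hset]; simp
    exact this
  obtain ⟨xa, wa, hca, hoa, hta⟩ := hmA
  obtain ⟨xb, wb, hcb, hob, htb⟩ := hmB
  obtain ⟨xc, wc, hcc, hoc, htc⟩ := hmC
  have hall : ∀ ⦃y : V⦄ (c : G.Walk y y), c.IsCycle → Odd c.length →
      {e : Sym2 V | e ∈ c.edges} = {e | e ∈ wa.edges} ∨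
      {e : Sym2 V | e ∈ c.edges} = {e | e ∈ wb.edges} ∨
      {e : Sym2 V | e ∈ c.edges} = {e | e ∈ wc.edges} := by
    intro y c hc ho
    have hmem : c.toSubgraph ∈ {H : G.Subgraph | IsOddCycleSubgraph G H} := ⟨y, c, hc, ho, rfl⟩
    rw [hset] at hmem
    simp only [Set.mem_insert_iff, Set.mem_singleton_iff] at hmem
    rcases hmem with h | h | h
    · left
      show c.edgeSet = wa.edgeSet
      rw [← SimpleGraph.Walk.edgeSet_toSubgraph, ← SimpleGraph.Walk.edgeSet_toSubgraph, h, ← hta]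
    · right; left
      show c.edgeSet = wb.edgeSet
      rw [← SimpleGraph.Walk.edgeSet_toSubgraph, ← SimpleGraph.Walk.edgeSet_toSubgraph, h, ← htb]
    · right; right
      show c.edgeSet = wc.edgeSet
      rw [← SimpleGraph.Walk.edgeSet_toSubgraph, ← SimpleGraph.Walk.edgeSet_toSubgraph, h, ← htc]
  have hEab : {e : Sym2 V | e ∈ wa.edges} ≠ {e | e ∈ wb.edges} := by
    intro hEq
    exact hAB (by rw [← hta, ← htb]; exact ThreeOddAux.toSubgraph_eq_of_edges_eq hca.not_nil hcb.not_nil hEq)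
  have hEac : {e : Sym2 V | e ∈ wa.edges} ≠ {e | e ∈ wc.edges} := by
    intro hEq
    exact hAC (by rw [← hta, ← htc]; exact ThreeOddAux.toSubgraph_eq_of_edges_eq hca.not_nil hcc.not_nil hEq)
  have hEbc : {e : Sym2 V | e ∈ wb.edges} ≠ {e | e ∈ wc.edges} := by
    intro hEq
    exact hBC (by rw [← htb, ← htc]; exact ThreeOddAux.toSubgraph_eq_of_edges_eq hcb.not_nil hcc.not_nil hEq)
  have hsplit : ∀ {x y : V} (p : G.Walk x x) (q : G.Walk y y),
      {e : Sym2 V | e ∈ p.edges} ≠ {e | e ∈ q.edges} →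
      (∃ e, e ∈ p.edges ∧ e ∉ q.edges) ∨ (∃ e, e ∈ q.edges ∧ e ∉ p.edges) := by
    intro _ _ p q hne
    by_contra hcon
    push_neg at hcon
    obtain ⟨hpq, hqp⟩ := hcon
    apply hne
    ext e
    exact ⟨fun he => hpq e he, fun he => hqp e he⟩
  rcases ThreeOddAux.exists_disjoint hG3 hes hca hoa hcb hob hcc hoc hall with hD | hD | hD
  · rcases hsplit wb wc hEbc with ⟨g, hg1, hg2⟩ | ⟨g, hg1, hg2⟩
    · exact ThreeOddAux.final hcrit hG3 hes hcc hoc hca hoa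
        (fun e he => (hD e he).1) (fun e he => (hD e he).2) hg1 hg2
    · exact ThreeOddAux.final hcrit hG3 hes hcb hob hca hoa
        (fun e he => (hD e he).2) (fun e he => (hD e he).1) hg1 hg2
  · rcases hsplit wa wc hEac with ⟨g, hg1, hg2⟩ | ⟨g, hg1, hg2⟩
    · exact ThreeOddAux.final hcrit hG3 hes hcc hoc hcb hob
        (fun e he => (hD e he).1) (fun e he => (hD e he).2) hg1 hg2
    · exact ThreeOddAux.final hcrit hG3 hes hca hoa hcb hob
        (fun e he => (hD e he).2) (fun e he => (hD e he).1) hg1 hg2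
  · rcases hsplit wa wb hEab with ⟨g, hg1, hg2⟩ | ⟨g, hg1, hg2⟩
    · exact ThreeOddAux.final hcrit hG3 hes hcb hob hcc hoc
        (fun e he => (hD e he).1) (fun e he => (hD e he).2) hg1 hg2
    · exact ThreeOddAux.final hcrit hG3 hes hca hoa hcc hoc
        (fun e he => (hD e he).2) (fun e he => (hD e he).1) hg1 hg2
end

section
/- If $G$ is a $(3,2)$-critical graph that contains at least three odd cycles, then there exist two odd cycles of $G$ whose intersection is a path with at least one edge. -/
open SimpleGraph

section AuxLemmas

open SimpleGraph Walk

variable {V : Type} {G : SimpleGraph V}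

lemma edge_start {a y b : V} (p : G.Walk a y) (hp : p.IsPath)
    (h : s(a,b) ∈ p.edges) : ∃ (hadj : G.Adj a b) (t : G.Walk b y), p = Walk.cons hadj t := by
  cases p with
  | nil => simp at h
  | cons h' t =>
    rw [Walk.edges_cons, List.mem_cons] at h
    rcases h with h | h
    · rw [Sym2.eq_iff] at h
      rcases h with ⟨-, rfl⟩ | ⟨rfl, rfl⟩
      · exact ⟨h', t, rfl⟩
      · exact absurd rfl h'.ne
    · exact absurd (Walk.fst_mem_support_of_mem_edges t h) ((Walk.cons_isPath_iff h' t).mp hp).2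

lemma scan {a b : V} (p2 : G.Walk a b) :
    ∀ {c : V} (r : G.Walk c b), r.IsPath → c ∉ p2.support →
    ∃ (v : V) (mid : G.Walk c v), v ∈ p2.support ∧ mid.IsPath ∧
      (∀ e' ∈ mid.edges, e' ∈ r.edges) ∧
      (∀ x ∈ mid.support, x ∈ p2.support → x = v) ∧
      (∀ x ∈ mid.support, x ∈ r.support) ∧ ¬ mid.Nil := by
  intro c r
  induction r with
  | nil =>
    intro _ hc
    exact absurd (Walk.end_mem_support p2) (by simpa using hc)
  | @cons c d b h r' ih =>
    intro hp hc
    by_cases hd : d ∈ p2.support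
    · refine ⟨d, Walk.cons h Walk.nil, hd, ?_, ?_, ?_, ?_, by simp⟩
      · simp [Walk.isPath_def, h.ne]
      · simp
      · intro x hx
        simp only [Walk.support_cons, Walk.support_nil, List.mem_cons, List.mem_singleton] at hx
        rcases hx with rfl | rfl | h'
        · exact fun hx' => absurd hx' hc
        · exact fun _ => rfl
        · simp at h'
      · intro x hx
        simp only [Walk.support_cons, Walk.support_nil, List.mem_cons, List.mem_singleton] at hx
        rcases hx with rfl | rfl | h'
        · simp
        · simp
        · simp at h'
    · obtain ⟨v, mid', hv, hmp, hme, hmint, hms, hmn⟩ :=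
        ih p2 ((Walk.cons_isPath_iff h r').mp hp).1 hd
      refine ⟨v, Walk.cons h mid', hv, ?_, ?_, ?_, ?_, by simp⟩
      · rw [Walk.cons_isPath_iff]
        refine ⟨hmp, fun hcs => ?_⟩
        exact ((Walk.cons_isPath_iff h r').mp hp).2 (hms c hcs)
      · intro e' he'
        rw [Walk.edges_cons, List.mem_cons] at he' ⊢
        exact he'.imp id (hme e')
      · intro x hx
        rw [Walk.support_cons, List.mem_cons] at hx
        rcases hx with rfl | hx
        · exact fun hx' => absurd hx' hc
        · exact hmint x hx
      · intro x hx
        rw [Walk.support_cons, List.mem_cons] at hx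
        rw [Walk.support_cons, List.mem_cons]
        exact hx.imp id (hms x)

lemma cycle_split {u a b : V} (hadj : G.Adj a b)
    (w : G.Walk u u) (hw : w.IsCycle) (he : s(a,b) ∈ w.edges) :
    ∃ p : G.Walk a b, p.IsPath ∧ s(a,b) ∉ p.edges ∧
      (Walk.cons hadj.symm p).toSubgraph = w.toSubgraph ∧
      (Walk.cons hadj.symm p).length = w.length := by
  classical
  have ha : a ∈ w.support := Walk.fst_mem_support_of_mem_edges w he
  set w' : G.Walk a a := w.rotate a ha with hw'def
  have hw' : w'.IsCycle := hw.rotate ha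
  have he' : s(a,b) ∈ w'.edges := (Walk.rotate_edges w a ha).mem_iff.mpr he
  have hTS : w'.toSubgraph = w.toSubgraph := Walk.toSubgraph_rotate w ha
  have hLen : w'.length = w.length := by
    rw [← Walk.length_edges, ← Walk.length_edges]
    exact (Walk.rotate_edges w a ha).perm.length_eq
  clear_value w'
  clear hw'def he ha
  cases w' with
  | nil => simp at he'
  | @cons _ d _ h' t =>
    rw [Walk.edges_cons, List.mem_cons] at he'
    have htrail : t.edges.Nodup := by
      have := hw'.edges_nodup
      rw [Walk.edges_cons] at this
      exact this.of_cons
    have hfst : s(a,d) ∉ t.edges := by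
      have := hw'.edges_nodup
      rw [Walk.edges_cons] at this
      exact (List.nodup_cons.mp this).1
    have htp : t.IsPath := by
      rw [Walk.isPath_def]
      exact hw'.support_nodup
    rcases he' with h0 | h0
    · -- first edge is a-b, so d = b
      rw [Sym2.eq_iff] at h0
      rcases h0 with ⟨-, rfl⟩ | ⟨h1, -⟩
      · -- d = b, t : Walk b a
        refine ⟨t.reverse, htp.reverse, ?_, ?_, ?_⟩
        · rw [Walk.edges_reverse, List.mem_reverse]
          exact hfst
        · rw [← hTS]
          simp only [Walk.toSubgraph, Walk.toSubgraph_reverse]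
          exact congrArg (· ⊔ t.toSubgraph) (subgraphOfAdj_symm h')
        · simp [← hLen]
      · exact absurd h1 h'.ne
    · -- edge s(a,b) in tail t
      have hab' : s(a,b) ∈ t.reverse.edges := by rwa [Walk.edges_reverse, List.mem_reverse]
      obtain ⟨hadj2, t2, heq⟩ := edge_start t.reverse htp.reverse hab'
      -- t.reverse = cons hadj2 t2,  t2 : Walk b d
      have hdb : d ≠ b := by
        rintro rfl
        exact hfst h0
      have hrevpath : t.reverse.IsPath := htp.reverse
      rw [heq, Walk.cons_isPath_iff] at hrevpath
      have hrevnodup : t.reverse.edges.Nodup := by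
        rw [Walk.edges_reverse]
        exact List.nodup_reverse.mpr htrail
      have habt2 : s(a,b) ∉ t2.edges := by
        rw [heq, Walk.edges_cons] at hrevnodup
        exact (List.nodup_cons.mp hrevnodup).1
      refine ⟨Walk.cons h' t2.reverse, ?_, ?_, ?_, ?_⟩
      · rw [Walk.cons_isPath_iff]
        refine ⟨hrevpath.1.reverse, ?_⟩
        rw [Walk.support_reverse, List.mem_reverse]
        exact hrevpath.2
      · rw [Walk.edges_cons, List.mem_cons]
        rintro (hbad | hbad)
        · rw [Sym2.eq_iff] at hbad
          rcases hbad with ⟨-, h1⟩ | ⟨h1, -⟩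
          · exact hdb h1.symm
          · exact h'.ne h1
        · rw [Walk.edges_reverse, List.mem_reverse] at hbad
          exact habt2 hbad
      · rw [← hTS]
        have ht : t.toSubgraph = G.subgraphOfAdj hadj2 ⊔ t2.toSubgraph := by
          rw [← Walk.toSubgraph_reverse t, heq]
          rfl
        simp only [Walk.toSubgraph, Walk.toSubgraph_reverse, ht]
        rw [← sup_assoc, ← sup_assoc]
        congr 1
        rw [sup_comm]
        congr 1
        exact subgraphOfAdj_symm hadj2
      · rw [← hLen]
        have ht : t.length = t2.length + 1 := by
          rw [← Walk.length_reverse t, heq, Walk.length_cons]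
        simp [ht]

/-- The conclusion of the core surgery lemma. -/
def CoreConc {a b : V} (p1 p2 : G.Walk a b) : Prop :=
  ∃ (p3 : G.Walk a b) (x v : V) (pre : G.Walk a x) (suf : G.Walk v b),
    p3.IsPath ∧
    (∀ e' ∈ p3.edges, e' ∈ p1.edges ∨ e' ∈ p2.edges) ∧
    (∀ y ∈ p3.support, y ∈ p1.support ∨ y ∈ p2.support) ∧
    (∃ e0 ∈ p3.edges, e0 ∉ p2.edges) ∧
    pre.IsPath ∧ suf.IsPath ∧
    (∀ y ∈ pre.support, y ∉ suf.support) ∧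
    (∀ y ∈ pre.support, y ∈ p2.support) ∧ (∀ y ∈ suf.support, y ∈ p2.support) ∧
    p3.toSubgraph ⊓ p2.toSubgraph = pre.toSubgraph ⊔ suf.toSubgraph

lemma core : ∀ {a b : V} (p1 p2 : G.Walk a b), p1.IsPath → p2.IsPath → p1 ≠ p2 →
    CoreConc p1 p2 := by
  classical
  intro a b p1
  induction p1 with
  | nil =>
    intro p2 _ h2 hne
    cases p2 with
    | nil => exact absurd rfl hne
    | cons h2' t2 =>
      exact absurd (Walk.end_mem_support t2) ((Walk.cons_isPath_iff h2' t2).mp h2).2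
  | @cons a c1 b h1 t1 ih =>
    intro p2 hp1 hp2 hne
    have ht1p : t1.IsPath := ((Walk.cons_isPath_iff h1 t1).mp hp1).1
    have hat1 : a ∉ t1.support := ((Walk.cons_isPath_iff h1 t1).mp hp1).2
    cases p2 with
    | nil => exact absurd (Walk.end_mem_support t1) hat1
    | @cons _ c2 _ h2 t2 =>
      have ht2p : t2.IsPath := ((Walk.cons_isPath_iff h2 t2).mp hp2).1
      have hat2 : a ∉ t2.support := ((Walk.cons_isPath_iff h2 t2).mp hp2).2
      by_cases hc : c1 = c2
      · -- common first step: recurse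
        subst hc
        have ht12 : t1 ≠ t2 := by rintro rfl; exact hne rfl
        obtain ⟨p3', x, v, pre', suf', A1, A2, A3, A4, A5, A6, A7, A8, A9, A10⟩ :=
          ih t2 ht1p ht2p ht12
        refine ⟨Walk.cons h1 p3', x, v, Walk.cons h1 pre', suf', ?_, ?_, ?_, ?_, ?_, A6,
          ?_, ?_, ?_, ?_⟩
        · rw [Walk.cons_isPath_iff]
          refine ⟨A1, fun hmem => ?_⟩
          rcases A3 a hmem with h' | h'
          · exact hat1 h'
          · exact hat2 h'
        · intro e' he'
          rw [Walk.edges_cons, List.mem_cons] at he'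
          rcases he' with rfl | he'
          · left; simp
          · rcases A2 e' he' with h' | h'
            · left; rw [Walk.edges_cons]; exact List.mem_cons_of_mem _ h'
            · right; rw [Walk.edges_cons]; exact List.mem_cons_of_mem _ h'
        · intro y hy
          rw [Walk.support_cons, List.mem_cons] at hy
          rcases hy with rfl | hy
          · left; simp
          · rcases A3 y hy with h' | h'
            · left; rw [Walk.support_cons]; exact List.mem_cons_of_mem _ h'
            · right; rw [Walk.support_cons]; exact List.mem_cons_of_mem _ h'
        · obtain ⟨e0, he0, he0'⟩ := A4
          refine ⟨e0, by rw [Walk.edges_cons]; exact List.mem_cons_of_mem _ he0, ?_⟩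
          rw [Walk.edges_cons, List.mem_cons]
          rintro (rfl | hbad)
          · exact hat1 (A3 a (Walk.fst_mem_support_of_mem_edges p3' he0) |>.resolve_right hat2)
          · exact he0' hbad
        · rw [Walk.cons_isPath_iff]
          exact ⟨A5, fun hmem => hat2 (A8 a hmem)⟩
        · intro y hy
          rw [Walk.support_cons, List.mem_cons] at hy
          rcases hy with rfl | hy
          · exact fun hmem => hat2 (A9 y hmem)
          · exact A7 y hy
        · intro y hy
          rw [Walk.support_cons, List.mem_cons] at hy
          rw [Walk.support_cons, List.mem_cons]
          exact hy.imp id (A8 y)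
        · intro y hy
          rw [Walk.support_cons]
          exact List.mem_cons_of_mem _ (A9 y hy)
        · show (G.subgraphOfAdj h1 ⊔ p3'.toSubgraph) ⊓ (G.subgraphOfAdj h1 ⊔ t2.toSubgraph) = _
          rw [← sup_inf_left, A10]
          show _ = (G.subgraphOfAdj h1 ⊔ pre'.toSubgraph) ⊔ suf'.toSubgraph
          rw [sup_assoc]
      · -- divergence at a
        -- any edge of p2 containing a is the first edge
        have hmem_sup : ∀ (e' : Sym2 V) {q : V} {z : V} (t : G.Walk q z), e' ∈ t.edges →
            ∀ x ∈ e', x ∈ t.support := by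
          intro e' q z t he' x hx
          induction e' with
          | _ u v =>
            rw [Sym2.mem_iff] at hx
            rcases hx with rfl | rfl
            · exact Walk.fst_mem_support_of_mem_edges t he'
            · exact Walk.snd_mem_support_of_mem_edges t he'
        have hsnd : ∀ (e' : Sym2 V), e' ∈ (Walk.cons h2 t2).edges → a ∈ e' → e' = s(a, c2) := by
          intro e' he' hae'
          rw [Walk.edges_cons, List.mem_cons] at he'
          rcases he' with rfl | he'
          · rfl
          · exact absurd (hmem_sup e' t2 he' a hae') hat2
        have hfst1 : s(a, c1) ∉ (Walk.cons h2 t2).edges := by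
          intro hbad
          have := hsnd _ hbad (by simp)
          rw [Sym2.eq_iff] at this
          rcases this with ⟨-, h'⟩ | ⟨-, h'⟩
          · exact hc h'
          · exact h1.ne h'.symm
        -- produce v and mid
        have key : ∃ (v : V) (mid : G.Walk a v), v ∈ (Walk.cons h2 t2).support ∧ mid.IsPath ∧
            (∀ e' ∈ mid.edges, e' ∈ (Walk.cons h1 t1).edges) ∧
            (∀ x ∈ mid.support, x ∈ (Walk.cons h1 t1).support) ∧
            (∀ x ∈ mid.support, x ∈ (Walk.cons h2 t2).support → x = a ∨ x = v) ∧
            v ≠ a ∧ (∃ e0, e0 ∈ mid.edges) ∧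
            (∀ e' ∈ mid.edges, e' ∉ (Walk.cons h2 t2).edges) := by
          by_cases hd : c1 ∈ (Walk.cons h2 t2).support
          · refine ⟨c1, Walk.cons h1 Walk.nil, hd, by simp [Walk.isPath_def, h1.ne], ?_, ?_, ?_,
              h1.ne.symm, ⟨s(a,c1), by simp⟩, ?_⟩
            · intro e' he'
              simp only [Walk.edges_cons, Walk.edges_nil, List.mem_singleton] at he'
              simp [he']
            · intro x hx
              simp only [Walk.support_cons, Walk.support_nil, List.mem_cons,
                List.mem_singleton, List.not_mem_nil, or_false] at hx
              rcases hx with rfl | rfl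
              · simp
              · simp [Walk.start_mem_support]
            · intro x hx
              simp only [Walk.support_cons, Walk.support_nil, List.mem_cons,
                List.mem_singleton, List.not_mem_nil, or_false] at hx
              rcases hx with rfl | rfl
              · exact fun _ => Or.inl rfl
              · exact fun _ => Or.inr rfl
            · intro e' he'
              simp only [Walk.edges_cons, Walk.edges_nil, List.mem_singleton] at he'
              subst he'
              exact hfst1
          · obtain ⟨v, mid', hv, hmp, hme, hmint, hms, -⟩ := scan (Walk.cons h2 t2) t1 ht1p hd
            have hvne : v ≠ a := by
              rintro rfl
              exact hat1 (hms v (Walk.end_mem_support mid'))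
            refine ⟨v, Walk.cons h1 mid', hv, ?_, ?_, ?_, ?_, hvne, ⟨s(a,c1), by simp⟩, ?_⟩
            · rw [Walk.cons_isPath_iff]
              exact ⟨hmp, fun hmem => hat1 (hms a hmem)⟩
            · intro e' he'
              rw [Walk.edges_cons, List.mem_cons] at he' ⊢
              exact he'.imp id (hme e')
            · intro x hx
              rw [Walk.support_cons, List.mem_cons] at hx ⊢
              exact hx.imp id (hms x)
            · intro x hx
              rw [Walk.support_cons, List.mem_cons] at hx
              rcases hx with rfl | hx
              · exact fun _ => Or.inl rfl
              · exact fun hx' => Or.inr (hmint x hx hx')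
            · intro e' he' hbad
              rw [Walk.edges_cons, List.mem_cons] at he'
              rcases he' with rfl | he'
              · exact hfst1 hbad
              · -- e' in mid'.edges and in p2.edges: both endpoints in mid'.support ∩ p2.support
                induction e' with
                | _ x y =>
                  have hxs : x ∈ mid'.support := Walk.fst_mem_support_of_mem_edges mid' he'
                  have hys : y ∈ mid'.support := Walk.snd_mem_support_of_mem_edges mid' he'
                  have hx2 : x ∈ (Walk.cons h2 t2).support := hmem_sup _ _ hbad x (by simp)
                  have hy2 : y ∈ (Walk.cons h2 t2).support := hmem_sup _ _ hbad y (by simp)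
                  have hxv := hmint x hxs hx2
                  have hyv := hmint y hys hy2
                  have : G.Adj x y := G.mem_edgeSet.mp (mid'.edges_subset_edgeSet he')
                  rw [hxv, hyv] at this
                  exact this.ne rfl
        obtain ⟨v, mid, hv, hmidp, hmide, hmids, hmidint, hvne, ⟨e0, he0⟩, hmidd⟩ := key
        set p2 := Walk.cons h2 t2 with hp2def
        set pre2 := p2.takeUntil v hv with hpre2
        set suf := p2.dropUntil v hv with hsuf
        have hspec : pre2.append suf = p2 := Walk.take_spec p2 hv
        have hsufp : suf.IsPath := hp2.dropUntil hv
        have hp2supp : p2.support = pre2.support ++ suf.support.tail := by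
          rw [← hspec, Walk.support_append]
        have hp2nd : p2.support.Nodup := hp2.support_nodup
        have hasuf : a ∉ suf.support := by
          intro ha'
          have hav : a ≠ v := fun h' => hvne h'.symm
          have ha2 : a ∈ suf.support.tail := by
            have hse := Walk.support_eq_cons suf
            rw [hse, List.mem_cons] at ha'
            exact ha'.resolve_left hav
          have hapre : a ∈ pre2.support := Walk.start_mem_support pre2
          rw [hp2supp] at hp2nd
          exact (List.disjoint_of_nodup_append hp2nd) hapre ha2
        have hsufsub : ∀ y ∈ suf.support, y ∈ p2.support := fun y hy =>
          Walk.support_dropUntil_subset p2 hv hy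
        -- the new path p3
        refine ⟨mid.append suf, a, v, Walk.nil, suf, ?_, ?_, ?_, ⟨e0, ?_, hmidd e0 he0⟩,
          Walk.IsPath.nil, hsufp, ?_, by simp [Walk.start_mem_support], hsufsub, ?_⟩
        · -- IsPath of mid ++ suf
          rw [Walk.isPath_def, Walk.support_append, List.nodup_append]
          refine ⟨hmidp.support_nodup, hsufp.support_nodup.tail, ?_⟩
          intro y hy z hy' hyz
          subst hyz
          have hy2 : y ∈ suf.support := List.mem_of_mem_tail hy'
          rcases hmidint y hy (hsufsub y hy2) with rfl | rfl
          · exact hasuf hy2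
          · have hse := Walk.support_eq_cons suf
            rw [hse] at hy'
            exact (List.nodup_cons.mp (hse ▸ hsufp.support_nodup)).1 hy'
        · intro e' he'
          rw [Walk.edges_append, List.mem_append] at he'
          rcases he' with h' | h'
          · exact Or.inl (hmide e' h')
          · exact Or.inr (Walk.edges_dropUntil_subset p2 hv h')
        · intro y hy
          rw [Walk.support_append, List.mem_append] at hy
          rcases hy with h' | h'
          · exact Or.inl (hmids y h')
          · exact Or.inr (hsufsub y (List.mem_of_mem_tail h'))
        · rw [Walk.edges_append, List.mem_append]; exact Or.inl he0
        · intro y hy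
          simp only [Walk.support_nil, List.mem_singleton] at hy
          subst hy
          exact hasuf
        · -- the intersection computation
          have hsufle : suf.toSubgraph ≤ p2.toSubgraph := by
            rw [← hspec, Walk.toSubgraph_append]
            exact le_sup_right
          have hmidinf : mid.toSubgraph ⊓ p2.toSubgraph =
              G.singletonSubgraph a ⊔ G.singletonSubgraph v := by
            apply Subgraph.ext
            · ext y
              simp only [Subgraph.verts_inf, Set.mem_inter_iff, Walk.mem_verts_toSubgraph,
                Subgraph.verts_sup, singletonSubgraph_verts, Set.mem_union,
                Set.mem_singleton_iff]
              constructor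
              · rintro ⟨hy1, hy2⟩
                exact hmidint y hy1 hy2
              · rintro (rfl | rfl)
                · exact ⟨Walk.start_mem_support mid, Walk.start_mem_support p2⟩
                · exact ⟨Walk.end_mem_support mid, hv⟩
            · ext x y
              simp only [Subgraph.inf_adj, Subgraph.sup_adj, singletonSubgraph_adj,
                Pi.bot_apply, Prop.bot_eq_false, or_self, iff_false, not_and]
              intro hx1 hx2
              have hx1' : s(x,y) ∈ mid.edges :=
                (Walk.mem_edges_toSubgraph mid).mp (Subgraph.mem_edgeSet.mpr hx1)
              have hx2' : s(x,y) ∈ p2.edges :=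
                (Walk.mem_edges_toSubgraph p2).mp (Subgraph.mem_edgeSet.mpr hx2)
              exact hmidd _ hx1' hx2'
          rw [Walk.toSubgraph_append, inf_sup_right, hmidinf,
            inf_eq_left.mpr hsufle]
          show _ = G.singletonSubgraph a ⊔ suf.toSubgraph
          rw [sup_assoc]
          congr 1
          exact sup_eq_right.mpr ((G.singletonSubgraph_le_iff v suf.toSubgraph).mpr
            (Walk.start_mem_verts_toSubgraph suf))

/-- Discrepancy of an edge under a 2-coloring. -/
def dval (c : V → ZMod 2) : Sym2 V → ZMod 2 :=
  Sym2.lift ⟨fun x y => c x + c y + 1, fun x y => by dsimp; ring⟩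

lemma dval_s (c : V → ZMod 2) (x y : V) : dval c s(x,y) = c x + c y + 1 := rfl

lemma walk_parity (c : V → ZMod 2) : ∀ {u v : V} (w : G.Walk u v),
    c v = c u + w.length + (w.edges.map (dval c)).sum := by
  intro u v w
  induction w with
  | nil => simp
  | @cons u x v h t ihw =>
    rw [Walk.edges_cons, Walk.length_cons, List.map_cons, List.sum_cons, dval_s]
    have key : ∀ (cu cx cv s l : ZMod 2), cv = cx + l + s →
        cv = cu + (l + 1) + (cu + cx + 1 + s) := by decide
    push_cast
    exact key _ _ _ _ _ ihw

lemma sum_dval_eq [DecidableEq V] {e f : Sym2 V} (hef : e ≠ f) (D : Sym2 V → ZMod 2) :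
    ∀ (l : List (Sym2 V)), l.Nodup → (∀ g ∈ l, g ≠ e → g ≠ f → D g = 0) →
    (l.map D).sum = (if e ∈ l then D e else 0) + (if f ∈ l then D f else 0) := by
  intro l
  induction l with
  | nil => simp
  | cons g l ih =>
    intro hn h0
    rw [List.map_cons, List.sum_cons,
      ih hn.of_cons (fun g' hg' => h0 g' (List.mem_cons_of_mem _ hg'))]
    have hg : g ∉ l := (List.nodup_cons.mp hn).1
    by_cases hge : g = e
    · subst hge
      rw [if_neg hg, if_pos (List.mem_cons_self (a := g) (l := l))]
      have h2 : (f ∈ g :: l) ↔ (f ∈ l) := by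
        rw [List.mem_cons]
        exact or_iff_right (fun h => hef (h ▸ rfl))
      rw [if_congr h2 rfl rfl]
      ring
    · by_cases hgf : g = f
      · subst hgf
        rw [if_neg hg, if_pos (List.mem_cons_self (a := g) (l := l))]
        have h1 : (e ∈ g :: l) ↔ (e ∈ l) := by
          rw [List.mem_cons]
          exact or_iff_right hef
        rw [if_congr h1 rfl rfl]
        ring
      · rw [h0 g (List.mem_cons_self (a := g) (l := l)) hge hgf]
        have h1 : (e ∈ g :: l) ↔ (e ∈ l) := by
          rw [List.mem_cons]
          exact or_iff_right (fun h => hge (h ▸ rfl))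
        have h2 : (f ∈ g :: l) ↔ (f ∈ l) := by
          rw [List.mem_cons]
          exact or_iff_right (fun h => hgf (h ▸ rfl))
        rw [if_congr h1 rfl rfl, if_congr h2 rfl rfl]
        ring


lemma surgery {e f : Sym2 V} (hef : e ≠ f) (he : e ∈ G.edgeSet)
    (c : V → ZMod 2)
    (hproper : ∀ g ∈ G.edgeSet, g ≠ e → g ≠ f → dval c g = 0)
    (H1 H2 : G.Subgraph) (h1 : IsOddCycleSubgraph G H1) (h2 : IsOddCycleSubgraph G H2)
    (hne : H1 ≠ H2) (he1 : e ∈ H1.edgeSet) (he2 : e ∈ H2.edgeSet)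
    (hside : (f ∉ H1.edgeSet ∧ f ∉ H2.edgeSet) ∨ dval c f = 0) :
    ∃ H₁ H₂ : G.Subgraph, IsOddCycleSubgraph G H₁ ∧ IsOddCycleSubgraph G H₂ ∧ H₁ ≠ H₂ ∧
      IsPathSubgraph G (H₁ ⊓ H₂) ∧ (H₁ ⊓ H₂).edgeSet.Nonempty := by
  classical
  induction e using Sym2.ind with
  | _ a b =>
  have hadj : G.Adj a b := G.mem_edgeSet.mp he
  obtain ⟨u1, w1, hw1c, hw1odd, rfl⟩ := h1
  obtain ⟨u2, w2, hw2c, hw2odd, rfl⟩ := h2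
  rw [Walk.mem_edges_toSubgraph] at he1 he2
  obtain ⟨p1, hp1, hep1, hTS1, hL1⟩ := cycle_split hadj w1 hw1c he1
  obtain ⟨p2, hp2, hep2, hTS2, hL2⟩ := cycle_split hadj w2 hw2c he2
  have hev1 : Even p1.length := by
    have := hL1
    rw [Walk.length_cons] at this
    rcases hw1odd with ⟨k, hk⟩
    refine ⟨p1.length / 2, by omega⟩
  have hev2 : Even p2.length := by
    have := hL2
    rw [Walk.length_cons] at this
    rcases hw2odd with ⟨k, hk⟩
    refine ⟨p2.length / 2, by omega⟩
  have hp12 : p1 ≠ p2 := by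
    rintro rfl
    exact hne (hTS1 ▸ hTS2 ▸ rfl)
  obtain ⟨p3, x, v, pre, suf, B1, B2, B3, ⟨e0, he0, he0'⟩, B5, B6, B7, B8, B9, B10⟩ :=
    core p1 p2 hp1 hp2 hp12
  -- f-avoidance for p1 p2 p3
  have hsidep : (s(a,b) ∉ p1.edges ∧ f ∉ p1.edges ∧ f ∉ p2.edges ∧
      s(a,b) ∉ p3.edges ∧ f ∉ p3.edges) ∨ dval c f = 0 := by
    rcases hside with ⟨hf1, hf2⟩ | hdf
    · left
      rw [← hTS1, Walk.mem_edges_toSubgraph, Walk.edges_cons] at hf1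
      rw [← hTS2, Walk.mem_edges_toSubgraph, Walk.edges_cons] at hf2
      have hf1' : f ∉ p1.edges := fun h => hf1 (List.mem_cons_of_mem _ h)
      have hf2' : f ∉ p2.edges := fun h => hf2 (List.mem_cons_of_mem _ h)
      refine ⟨hep1, hf1', hf2', ?_, ?_⟩
      · intro h
        rcases B2 _ h with h' | h'
        · exact hep1 h'
        · exact hep2 h'
      · intro h
        rcases B2 _ h with h' | h'
        · exact hf1' h'
        · exact hf2' h'
    · right; exact hdf
  have hsum : ∀ (p : G.Walk a b), s(a,b) ∉ p.edges →
      ((f ∉ p.edges) ∨ dval c f = 0) → (p.edges.map (dval c)).sum = 0 := by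
    intro p hep hfp
    apply List.sum_eq_zero
    intro z hz
    rw [List.mem_map] at hz
    obtain ⟨g, hg, rfl⟩ := hz
    by_cases hge : g = s(a,b)
    · exact absurd (hge ▸ hg) hep
    · by_cases hgf : g = f
      · rcases hfp with hfp | hfp
        · exact absurd (hgf ▸ hg) hfp
        · rw [hgf]; exact hfp
      · exact hproper g (p.edges_subset_edgeSet hg) hge hgf
  have hsum3 : (p3.edges.map (dval c)).sum = 0 := by
    rcases hsidep with ⟨-, hA, hB, hC, hD⟩ | hdf
    · exact hsum p3 hC (Or.inl hD)
    · refine hsum p3 ?_ (Or.inr hdf)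
      intro h
      rcases B2 _ h with h' | h'
      · exact hep1 h'
      · exact hep2 h'
  have hsum2 : (p2.edges.map (dval c)).sum = 0 := by
    rcases hsidep with ⟨-, -, hB, -, -⟩ | hdf
    · exact hsum p2 hep2 (Or.inl hB)
    · exact hsum p2 hep2 (Or.inr hdf)
  -- parity of p3
  have hpar3 := walk_parity c p3
  have hpar2 := walk_parity c p2
  rw [hsum3, add_zero] at hpar3
  rw [hsum2, add_zero] at hpar2
  have hlen23 : (p3.length : ZMod 2) = (p2.length : ZMod 2) := by
    have := hpar3.symm.trans hpar2
    exact add_left_cancel this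
  have hl2z : ((p2.length : ℕ) : ZMod 2) = 0 := by
    rw [ZMod.natCast_eq_zero_iff]
    exact hev2.two_dvd
  have hev3 : Even p3.length := by
    rw [hl2z] at hlen23
    rw [ZMod.natCast_eq_zero_iff] at hlen23
    exact (even_iff_two_dvd).mpr hlen23
  -- the new cycle
  have hswap : s(b,a) = s(a,b) := Sym2.eq_swap
  have hep3 : s(a,b) ∉ p3.edges := by
    intro h
    rcases B2 _ h with h' | h'
    · exact hep1 h'
    · exact hep2 h'
  have hw3c : (Walk.cons hadj.symm p3).IsCycle := by
    rw [Walk.isCycle_def]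
    refine ⟨⟨?_⟩, by simp, ?_⟩
    · rw [Walk.edges_cons, List.nodup_cons]
      exact ⟨by rw [hswap]; exact hep3, B1.edges_nodup⟩
    · rw [Walk.support_cons]
      exact B1.support_nodup
  have hw3odd : Odd (Walk.cons hadj.symm p3).length := by
    rw [Walk.length_cons]
    rcases hev3 with ⟨k, hk⟩
    exact ⟨k, by omega⟩
  refine ⟨(Walk.cons hadj.symm p3).toSubgraph, w2.toSubgraph,
    ⟨b, _, hw3c, hw3odd, rfl⟩, ⟨u2, w2, hw2c, hw2odd, rfl⟩, ?_, ?_, ?_⟩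
  · -- distinctness via e0
    intro hbad
    have he03 : e0 ∈ (Walk.cons hadj.symm p3).toSubgraph.edgeSet := by
      rw [Walk.mem_edges_toSubgraph, Walk.edges_cons]
      exact List.mem_cons_of_mem _ he0
    rw [hbad, ← hTS2, Walk.mem_edges_toSubgraph, Walk.edges_cons, List.mem_cons] at he03
    rcases he03 with h' | h'
    · rw [hswap] at h'
      exact hep3 (h' ▸ he0)
    · exact he0' h'
  · -- path subgraph
    have hinter : (Walk.cons hadj.symm p3).toSubgraph ⊓ w2.toSubgraph =
        G.subgraphOfAdj hadj.symm ⊔ (pre.toSubgraph ⊔ suf.toSubgraph) := by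
      rw [← hTS2]
      show (G.subgraphOfAdj hadj.symm ⊔ p3.toSubgraph) ⊓
        (G.subgraphOfAdj hadj.symm ⊔ p2.toSubgraph) = _
      rw [← sup_inf_left, B10]
    refine ⟨x, v, pre.reverse.append (Walk.cons hadj suf.reverse), ?_, ?_⟩
    · rw [Walk.isPath_def, Walk.support_append, Walk.support_cons, List.tail_cons,
        Walk.support_reverse, Walk.support_reverse, List.nodup_append]
      refine ⟨List.nodup_reverse.mpr B5.support_nodup,
        List.nodup_reverse.mpr B6.support_nodup, ?_⟩
      intro y hy z hy' hyz
      subst hyz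
      rw [List.mem_reverse] at hy hy'
      exact B7 y hy hy'
    · rw [Walk.toSubgraph_append, Walk.toSubgraph_reverse]
      show pre.toSubgraph ⊔ (G.subgraphOfAdj hadj ⊔ suf.reverse.toSubgraph) = _
      rw [Walk.toSubgraph_reverse, hinter, subgraphOfAdj_symm hadj]
      exact sup_left_comm pre.toSubgraph (G.subgraphOfAdj hadj) suf.toSubgraph
  · -- e in the intersection
    refine ⟨s(a,b), ?_⟩
    rw [Subgraph.mem_edgeSet, Subgraph.inf_adj]
    constructor
    · have : s(a,b) ∈ (Walk.cons hadj.symm p3).edges := by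
        rw [Walk.edges_cons, ← hswap]
        exact List.mem_cons_self
      exact Subgraph.mem_edgeSet.mp ((Walk.mem_edges_toSubgraph _).mpr this)
    · exact Subgraph.mem_edgeSet.mp ((Walk.mem_edges_toSubgraph _).mpr he2)


open scoped Classical in
lemma cycle_ind [DecidableEq V] {e f : Sym2 V} (hef : e ≠ f) (c : V → ZMod 2)
    (hproper : ∀ g ∈ G.edgeSet, g ≠ e → g ≠ f → dval c g = 0)
    (H : G.Subgraph) (h : IsOddCycleSubgraph G H) :
    (if e ∈ H.edgeSet then dval c e else 0) + (if f ∈ H.edgeSet then dval c f else 0) = 1 := by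
  obtain ⟨u, w, hc, hodd, rfl⟩ := h
  have hpar := walk_parity c w
  have hS := sum_dval_eq hef (dval c) w.edges hc.edges_nodup
    (fun g hg => hproper g (w.edges_subset_edgeSet hg))
  have hL : ((w.length : ℕ) : ZMod 2) = 1 := by
    rcases hodd with ⟨k, hk⟩
    rw [hk]
    push_cast
    have h2 : (2 : ZMod 2) = 0 := by decide
    rw [h2]
    ring
  have h0 : ((w.length : ℕ) : ZMod 2) + (w.edges.map (dval c)).sum = 0 := by
    rw [add_assoc] at hpar
    exact (left_eq_add.mp hpar)
  rw [hL] at h0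
  have hsum1 : (w.edges.map (dval c)).sum = 1 := by
    have : ∀ s : ZMod 2, 1 + s = 0 → s = 1 := by decide
    exact this _ h0
  rw [hS] at hsum1
  have h1 : (e ∈ w.toSubgraph.edgeSet) ↔ (e ∈ w.edges) := Walk.mem_edges_toSubgraph w
  have h2 : (f ∈ w.toSubgraph.edgeSet) ↔ (f ∈ w.edges) := Walk.mem_edges_toSubgraph w
  rw [if_congr h1 rfl rfl, if_congr h2 rfl rfl]
  exact hsum1

open scoped Classical in
lemma finish_pair [DecidableEq V] {e f : Sym2 V} (hef : e ≠ f) (he : e ∈ G.edgeSet)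
    (hf : f ∈ G.edgeSet) (c : V → ZMod 2)
    (hproper : ∀ g ∈ G.edgeSet, g ≠ e → g ≠ f → dval c g = 0)
    (A B : G.Subgraph) (hA : IsOddCycleSubgraph G A) (hB : IsOddCycleSubgraph G B)
    (hAB : A ≠ B) (heA : e ∈ A.edgeSet) (heB : e ∈ B.edgeSet) :
    ∃ H₁ H₂ : G.Subgraph, IsOddCycleSubgraph G H₁ ∧ IsOddCycleSubgraph G H₂ ∧ H₁ ≠ H₂ ∧
      IsPathSubgraph G (H₁ ⊓ H₂) ∧ (H₁ ⊓ H₂).edgeSet.Nonempty := by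
  have INDA := cycle_ind hef c hproper A hA
  have INDB := cycle_ind hef c hproper B hB
  have hproper' : ∀ g ∈ G.edgeSet, g ≠ f → g ≠ e → dval c g = 0 :=
    fun g hg hh1 hh2 => hproper g hg hh2 hh1
  by_cases hfA : f ∈ A.edgeSet <;> by_cases hfB : f ∈ B.edgeSet
  · rw [if_pos heA, if_pos hfA] at INDA
    by_cases hdf : dval c f = 0
    · exact surgery hef he c hproper A B hA hB hAB heA heB (Or.inr hdf)
    · have hde : dval c e = 0 := by
        have key : ∀ x y : ZMod 2, x + y = 1 → y ≠ 0 → x = 0 := by decide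
        exact key _ _ INDA hdf
      exact surgery hef.symm hf c hproper' A B hA hB hAB hfA hfB (Or.inr hde)
  · rw [if_pos heA, if_pos hfA] at INDA
    rw [if_pos heB, if_neg hfB] at INDB
    have hdf : dval c f = 0 := by
      have key : ∀ x y : ZMod 2, x + y = 1 → x + 0 = 1 → y = 0 := by decide
      exact key _ _ INDA INDB
    exact surgery hef he c hproper A B hA hB hAB heA heB (Or.inr hdf)
  · rw [if_pos heA, if_neg hfA] at INDA
    rw [if_pos heB, if_pos hfB] at INDB
    have hdf : dval c f = 0 := by
      have key : ∀ x y : ZMod 2, x + y = 1 → x + 0 = 1 → y = 0 := by decide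
      exact key _ _ INDB INDA
    exact surgery hef he c hproper A B hA hB hAB heA heB (Or.inr hdf)
  · exact surgery hef he c hproper A B hA hB hAB heA heB (Or.inl ⟨hfA, hfB⟩)


end AuxLemmas

/-- Lemma 2.5: if `G` is `(3,2)`-critical with at least three odd cycles, then some two odd
cycles intersect in a path with at least one edge. -/
theorem exists_path_intersection {V : Type} [Fintype V] (G : SimpleGraph V)
    (hcrit : IsKLCritical G 3 2)
    (hcyc : 3 ≤ {H : G.Subgraph | IsOddCycleSubgraph G H}.ncard) :
    ∃ H₁ H₂ : G.Subgraph, IsOddCycleSubgraph G H₁ ∧ IsOddCycleSubgraph G H₂ ∧ H₁ ≠ H₂ ∧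
      IsPathSubgraph G (H₁ ⊓ H₂) ∧ (H₁ ⊓ H₂).edgeSet.Nonempty := by
  classical
  obtain ⟨-, hchrom, hes⟩ := hcrit
  have hSne : {n : ℕ | ∃ F : Finset (Sym2 V), ↑F ⊆ G.edgeSet ∧ F.card = n ∧
      (G.deleteEdges ↑F).chromaticNumber + 1 = G.chromaticNumber}.Nonempty := by
    by_contra h
    rw [Set.not_nonempty_iff_eq_empty] at h
    rw [esChi, h, Nat.sInf_empty] at hes
    omega
  have hmem := Nat.sInf_mem hSne
  rw [show sInf {n : ℕ | ∃ F : Finset (Sym2 V), ↑F ⊆ G.edgeSet ∧ F.card = n ∧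
      (G.deleteEdges ↑F).chromaticNumber + 1 = G.chromaticNumber} = esChi G from rfl,
    hes] at hmem
  obtain ⟨F, hFsub, hFcard, hFchrom⟩ := hmem
  obtain ⟨e, f, hef, hF⟩ := Finset.card_eq_two.mp hFcard
  have he : e ∈ G.edgeSet := hFsub (by rw [hF]; simp)
  have hf : f ∈ G.edgeSet := hFsub (by rw [hF]; simp)
  rw [hchrom] at hFchrom
  have hqne : (G.deleteEdges ↑F).chromaticNumber ≠ ⊤ := by
    intro h
    rw [h] at hFchrom
    simp at hFchrom
  obtain ⟨n, hn⟩ := WithTop.ne_top_iff_exists.mp hqne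
  rw [← hn] at hFchrom
  have hn2 : n = 2 := by
    have : n + 1 = 3 := by
      have h' : ((n + 1 : ℕ) : ℕ∞) = ((3 : ℕ) : ℕ∞) := by
        push_cast
        exact hFchrom
      exact_mod_cast h'
    omega
  have hcol : (G.deleteEdges ↑F).Colorable 2 := by
    rw [← chromaticNumber_le_iff_colorable, ← hn, hn2]
    exact le_rfl
  obtain ⟨C⟩ := hcol
  set c : V → ZMod 2 := fun v => if C v = 0 then 0 else 1 with hc
  have hproper : ∀ g ∈ G.edgeSet, g ≠ e → g ≠ f → dval c g = 0 := by
    intro g hg hge hgf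
    induction g using Sym2.ind with
    | _ x y =>
      have hadj : (G.deleteEdges ↑F).Adj x y := by
        rw [deleteEdges_adj]
        refine ⟨G.mem_edgeSet.mp hg, ?_⟩
        rw [hF]
        simp only [Finset.coe_insert, Finset.coe_singleton, Set.mem_insert_iff,
          Set.mem_singleton_iff]
        rintro (h' | h')
        · exact hge h'
        · exact hgf h'
      have hCne := C.valid hadj
      rw [dval_s]
      have key : ∀ i j : Fin 2, i ≠ j →
          ((if i = 0 then (0:ZMod 2) else 1) + (if j = 0 then 0 else 1) + 1) = 0 := by decide
      exact key (C x) (C y) hCne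
  haveI : Finite G.Subgraph := Finite.of_injective (fun H => (H.verts, H.Adj)) (by
    intro H1 H2 h
    rw [Prod.mk.injEq] at h
    exact Subgraph.ext h.1 h.2)
  have h3 : 2 < {H : G.Subgraph | IsOddCycleSubgraph G H}.ncard := by omega
  rw [Set.two_lt_ncard (Set.toFinite _)] at h3
  obtain ⟨H1, hH1, H2, hH2, H3, hH3, h12, h13, h23⟩ := h3
  have hor : ∀ H : G.Subgraph, IsOddCycleSubgraph G H →
      e ∈ H.edgeSet ∨ f ∈ H.edgeSet := by
    intro H hH
    by_contra hcon
    push_neg at hcon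
    have := cycle_ind hef c hproper H hH
    rw [if_neg hcon.1, if_neg hcon.2] at this
    simp at this
  rcases hor H1 hH1 with he1 | hf1 <;> rcases hor H2 hH2 with he2 | hf2 <;>
    rcases hor H3 hH3 with he3 | hf3
  · exact finish_pair hef he hf c hproper H1 H2 hH1 hH2 h12 he1 he2
  · exact finish_pair hef he hf c hproper H1 H2 hH1 hH2 h12 he1 he2
  · exact finish_pair hef he hf c hproper H1 H3 hH1 hH3 h13 he1 he3
  · have hproper' : ∀ g ∈ G.edgeSet, g ≠ f → g ≠ e → dval c g = 0 :=
      fun g hg hh1 hh2 => hproper g hg hh2 hh1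
    exact finish_pair hef.symm hf he c hproper' H2 H3 hH2 hH3 h23 hf2 hf3
  · exact finish_pair hef he hf c hproper H2 H3 hH2 hH3 h23 he2 he3
  · have hproper' : ∀ g ∈ G.edgeSet, g ≠ f → g ≠ e → dval c g = 0 :=
      fun g hg hh1 hh2 => hproper g hg hh2 hh1
    exact finish_pair hef.symm hf he c hproper' H1 H3 hH1 hH3 h13 hf1 hf3
  · have hproper' : ∀ g ∈ G.edgeSet, g ≠ f → g ≠ e → dval c g = 0 :=
      fun g hg hh1 hh2 => hproper g hg hh2 hh1
    exact finish_pair hef.symm hf he c hproper' H1 H2 hH1 hH2 h12 hf1 hf2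
  · have hproper' : ∀ g ∈ G.edgeSet, g ≠ f → g ≠ e → dval c g = 0 :=
      fun g hg hh1 hh2 => hproper g hg hh2 hh1
    exact finish_pair hef.symm hf he c hproper' H1 H2 hH1 hH2 h12 hf1 hf2
end

section
/- If $G$ is a $(3,2)$-critical graph that contains at least three odd cycles, then every two distinct odd cycles of $G$ intersect in more than one vertex. -/
open SimpleGraph

private lemma zmod2_ne : ∀ (x y : ZMod 2), x ≠ y → y = x + 1 := by decide
private lemma zmod2_sub : ∀ (x y : ZMod 2), x - y = if x ≠ y then 1 else 0 := by decide

/-- Along a walk where a `ZMod 2`-valued function flips across every edge,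
the endpoint values differ by the length. -/
private lemma flip_along_walk {V : Type} {G : SimpleGraph V} :
    ∀ {u v : V} (w : G.Walk u v) (f : V → ZMod 2),
      (∀ x y, s(x, y) ∈ w.edges → f x ≠ f y) → f v = f u + w.length
  | _, _, SimpleGraph.Walk.nil, f, _ => by simp
  | u, v, SimpleGraph.Walk.cons h p, f, hf => by
    have ih := flip_along_walk p f (fun x y hxy => hf x y (by rw [Walk.edges_cons]; exact List.mem_cons_of_mem _ hxy))
    have h1 := zmod2_ne _ _ (hf _ _ (by rw [Walk.edges_cons]; exact List.mem_cons_self))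
    rw [Walk.length_cons, ih, h1]
    push_cast
    ring

private lemma no_odd_flip {V : Type} {G : SimpleGraph V} {u : V} (w : G.Walk u u)
    (hodd : Odd w.length) (f : V → ZMod 2)
    (hf : ∀ x y, s(x, y) ∈ w.edges → f x ≠ f y) : False := by
  have := flip_along_walk w f hf
  have h0 : ((w.length : ZMod 2)) = 0 := (left_eq_add.mp this)
  rw [ZMod.natCast_eq_zero_iff] at h0
  rw [Nat.odd_iff] at hodd
  omega

/-- A 2-colorable graph has no odd closed walk. -/
private lemma no_odd_of_colorable_two {V : Type} {G : SimpleGraph V} {u : V} (w : G.Walk u u)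
    (hodd : Odd w.length) (hc : G.Colorable 2) : False := by
  obtain ⟨c⟩ := hc
  refine no_odd_flip w hodd (fun v => if c v = 0 then 0 else 1) ?_
  intro x y hxy
  have hne := c.valid (w.adj_of_mem_edges hxy)
  have : ∀ a b : Fin 2, a ≠ b →
      (if a = 0 then (0 : ZMod 2) else 1) ≠ (if b = 0 then 0 else 1) := by decide
  exact this _ _ hne

private lemma enat_sandwich (a : ℕ∞) (n : ℕ) (h1 : a ≤ (n : ℕ∞)) (h2 : ¬a ≤ ((n - 1 : ℕ) : ℕ∞)) :
    a = (n : ℕ∞) := by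
  induction a using ENat.recTopCoe with
  | top => exact absurd (top_le_iff.mp h1) (ENat.coe_ne_top n)
  | coe m => norm_cast at *; omega

private lemma enat_add_one_eq_three {a : ℕ∞} (h : a + 1 = ((3 : ℕ) : ℕ∞)) : a = ((2:ℕ) : ℕ∞) := by
  induction a using ENat.recTopCoe with
  | top => simp at h
  | coe m => norm_cast at *; omega

private lemma getVert_eq_support_getElem? {V : Type} {G : SimpleGraph V} :
    ∀ {u v : V} (w : G.Walk u v) (i : ℕ), i ≤ w.length →
      w.support[i]? = some (w.getVert i)
  | _, _, SimpleGraph.Walk.nil, i, hi => by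
    simp only [Walk.length_nil, Nat.le_zero] at hi
    subst hi
    simp
  | u, v, SimpleGraph.Walk.cons h p, i, hi => by
    cases i with
    | zero => simp
    | succ i =>
      rw [Walk.getVert_cons_succ, Walk.support_cons, List.getElem?_cons_succ]
      exact getVert_eq_support_getElem? p i (by simpa using hi)

/-- On a cycle, internal `getVert` values (indices 1..length) are pairwise distinct. -/
private lemma cycle_getVert_ne {V : Type} {G : SimpleGraph V} {u : V} {w : G.Walk u u}
    (hc : w.IsCycle) {i j : ℕ} (hij : i < j) (hj : j + 1 ≤ w.length) :
    w.getVert (i + 1) ≠ w.getVert (j + 1) := by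
  have hlen : w.support.length = w.length + 1 := w.length_support
  have htl : w.support.tail.length = w.length := by
    rw [List.length_tail, hlen]; omega
  intro heq
  have hgi := getVert_eq_support_getElem? w (i+1) (by omega)
  have hgj := getVert_eq_support_getElem? w (j+1) (by omega)
  rw [w.support_eq_cons, List.getElem?_cons_succ] at hgi hgj
  have : i = j := by
    refine (List.getElem?_inj (l := w.support.tail) (by omega) hc.support_nodup).mp ?_
    rw [hgi, hgj, heq]
  omega

/-- Every vertex on a non-nil walk lies on one of its edges. -/
private lemma mem_edge_of_mem_support {V : Type} {G : SimpleGraph V} :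
    ∀ {u v x : V} (w : G.Walk u v), ¬w.Nil → x ∈ w.support → ∃ e ∈ w.edges, x ∈ e
  | _, _, _, SimpleGraph.Walk.nil, hn, _ => absurd SimpleGraph.Walk.Nil.nil hn
  | u, v, x, SimpleGraph.Walk.cons h p, _, hx => by
    rw [Walk.support_cons, List.mem_cons] at hx
    rcases hx with rfl | hx
    · exact ⟨_, by rw [Walk.edges_cons]; exact List.mem_cons_self, Sym2.mem_mk_left _ _⟩
    · by_cases hp : p.Nil
      · have : p.support = [_] := Walk.nil_iff_support_eq.mp hp
        rw [this, List.mem_singleton] at hx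
        subst hx
        exact ⟨_, by rw [Walk.edges_cons]; exact List.mem_cons_self, Sym2.mem_mk_right _ _⟩
      · obtain ⟨e, he, hxe⟩ := mem_edge_of_mem_support p hp hx
        exact ⟨e, by rw [Walk.edges_cons]; exact List.mem_cons_of_mem _ he, hxe⟩

private lemma mem_support_of_mem_edge {V : Type} {G : SimpleGraph V} {u v x : V}
    (w : G.Walk u v) {e : Sym2 V} (he : e ∈ w.edges) (hx : x ∈ e) : x ∈ w.support := by
  induction e with
  | _ a b =>
    rw [Sym2.mem_iff] at hx
    rcases hx with rfl | rfl
    · exact w.fst_mem_support_of_mem_edges he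
    · exact w.snd_mem_support_of_mem_edges he

private lemma mem_edges_iff_getVert {V : Type} {G : SimpleGraph V} {u : V} (w : G.Walk u u)
    {e : Sym2 V} :
    e ∈ w.edges ↔ ∃ i < w.length, e = s(w.getVert i, w.getVert (i + 1)) := by
  constructor
  · intro he
    induction e with
    | _ a b =>
      have : w.toSubgraph.Adj a b := by
        rw [← SimpleGraph.Subgraph.mem_edgeSet, Walk.mem_edges_toSubgraph]
        exact he
      obtain ⟨i, hi1, hi2⟩ := (Walk.toSubgraph_adj_iff w).mp this
      exact ⟨i, hi2, hi1.symm⟩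
  · rintro ⟨i, hi, rfl⟩
    rw [← Walk.mem_edges_toSubgraph, SimpleGraph.Subgraph.mem_edgeSet]
    exact Walk.toSubgraph_adj_getVert w hi
/-- Key lemma: in a 3-chromatic edge-stability-critical graph with `esχ = 2`, if `wa, wb` are
edge-disjoint odd closed walks, then every edge of `G` lies on `wa` or `wb`. -/
private lemma key_lemma {V : Type} [Fintype V] {G : SimpleGraph V}
    (hcrit : EdgeStabilityCritical G) (hχ : G.chromaticNumber = ((3 : ℕ) : ℕ∞))
    (hes : esChi G = 2) {ua ub : V} (wa : G.Walk ua ua) (wb : G.Walk ub ub)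
    (ha : Odd wa.length) (hb : Odd wb.length)
    (hdisj : ∀ e ∈ wa.edges, e ∉ wb.edges) :
    ∀ f ∈ G.edgeSet, f ∈ wa.edges ∨ f ∈ wb.edges := by
  intro f hf
  by_contra hnot
  push_neg at hnot
  obtain ⟨hfa, hfb⟩ := hnot
  classical
  set G' := G.deleteEdges {f} with hG'
  have hseta : ∀ e ∈ wa.edges, e ∈ G'.edgeSet := by
    intro e he
    rw [edgeSet_deleteEdges]
    exact ⟨wa.edges_subset_edgeSet he, by rintro rfl; exact hfa he⟩
  have hsetb : ∀ e ∈ wb.edges, e ∈ G'.edgeSet := by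
    intro e he
    rw [edgeSet_deleteEdges]
    exact ⟨wb.edges_subset_edgeSet he, by rintro rfl; exact hfb he⟩
  -- χ(G') = 3
  have hle : G'.chromaticNumber ≤ ((3:ℕ) : ℕ∞) := by
    rw [← hχ]; exact chromaticNumber_le_of_forall_imp (fun n hc => hc.mono_left (deleteEdges_le _))
  have hnot2 : ¬G'.Colorable 2 := by
    intro hc
    exact no_odd_of_colorable_two (wa.transfer G' hseta)
      (by rwa [Walk.length_transfer]) hc
  have hχ' : G'.chromaticNumber = ((3:ℕ) : ℕ∞) := by
    refine enat_sandwich _ 3 hle ?_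
    intro hc
    exact hnot2 (chromaticNumber_le_iff_colorable.mp (by exact_mod_cast hc))
  have hcol3 : G'.Colorable 3 :=
    chromaticNumber_le_iff_colorable.mp (le_of_eq hχ')
  obtain ⟨c⟩ := hcol3
  -- the deletion set F
  set Fset : Set (Sym2 V) := {e | e ∈ G'.edgeSet ∧ ∀ v ∈ e, c v ≠ 2} with hFset
  have hFfin : Fset.Finite := Set.toFinite _
  set F : Finset (Sym2 V) := hFfin.toFinset with hFdef
  have hFcoe : (F : Set (Sym2 V)) = Fset := hFfin.coe_toFinset
  have hFsub : (F : Set (Sym2 V)) ⊆ G'.edgeSet := by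
    rw [hFcoe]; exact fun e he => he.1
  -- the remaining graph is 2-colorable
  have hcol2 : (G'.deleteEdges ↑F).Colorable 2 := by
    refine ⟨Coloring.mk (fun v => if c v = 2 then (1 : Fin 2) else 0) ?_⟩
    intro a b hadj
    rw [deleteEdges_adj] at hadj
    have hvalid := c.valid hadj.1
    have hnF : s(a, b) ∉ Fset := by rw [← hFcoe]; exact_mod_cast hadj.2
    have : ¬∀ v ∈ s(a,b), c v ≠ 2 := fun hall => hnF ⟨(mem_edgeSet _).mpr hadj.1, hall⟩
    push_neg at this
    obtain ⟨v, hv, hv2⟩ := this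
    rw [Sym2.mem_iff] at hv
    rcases hv with rfl | rfl
    · have : c b ≠ 2 := fun h => hvalid (hv2.trans h.symm)
      simp [hv2, this]
    · have : c a ≠ 2 := fun h => hvalid (h.trans hv2.symm)
      simp [hv2, this]
  -- some edge of wa survives
  have hsurv : ∃ e ∈ wa.edges, e ∉ Fset := by
    by_contra hall
    push_neg at hall
    refine no_odd_flip wa ha (fun v => if c v = 1 then 1 else 0) ?_
    intro x y hxy
    have hmem := hall _ hxy
    have hx2 : c x ≠ 2 := hmem.2 x (Sym2.mem_mk_left _ _)
    have hy2 : c y ≠ 2 := hmem.2 y (Sym2.mem_mk_right _ _)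
    have hvalid : c x ≠ c y := c.valid ((mem_edgeSet _).mp hmem.1)
    have : ∀ a b : Fin 3, a ≠ b → a ≠ 2 → b ≠ 2 →
        (if a = 1 then (1 : ZMod 2) else 0) ≠ (if b = 1 then 1 else 0) := by decide
    exact this _ _ hvalid hx2 hy2
  obtain ⟨e0, he0a, he0F⟩ := hsurv
  have he0 : e0 ∈ (G'.deleteEdges ↑F).edgeSet := by
    rw [edgeSet_deleteEdges]
    exact ⟨hseta _ he0a, by rw [hFcoe]; exact he0F⟩
  have hnot1 : ¬(G'.deleteEdges ↑F).Colorable 1 := by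
    intro ⟨c1⟩
    induction e0 with
    | _ a b =>
      exact c1.valid ((mem_edgeSet _).mp he0) (Subsingleton.elim _ _)
  have hχ'' : (G'.deleteEdges ↑F).chromaticNumber = ((2:ℕ) : ℕ∞) := by
    refine enat_sandwich _ 2 (chromaticNumber_le_iff_colorable.mpr hcol2) ?_
    intro hc
    exact hnot1 (chromaticNumber_le_iff_colorable.mp (by exact_mod_cast hc))
  -- the esChi set of G' is nonempty
  set S : Set ℕ := {n : ℕ | ∃ F : Finset (Sym2 V), ↑F ⊆ G'.edgeSet ∧ F.card = n ∧
    (G'.deleteEdges ↑F).chromaticNumber + 1 = G'.chromaticNumber} with hS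
  have hSne : S.Nonempty := by
    refine ⟨F.card, F, hFsub, rfl, ?_⟩
    rw [hχ'', hχ']
    norm_cast
  have hlt : esChi G' < 2 := by
    have := hcrit f hf
    rwa [hes] at this
  have hmem := Nat.sInf_mem hSne
  rw [show sInf S = esChi G' from rfl] at hmem
  have hne0 : esChi G' ≠ 0 := by
    intro h0
    rw [h0] at hmem
    obtain ⟨F0, _, hcard0, heq0⟩ := hmem
    rw [Finset.card_eq_zero.mp hcard0] at heq0
    rw [Finset.coe_empty, deleteEdges_empty, hχ'] at heq0
    norm_cast at heq0
  have h1 : esChi G' = 1 := by omega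
  rw [h1] at hmem
  obtain ⟨F1, hsub1, hcard1, heq1⟩ := hmem
  obtain ⟨g, rfl⟩ := Finset.card_eq_one.mp hcard1
  rw [hχ'] at heq1
  have hcol2' : (G'.deleteEdges ↑({g} : Finset (Sym2 V))).Colorable 2 := by
    refine chromaticNumber_le_iff_colorable.mp (le_of_eq (enat_add_one_eq_three heq1))
  have hga : g ∈ wa.edges := by
    by_contra hga
    have hsub : ∀ e ∈ wa.edges, e ∈ (G'.deleteEdges ↑({g} : Finset (Sym2 V))).edgeSet := by
      intro e he
      rw [edgeSet_deleteEdges]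
      refine ⟨hseta _ he, ?_⟩
      simp only [Finset.coe_singleton, Set.mem_singleton_iff]
      rintro rfl
      exact hga he
    exact no_odd_of_colorable_two (wa.transfer _ hsub) (by rwa [Walk.length_transfer]) hcol2'
  have hgb : g ∈ wb.edges := by
    by_contra hgb
    have hsub : ∀ e ∈ wb.edges, e ∈ (G'.deleteEdges ↑({g} : Finset (Sym2 V))).edgeSet := by
      intro e he
      rw [edgeSet_deleteEdges]
      refine ⟨hsetb _ he, ?_⟩
      simp only [Finset.coe_singleton, Set.mem_singleton_iff]
      rintro rfl
      exact hgb he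
    exact no_odd_of_colorable_two (wb.transfer _ hsub) (by rwa [Walk.length_transfer]) hcol2'
  exact hdisj g hga hgb

/-- A cycle whose edges lie in the union of two edge-disjoint closed walks that share at most
one vertex must lie entirely within one of them. -/
private lemma switch_lemma {V : Type} [Fintype V] {G : SimpleGraph V}
    {u1 u2 u : V} {w1 : G.Walk u1 u1} {w2 : G.Walk u2 u2} {w : G.Walk u u}
    (hv : ({v | v ∈ w1.support} ∩ {v | v ∈ w2.support}).ncard ≤ 1)
    (hw : w.IsCycle)
    (hsub : ∀ e ∈ w.edges, e ∈ w1.edges ∨ e ∈ w2.edges) :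
    (∀ e ∈ w.edges, e ∈ w1.edges) ∨ (∀ e ∈ w.edges, e ∈ w2.edges) := by
  classical
  by_contra hcon
  push_neg at hcon
  obtain ⟨⟨ea, hea, hea1⟩, ⟨eb, heb, heb2⟩⟩ := hcon
  set n := w.length with hn
  have hn0 : 0 < n := by have := hw.three_le_length; omega
  set E : ℕ → Sym2 V := fun i => s(w.getVert (i % n), w.getVert (i % n + 1)) with hE
  have hEmem : ∀ i, E i ∈ w.edges := fun i =>
    (mem_edges_iff_getVert w).mpr ⟨i % n, Nat.mod_lt _ hn0, rfl⟩
  set g : ℕ → ZMod 2 := fun i => if E i ∈ w1.edges then 1 else 0 with hg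
  -- there is an index with value 0 and one with value 1
  obtain ⟨j0, hj0n, hj0e⟩ := (mem_edges_iff_getVert w).mp hea
  have hgj0 : g j0 = 0 := by
    have : E j0 = ea := by rw [hE]; simp only [Nat.mod_eq_of_lt (by omega : j0 < n)]; exact hj0e.symm
    simp only [hg, this, if_neg hea1]
  obtain ⟨i0, hi0n, hi0e⟩ := (mem_edges_iff_getVert w).mp heb
  have heb1 : eb ∈ w1.edges := (hsub eb heb).resolve_right heb2
  have hgi0 : g i0 = 1 := by
    have : E i0 = eb := by rw [hE]; simp only [Nat.mod_eq_of_lt (by omega : i0 < n)]; exact hi0e.symm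
    simp only [hg, this, if_pos heb1]
  have hgn : g n = g 0 := by
    have hE0 : E n = E 0 := by simp only [hE, Nat.mod_self, Nat.zero_mod]
    simp only [hg]; rw [hE0]
  -- the set of switches
  set D : Finset ℕ := (Finset.range n).filter (fun i => g (i + 1) ≠ g i) with hD
  have hsum : (D.card : ZMod 2) = 0 := by
    have h1 : ∑ i ∈ Finset.range n, (g (i + 1) - g i) = g n - g 0 :=
      Finset.sum_range_sub g n
    rw [hgn, sub_self] at h1
    have h2 : ∀ i, g (i + 1) - g i = if g (i + 1) ≠ g i then (1 : ZMod 2) else 0 :=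
      fun i => zmod2_sub _ _
    simp only [h2] at h1
    rwa [Finset.sum_boole] at h1
  have hDne : D.Nonempty := by
    rw [Finset.nonempty_iff_ne_empty]
    intro hDe
    have hconst : ∀ i ≤ n, g i = g 0 := by
      intro i hi
      induction i with
      | zero => rfl
      | succ i ih =>
        have hiD : i ∉ D := by rw [hDe]; exact Finset.notMem_empty i
        rw [hD, Finset.mem_filter] at hiD
        push_neg at hiD
        have := hiD (Finset.mem_range.mpr (by omega))
        rw [this, ih (by omega)]
    have h1 := hconst i0 (by omega)
    have h2 := hconst j0 (by omega)
    rw [hgi0] at h1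
    rw [hgj0] at h2
    rw [← h2] at h1
    exact one_ne_zero h1
  have hdvd : 2 ∣ D.card := by
    rwa [ZMod.natCast_eq_zero_iff] at hsum
  have hcard2 : 1 < D.card := by
    have := Finset.card_pos.mpr hDne
    omega
  obtain ⟨k, hk, m, hm, hkm⟩ := Finset.one_lt_card.mp hcard2
  -- each switch yields a common vertex of w1 and w2
  have hcommon : ∀ k ∈ D, w.getVert (k + 1) ∈ w1.support ∧ w.getVert (k + 1) ∈ w2.support := by
    intro k hk
    rw [hD, Finset.mem_filter, Finset.mem_range] at hk
    obtain ⟨hkn, hkg⟩ := hk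
    have hxk1 : w.getVert (k + 1) ∈ E k := by
      rw [hE]
      simp only [Nat.mod_eq_of_lt hkn]
      exact Sym2.mem_mk_right _ _
    have hxk2 : w.getVert (k + 1) ∈ E (k + 1) := by
      rw [hE]
      rcases Nat.lt_or_ge (k + 1) n with h | h
      · simp only [Nat.mod_eq_of_lt h]
        exact Sym2.mem_mk_left _ _
      · have hk1 : k + 1 = n := by omega
        have h0 : w.getVert n = u := by rw [hn, Walk.getVert_length]
        rw [hk1]
        simp only [Nat.mod_self, h0, Walk.getVert_zero]
        exact Sym2.mem_mk_left _ _
    -- one of E k, E (k+1) is in w1, the other in w2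
    by_cases h1 : E k ∈ w1.edges
    · have h2 : E (k + 1) ∉ w1.edges := by
        intro h
        apply hkg
        simp only [hg, if_pos h, if_pos h1]
      have h2' : E (k + 1) ∈ w2.edges := (hsub _ (hEmem _)).resolve_left h2
      exact ⟨mem_support_of_mem_edge w1 h1 hxk1, mem_support_of_mem_edge w2 h2' hxk2⟩
    · have h1' : E k ∈ w2.edges := (hsub _ (hEmem _)).resolve_left h1
      have h2 : E (k + 1) ∈ w1.edges := by
        by_contra h
        apply hkg
        simp only [hg, if_neg h, if_neg h1]
      exact ⟨mem_support_of_mem_edge w1 h2 hxk2, mem_support_of_mem_edge w2 h1' hxk1⟩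
  obtain ⟨hk1, hk2⟩ := hcommon k hk
  obtain ⟨hm1, hm2⟩ := hcommon m hm
  have hkn : k < n := Finset.mem_range.mp (Finset.mem_filter.mp hk).1
  have hmn : m < n := Finset.mem_range.mp (Finset.mem_filter.mp hm).1
  have hne : w.getVert (k + 1) ≠ w.getVert (m + 1) := by
    rcases Nat.lt_or_ge k m with h | h
    · exact cycle_getVert_ne hw h (by omega)
    · exact (cycle_getVert_ne hw (by omega : m < k) (by omega)).symm
  have : 1 < ({v | v ∈ w1.support} ∩ {v | v ∈ w2.support}).ncard := by
    rw [Set.one_lt_ncard (Set.toFinite _)]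
    exact ⟨_, ⟨hk1, hk2⟩, _, ⟨hm1, hm2⟩, hne⟩
  omega

private lemma disjoint_of_ncard_le {V : Type} [Fintype V] {G : SimpleGraph V}
    {ua ub : V} (wa : G.Walk ua ua) (wb : G.Walk ub ub)
    (hv : ({v | v ∈ wa.support} ∩ {v | v ∈ wb.support}).ncard ≤ 1) :
    ∀ e ∈ wa.edges, e ∉ wb.edges := by
  intro e hea heb
  induction e with
  | _ x y =>
    have hxy : x ≠ y := G.ne_of_adj (wa.adj_of_mem_edges hea)
    have h1 : 1 < ({v | v ∈ wa.support} ∩ {v | v ∈ wb.support}).ncard := by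
      rw [Set.one_lt_ncard (Set.toFinite _)]
      exact ⟨x, ⟨wa.fst_mem_support_of_mem_edges hea, wb.fst_mem_support_of_mem_edges heb⟩,
        y, ⟨wa.snd_mem_support_of_mem_edges hea, wb.snd_mem_support_of_mem_edges heb⟩, hxy⟩
    omega

/-- Lemma 2.6: if `G` is `(3,2)`-critical with at least three odd cycles, then every two
distinct odd cycles intersect in more than one vertex. -/
theorem odd_cycles_intersect_in_more_than_one_vertex {V : Type} [Fintype V]
    (G : SimpleGraph V) (hcrit : IsKLCritical G 3 2)
    (hcyc : 3 ≤ {H : G.Subgraph | IsOddCycleSubgraph G H}.ncard)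
    (H₁ H₂ : G.Subgraph) (h₁ : IsOddCycleSubgraph G H₁) (h₂ : IsOddCycleSubgraph G H₂)
    (hne : H₁ ≠ H₂) :
    1 < (H₁.verts ∩ H₂.verts).ncard := by
  classical
  by_contra hle
  push_neg at hle
  obtain ⟨hESC, hχ, hes⟩ := hcrit
  obtain ⟨v1, w1, hc1, hodd1, hH1⟩ := h₁
  obtain ⟨v2, w2, hc2, hodd2, hH2⟩ := h₂
  have hV1 : H₁.verts = {v | v ∈ w1.support} := by rw [← hH1, Walk.verts_toSubgraph]
  have hV2 : H₂.verts = {v | v ∈ w2.support} := by rw [← hH2, Walk.verts_toSubgraph]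
  have hv : ({v | v ∈ w1.support} ∩ {v | v ∈ w2.support}).ncard ≤ 1 := by
    rw [← hV1, ← hV2]; exact hle
  have hv' : ({v | v ∈ w2.support} ∩ {v | v ∈ w1.support}).ncard ≤ 1 := by
    rwa [Set.inter_comm]
  have hdisj : ∀ e ∈ w1.edges, e ∉ w2.edges := disjoint_of_ncard_le w1 w2 hv
  have hcover : ∀ f ∈ G.edgeSet, f ∈ w1.edges ∨ f ∈ w2.edges :=
    key_lemma hESC hχ hes w1 w2 hodd1 hodd2 hdisj
  -- every odd cycle subgraph is H₁ or H₂
  have hCL : ∀ H : G.Subgraph, IsOddCycleSubgraph G H → H = H₁ ∨ H = H₂ := by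
    rintro H ⟨u, w, hc, hodd, rfl⟩
    have hsub : ∀ e ∈ w.edges, e ∈ w1.edges ∨ e ∈ w2.edges := fun e he =>
      hcover e (w.edges_subset_edgeSet he)
    rcases switch_lemma hv hc hsub with hall | hall
    · left
      have hVsub : ∀ v ∈ w.support, v ∈ w1.support := by
        intro v hvs
        obtain ⟨e, he, hve⟩ := mem_edge_of_mem_support w hc.not_nil hvs
        exact mem_support_of_mem_edge w1 (hall e he) hve
      have hss : {v | v ∈ w.support} ∩ {v | v ∈ w2.support} ⊆
          {v | v ∈ w1.support} ∩ {v | v ∈ w2.support} := fun x hx => ⟨hVsub x hx.1, hx.2⟩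
      have hvw : ({v | v ∈ w.support} ∩ {v | v ∈ w2.support}).ncard ≤ 1 :=
        le_trans (Set.ncard_le_ncard hss (Set.toFinite _)) hv
      have hdisj' : ∀ e ∈ w.edges, e ∉ w2.edges := disjoint_of_ncard_le w w2 hvw
      have hcover' : ∀ f ∈ G.edgeSet, f ∈ w.edges ∨ f ∈ w2.edges :=
        key_lemma hESC hχ hes w w2 hodd hodd2 hdisj'
      have hE1w : ∀ e ∈ w1.edges, e ∈ w.edges := fun e he =>
        (hcover' e (w1.edges_subset_edgeSet he)).resolve_right (fun h2 => hdisj e he h2)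
      have hAdj : ∀ a b : V, w.toSubgraph.Adj a b ↔ w1.toSubgraph.Adj a b := by
        intro a b
        rw [← SimpleGraph.Subgraph.mem_edgeSet, ← SimpleGraph.Subgraph.mem_edgeSet,
          Walk.mem_edges_toSubgraph, Walk.mem_edges_toSubgraph]
        exact ⟨fun h => hall _ h, fun h => hE1w _ h⟩
      rw [← hH1]
      refine SimpleGraph.Subgraph.ext ?_ ?_
      · rw [Walk.verts_toSubgraph, Walk.verts_toSubgraph]
        ext v
        constructor
        · exact fun hvs => hVsub v hvs
        · intro hvs
          obtain ⟨e, he, hve⟩ := mem_edge_of_mem_support w1 hc1.not_nil hvs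
          exact mem_support_of_mem_edge w (hE1w e he) hve
      · funext a b
        exact propext (hAdj a b)
    · right
      have hVsub : ∀ v ∈ w.support, v ∈ w2.support := by
        intro v hvs
        obtain ⟨e, he, hve⟩ := mem_edge_of_mem_support w hc.not_nil hvs
        exact mem_support_of_mem_edge w2 (hall e he) hve
      have hss : {v | v ∈ w1.support} ∩ {v | v ∈ w.support} ⊆
          {v | v ∈ w1.support} ∩ {v | v ∈ w2.support} := fun x hx => ⟨hx.1, hVsub x hx.2⟩
      have hvw : ({v | v ∈ w1.support} ∩ {v | v ∈ w.support}).ncard ≤ 1 :=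
        le_trans (Set.ncard_le_ncard hss (Set.toFinite _)) hv
      have hdisj' : ∀ e ∈ w1.edges, e ∉ w.edges := disjoint_of_ncard_le w1 w hvw
      have hcover' : ∀ f ∈ G.edgeSet, f ∈ w1.edges ∨ f ∈ w.edges :=
        key_lemma hESC hχ hes w1 w hodd1 hodd hdisj'
      have hE2w : ∀ e ∈ w2.edges, e ∈ w.edges := fun e he =>
        (hcover' e (w2.edges_subset_edgeSet he)).resolve_left
          (fun h1 => hdisj e h1 he)
      have hAdj : ∀ a b : V, w.toSubgraph.Adj a b ↔ w2.toSubgraph.Adj a b := by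
        intro a b
        rw [← SimpleGraph.Subgraph.mem_edgeSet, ← SimpleGraph.Subgraph.mem_edgeSet,
          Walk.mem_edges_toSubgraph, Walk.mem_edges_toSubgraph]
        exact ⟨fun h => hall _ h, fun h => hE2w _ h⟩
      rw [← hH2]
      refine SimpleGraph.Subgraph.ext ?_ ?_
      · rw [Walk.verts_toSubgraph, Walk.verts_toSubgraph]
        ext v
        constructor
        · exact fun hvs => hVsub v hvs
        · intro hvs
          obtain ⟨e, he, hve⟩ := mem_edge_of_mem_support w2 hc2.not_nil hvs
          exact mem_support_of_mem_edge w (hE2w e he) hve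
      · funext a b
        exact propext (hAdj a b)
  have hsubset : {H : G.Subgraph | IsOddCycleSubgraph G H} ⊆ {H₁, H₂} := by
    intro H hH
    rcases hCL H hH with rfl | rfl
    · exact Set.mem_insert _ _
    · exact Set.mem_insert_of_mem _ rfl
  have hcard := Set.ncard_le_ncard hsubset ((Set.finite_singleton H₂).insert H₁)
  have hpair : ({H₁, H₂} : Set G.Subgraph).ncard ≤ 2 := by
    refine le_trans (Set.ncard_insert_le _ _) ?_
    rw [Set.ncard_singleton]
  omega
end
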